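/- arXiv:2501.00991 — 2 statements merged into one kernel-verified Lean document; each statement's English description precedes it below -/
import Mathlib

section
/- Every graph of twin-width at most 1 is perfect, i.e., every induced subgraph has chromatic number equal to its clique number. -/
open Finset

/-- Two vertex sets are *homogeneous* in `G` if they are complete or anticomplete
to each other. A red edge of a trigraph in a contraction sequence joins two parts
that are not homogeneous. -/
def Homogeneous {V : Type*} (G : SimpleGraph V) (X Y : Finset V) : Prop :=
  (∀ x ∈ X, ∀ y ∈ Y, G.Adj x y) ∨ (∀ x ∈ X, ∀ y ∈ Y, ¬ G.Adj x y)

/-- A contraction sequence of a graph on vertex type `V` (with `n = Fintype.card V`),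
encoded by the partitions of `V` into the parts of the trigraphs `G_n, …, G_1`:
`parts i` is the partition whose blocks are the parts of the vertices of `G_i`.
`G_n` is the discrete partition, and `G_i` is obtained from `G_{i+1}` by merging two parts. -/
structure ContractionSeq (V : Type*) [Fintype V] [DecidableEq V] where
  parts : ℕ → Finpartition (Finset.univ : Finset V)
  parts_card : ∀ i, 1 ≤ i → i ≤ Fintype.card V → (parts i).parts.card = i
  parts_top : ∀ X ∈ (parts (Fintype.card V)).parts, X.card = 1
  merge : ∀ i, 1 ≤ i → i < Fintype.card V →
    ∃ X ∈ (parts (i + 1)).parts, ∃ Y ∈ (parts (i + 1)).parts, X ≠ Y ∧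
      (parts i).parts = insert (X ∪ Y) ((((parts (i + 1)).parts).erase X).erase Y)

/-- Every part of the partition `P` (i.e. every vertex of the corresponding trigraph)
is incident to at most `d` red edges. -/
def RedDegLE {V : Type*} [Fintype V] [DecidableEq V] (G : SimpleGraph V)
    (P : Finpartition (Finset.univ : Finset V)) (d : ℕ) : Prop :=
  ∀ X ∈ P.parts, {Y | Y ∈ P.parts ∧ Y ≠ X ∧ ¬ Homogeneous G X Y}.ncard ≤ d

/-- `C` is a `d`-sequence of `G`: every trigraph in it has maximum red degree at most `d`. -/
def IsDSeq {V : Type*} [Fintype V] [DecidableEq V] (G : SimpleGraph V)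
    (C : ContractionSeq V) (d : ℕ) : Prop :=
  ∀ i, 1 ≤ i → i ≤ Fintype.card V → RedDegLE G (C.parts i) d

/-- The twin-width of `G`: the least `d` such that `G` has a `d`-sequence. -/
noncomputable def tww {V : Type*} [Fintype V] [DecidableEq V] (G : SimpleGraph V) : ℕ :=
  sInf {d | ∃ C : ContractionSeq V, IsDSeq G C d}

/-- `(σ, τ)` is a realiser of `G` as a permutation graph. -/
def IsRealiser {V : Type*} [Fintype V] (G : SimpleGraph V)
    (σ τ : V ≃ Fin (Fintype.card V)) : Prop :=
  ∀ u v : V, G.Adj u v ↔ ((σ u < σ v ∧ τ v < τ u) ∨ (σ v < σ u ∧ τ u < τ v))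

/-- `G` is a permutation graph. -/
def IsPermutationGraph {V : Type*} [Fintype V] (G : SimpleGraph V) : Prop :=
  ∃ σ τ : V ≃ Fin (Fintype.card V), IsRealiser G σ τ

/-- `I` is an interval for the ordering `σ` (its image is a set of consecutive integers,
equivalently it is convex). -/
def IsIntervalFor {V : Type*} {n : ℕ} (σ : V ≃ Fin n) (I : Set V) : Prop :=
  ∀ u v w : V, u ∈ I → w ∈ I → σ u ≤ σ v → σ v ≤ σ w → v ∈ I

/-- `M` is a module of `G`. -/
def IsModule {V : Type*} (G : SimpleGraph V) (M : Set V) : Prop :=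
  ∀ v ∉ M, (∀ m ∈ M, G.Adj v m) ∨ (∀ m ∈ M, ¬ G.Adj v m)

/-- `G` is prime (w.r.t. modules): all its modules are trivial. -/
def IsPrimeGraph {V : Type*} (G : SimpleGraph V) : Prop :=
  ∀ M : Set V, IsModule G M → M.Subsingleton ∨ M = Set.univ

/-- `M` is a strong module of `G`. -/
def IsStrongModule {V : Type*} (G : SimpleGraph V) (M : Set V) : Prop :=
  IsModule G M ∧ ∀ M' : Set V, IsModule G M' → M ⊆ M' ∨ M' ⊆ M ∨ M ∩ M' = ∅

/-- The underlying graph of the trigraph corresponding to the partition `P` in a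
contraction sequence of `G`: parts `X ≠ Y` are adjacent (by a black or red edge)
iff some edge of `G` joins them. -/
def QuotientGraph {V : Type*} [Fintype V] [DecidableEq V] (G : SimpleGraph V)
    (P : Finpartition (Finset.univ : Finset V)) :
    SimpleGraph {X : Finset V // X ∈ P.parts} where
  Adj X Y := X ≠ Y ∧ ∃ x ∈ X.1, ∃ y ∈ Y.1, G.Adj x y
  symm := by
    constructor
    rintro X Y ⟨hne, x, hx, y, hy, hadj⟩
    exact ⟨hne.symm, y, hy, x, hx, hadj.symm⟩
  loopless := by constructor; rintro X ⟨hne, -⟩; exact hne rfl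

/-- `w` lies strictly between `a` and `b` in the ordering `σ`. -/
def StrictlyBetween {V : Type*} {n : ℕ} (σ : V ≃ Fin n) (a w b : V) : Prop :=
  (σ a < σ w ∧ σ w < σ b) ∨ (σ b < σ w ∧ σ w < σ a)

/-- `G` is distance-hereditary. -/
def DistanceHereditary {V : Type*} (G : SimpleGraph V) : Prop :=
  ∀ S : Set V, (G.induce S).Connected →
    ∀ u v : S, (G.induce S).dist u v = G.dist ↑u ↑v

/-- There is a path from `a` to `b` in `G` containing no vertex equal or adjacent to `c`. -/
def AvoidingPath {V : Type*} (G : SimpleGraph V) (a b c : V) : Prop :=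
  ∃ w : G.Walk a b, w.IsPath ∧ ∀ v ∈ w.support, v ≠ c ∧ ¬ G.Adj c v

/-- `x, y, z` form an asteroidal triple of `G`. -/
def AsteroidalTriple {V : Type*} (G : SimpleGraph V) (x y z : V) : Prop :=
  x ≠ y ∧ y ≠ z ∧ x ≠ z ∧
    AvoidingPath G x y z ∧ AvoidingPath G y z x ∧ AvoidingPath G x z y

/-- `G` is asteroidal triple-free. -/
def ATFree {V : Type*} (G : SimpleGraph V) : Prop :=
  ∀ x y z : V, ¬ AsteroidalTriple G x y z

/-- `G` is a cograph: it has no induced path on four vertices. -/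
def IsCograph {V : Type*} (G : SimpleGraph V) : Prop :=
  IsEmpty (SimpleGraph.pathGraph 4 ↪g G)


section DefaultSeq
variable {V : Type*} [Fintype V] [DecidableEq V]

private lemma card_fin_le (n m : ℕ) (h : m < n) :
    ((univ : Finset (Fin n)).filter (fun j : Fin n => (j : ℕ) ≤ m)).card = m + 1 := by
  rw [← Finset.card_range (m+1)]
  apply Finset.card_nbij (i := fun j : Fin n => (j : ℕ))
  · intro a ha; simp only [mem_coe, mem_filter, mem_univ, true_and] at ha
    simp [Nat.lt_succ_iff, ha]
  · intro a _ b _ hab; exact Fin.val_injective hab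
  · intro k hk
    simp only [Finset.coe_range, Set.mem_Iio] at hk
    refine ⟨(⟨k, lt_of_lt_of_le hk h⟩ : Fin n), ?_, rfl⟩
    simp [Nat.lt_succ_iff.mp hk]

private def blob (e : Fin (Fintype.card V) ≃ V) (m : ℕ) : Finset V :=
  univ.filter (fun v => ((e.symm v : ℕ)) ≤ m)
private def singles (e : Fin (Fintype.card V) ≃ V) (m : ℕ) : Finset (Finset V) :=
  (univ.filter (fun v => m < ((e.symm v : ℕ)))).image (fun v => {v})

private lemma mem_blob {e : Fin (Fintype.card V) ≃ V} {m : ℕ} {v : V} :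
    v ∈ blob e m ↔ (e.symm v : ℕ) ≤ m := by simp [blob]

private lemma mem_singles {e : Fin (Fintype.card V) ≃ V} {m : ℕ} {P : Finset V} :
    P ∈ singles e m ↔ ∃ v, m < (e.symm v : ℕ) ∧ P = {v} := by
  simp only [singles, mem_image, mem_filter, mem_univ, true_and]
  constructor
  · rintro ⟨v, hv, rfl⟩; exact ⟨v, hv, rfl⟩
  · rintro ⟨v, hv, rfl⟩; exact ⟨v, hv, rfl⟩

private lemma blob_not_mem_singles (e : Fin (Fintype.card V) ≃ V)
    (hn : 0 < Fintype.card V) (m m' : ℕ) : blob e m ∉ singles e m' := by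
  intro h
  rw [mem_singles] at h
  obtain ⟨v, hv, hb⟩ := h
  have h0 : e ⟨0, hn⟩ ∈ blob e m := by simp [mem_blob]
  rw [hb, mem_singleton] at h0
  rw [← h0] at hv
  simp at hv

/-- The trigraph partition whose big part is `{v : idx v ≤ m}`. -/
private def blobPart (e : Fin (Fintype.card V) ≃ V) (hn : 0 < Fintype.card V) (m : ℕ) :
    Finpartition (Finset.univ : Finset V) where
  parts := insert (blob e m) (singles e m)
  supIndep := by
    rw [Finset.supIndep_iff_pairwiseDisjoint]
    have key : ∀ R S : Finset V, R ∈ singles e m → (S = blob e m ∨ S ∈ singles e m) →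
        R ≠ S → Disjoint R S := by
      rintro R S hR hS hne
      rw [mem_singles] at hR
      obtain ⟨v, hv, rfl⟩ := hR
      rw [Finset.disjoint_singleton_left]
      rcases hS with rfl | hS
      · rw [mem_blob]; omega
      · rw [mem_singles] at hS
        obtain ⟨w, hw, rfl⟩ := hS
        rw [mem_singleton]
        intro h; exact hne (by rw [h])
    intro P hP Q hQ hne
    simp only [Finset.coe_insert, Set.mem_insert_iff, mem_coe] at hP hQ
    simp only [Function.onFun, id_eq]
    rcases hP with hP | hP
    · rcases hQ with hQ | hQ
      · exact absurd (hP.trans hQ.symm) hne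
      · rw [hP]; rw [hP] at hne
        exact (key Q _ hQ (Or.inl rfl) (fun h => hne h.symm)).symm
    · exact key P Q hP hQ hne
  sup_parts := by
    rw [Finset.eq_univ_iff_forall]
    intro v
    rw [Finset.mem_sup]
    rcases le_or_gt ((e.symm v : ℕ)) m with h | h
    · exact ⟨blob e m, mem_insert_self _ _, by rwa [id_eq, mem_blob]⟩
    · exact ⟨{v}, mem_insert_of_mem (by rw [mem_singles]; exact ⟨v, h, rfl⟩),
        by rw [id_eq]; exact mem_singleton_self v⟩
  bot_notMem := by
    simp only [Finset.bot_eq_empty, mem_insert]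
    push_neg
    constructor
    · intro h
      have h0 : e ⟨0, hn⟩ ∈ blob e m := by simp [mem_blob]
      rw [← h] at h0; simp at h0
    · intro h
      rw [mem_singles] at h
      obtain ⟨v, _, hv⟩ := h
      exact absurd hv.symm (Finset.singleton_ne_empty v)

private lemma blobPart_parts (e : Fin (Fintype.card V) ≃ V) (hn : 0 < Fintype.card V) (m : ℕ) :
    (blobPart e hn m).parts = insert (blob e m) (singles e m) := rfl

private lemma blobPart_parts_card (e : Fin (Fintype.card V) ≃ V) (hn : 0 < Fintype.card V)
    (m : ℕ) (hm : m < Fintype.card V) :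
    ((blobPart e hn m).parts).card = Fintype.card V - m := by
  rw [blobPart_parts, Finset.card_insert_of_notMem (blob_not_mem_singles e hn m m)]
  have himg : (singles e m).card
      = ((univ : Finset V).filter (fun v => m < ((e.symm v : ℕ)))).card := by
    apply Finset.card_image_of_injective
    intro a b hab
    rwa [Finset.singleton_inj] at hab
  have hsplit := Finset.card_filter_add_card_filter_not
    (s := (univ : Finset V)) (p := fun v => m < ((e.symm v : ℕ)))
  have hble : ((univ : Finset V).filter (fun v => ¬ m < ((e.symm v : ℕ)))).card = m + 1 := by
    have : ((univ : Finset V).filter (fun v => ¬ m < ((e.symm v : ℕ))))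
        = Finset.image e ((univ : Finset (Fin (Fintype.card V))).filter
            (fun j => (j : ℕ) ≤ m)) := by
      ext v
      simp only [mem_filter, mem_univ, true_and, mem_image, not_lt]
      constructor
      · intro h; exact ⟨e.symm v, by simpa using h, by simp⟩
      · rintro ⟨j, hj, rfl⟩; simpa using hj
    rw [this, Finset.card_image_of_injective _ e.injective, card_fin_le _ _ hm]
  rw [Finset.card_univ] at hsplit
  omega

end DefaultSeq

section CS
variable {V : Type*} [Fintype V] [DecidableEq V]

private lemma singles_erase (e : Fin (Fintype.card V) ≃ V) (m : ℕ) (hm : m + 1 < Fintype.card V) :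
    (singles e m).erase {e ⟨m + 1, hm⟩} = singles e (m + 1) := by
  ext P
  simp only [Finset.mem_erase, mem_singles]
  constructor
  · rintro ⟨hne, v, hv, rfl⟩
    refine ⟨v, ?_, rfl⟩
    rcases Nat.lt_or_ge (m + 1) ((e.symm v : ℕ)) with h | h
    · exact h
    · exfalso
      have : (e.symm v : ℕ) = m + 1 := by omega
      have hv2 : v = e ⟨m + 1, hm⟩ := by
        have : e.symm v = ⟨m + 1, hm⟩ := Fin.ext this
        rw [← this]; simp
      exact hne (by rw [hv2])
  · rintro ⟨v, hv, rfl⟩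
    have hv' : m < (e.symm v : ℕ) := by omega
    refine ⟨?_, v, hv', rfl⟩
    intro h
    rw [Finset.singleton_inj] at h
    subst h
    simp at hv

private lemma blob_union (e : Fin (Fintype.card V) ≃ V) (m : ℕ) (hm : m + 1 < Fintype.card V) :
    blob e m ∪ {e ⟨m + 1, hm⟩} = blob e (m + 1) := by
  ext v
  simp only [Finset.mem_union, mem_blob, mem_singleton]
  constructor
  · rintro (h | rfl)
    · omega
    · simp
  · intro h
    rcases Nat.lt_or_ge ((e.symm v : ℕ)) (m + 1) with h2 | h2
    · exact Or.inl (by omega)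
    · right
      have : e.symm v = ⟨m + 1, hm⟩ := Fin.ext (by simp; omega)
      rw [← this]; simp

/-- The default contraction sequence: contract vertices one by one in a fixed order. -/
noncomputable def defaultSeq (e : Fin (Fintype.card V) ≃ V) (hn : 0 < Fintype.card V) :
    ContractionSeq V where
  parts i := blobPart e hn (Fintype.card V - i)
  parts_card i h1 h2 := by
    rw [blobPart_parts_card e hn _ (by omega)]
    omega
  parts_top := by
    intro X hX
    rw [blobPart_parts] at hX
    rcases Finset.mem_insert.mp hX with rfl | hX
    · have : blob e (Fintype.card V - Fintype.card V) = {e ⟨0, hn⟩} := by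
        ext v
        simp only [mem_blob, mem_singleton]
        rw [Nat.sub_self]
        constructor
        · intro h
          have : e.symm v = ⟨0, hn⟩ := Fin.ext (by simp; omega)
          rw [← this]; simp
        · rintro rfl; simp
      rw [this]; rfl
    · rw [mem_singles] at hX
      obtain ⟨v, _, rfl⟩ := hX
      simp
  merge := by
    intro i h1 h2
    have hm : (Fintype.card V - (i+1)) + 1 < Fintype.card V := by omega
    refine ⟨blob e (Fintype.card V - (i+1)), ?_, {e ⟨(Fintype.card V - (i+1)) + 1, hm⟩}, ?_, ?_, ?_⟩
    · rw [blobPart_parts]; exact mem_insert_self _ _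
    · rw [blobPart_parts]
      apply mem_insert_of_mem
      rw [mem_singles]
      refine ⟨_, ?_, rfl⟩
      simp
    · intro hXY
      have hmem : e ⟨(Fintype.card V - (i+1)) + 1, hm⟩ ∈ blob e (Fintype.card V - (i+1)) := by
        rw [hXY]; exact mem_singleton_self _
      rw [mem_blob] at hmem
      simp at hmem
    · rw [blobPart_parts, blobPart_parts,
        Finset.erase_insert (blob_not_mem_singles e hn _ _),
        singles_erase e _ (by omega), blob_union e _ hm]
      have hni : Fintype.card V - i = (Fintype.card V - (i+1)) + 1 := by omega
      rw [hni]

end CS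

section NT
variable {V : Type*} [Fintype V] [DecidableEq V] (G : SimpleGraph V)

lemma defaultSeq_isDSeq (e : Fin (Fintype.card V) ≃ V) (hn : 0 < Fintype.card V) :
    IsDSeq G (defaultSeq e hn) (Fintype.card V) := by
  intro i h1 h2 X hX
  have hsub : {Y | Y ∈ (((defaultSeq e hn).parts i)).parts ∧ Y ≠ X ∧ ¬ Homogeneous G X Y}
      ⊆ ↑(((defaultSeq e hn).parts i)).parts := fun Y hY => hY.1
  calc {Y | Y ∈ (((defaultSeq e hn).parts i)).parts ∧ Y ≠ X ∧ ¬ Homogeneous G X Y}.ncard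
      ≤ (↑(((defaultSeq e hn).parts i)).parts : Set (Finset V)).ncard :=
        Set.ncard_le_ncard hsub (Finset.finite_toSet _)
    _ = (((defaultSeq e hn).parts i)).parts.card := Set.ncard_coe_finset _
    _ = i := (defaultSeq e hn).parts_card i h1 h2
    _ ≤ Fintype.card V := h2

lemma exists_one_seq (h : tww G ≤ 1) (hn : 0 < Fintype.card V) :
    ∃ C : ContractionSeq V, IsDSeq G C 1 := by
  have hne : {d | ∃ C : ContractionSeq V, IsDSeq G C d}.Nonempty :=
    ⟨Fintype.card V, defaultSeq (Fintype.equivFin V).symm hn,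
      defaultSeq_isDSeq G (Fintype.equivFin V).symm hn⟩
  obtain ⟨C, hC⟩ := Nat.sInf_mem hne
  exact ⟨C, fun i h1 h2 X hX => le_trans (hC i h1 h2 X hX) h⟩

lemma near_twins {C : ContractionSeq V} (hC : IsDSeq G C 1) (S : Set V) (hS : 2 ≤ S.ncard) :
    ∃ u ∈ S, ∃ v ∈ S, u ≠ v ∧ ∀ z₁ ∈ S, ∀ z₂ ∈ S, z₁ ≠ u → z₁ ≠ v → z₂ ≠ u → z₂ ≠ v →
      ¬(G.Adj u z₁ ↔ G.Adj v z₁) → ¬(G.Adj u z₂ ↔ G.Adj v z₂) → z₁ = z₂ := by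
  classical
  set n := Fintype.card V with hndef
  set St := S.toFinite.toFinset with hStdef
  have hStcard : St.card = S.ncard := (Set.ncard_eq_toFinset_card S S.toFinite).symm
  have hmemSt : ∀ z, z ∈ St ↔ z ∈ S := fun z => S.toFinite.mem_toFinset
  have hn2 : 2 ≤ n := by
    have h1 : St.card ≤ Fintype.card V := Finset.card_le_univ St
    omega
  -- the predicate : some part contains two vertices of S
  set pred : ℕ → Prop := fun i => ∃ P ∈ (C.parts i).parts, 2 ≤ (P ∩ St).card with hpreddef
  set T : Finset ℕ := (Finset.range (n+1)).filter pred with hTdef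
  have h1T : 1 ∈ T := by
    rw [hTdef, Finset.mem_filter, Finset.mem_range]
    refine ⟨by omega, ?_⟩

    obtain ⟨P, hP⟩ := Finset.card_eq_one.mp (C.parts_card 1 le_rfl (by omega))
    have hPuniv : P = (univ : Finset V) := by
      have := (C.parts 1).sup_parts
      rw [hP, Finset.sup_singleton] at this
      exact this
    refine ⟨P, by rw [hP]; exact mem_singleton_self _, ?_⟩
    rw [hPuniv, Finset.univ_inter, hStcard]
    exact hS
  have hTne : T.Nonempty := ⟨1, h1T⟩
  set i₀ := T.max' hTne with hi₀def
  have hi₀T : i₀ ∈ T := T.max'_mem hTne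
  rw [hTdef, Finset.mem_filter, Finset.mem_range] at hi₀T
  obtain ⟨hi₀n, hpredi₀⟩ : i₀ < n + 1 ∧ pred i₀ := ⟨hi₀T.1, hi₀T.2⟩
  have hi₀1 : 1 ≤ i₀ := T.le_max' 1 h1T
  have hprednotn : ¬ pred n := by
    rintro ⟨P, hP, hcard⟩
    have h1 := C.parts_top P hP
    have : (P ∩ St).card ≤ 1 := le_trans (Finset.card_le_card (Finset.inter_subset_left)) h1.le
    omega
  have hi₀ltn : i₀ < n := by
    rcases Nat.lt_or_ge i₀ n with h | h
    · exact h
    · exfalso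
      have : i₀ = n := by omega
      rw [this] at hpredi₀
      exact hprednotn hpredi₀
  have hnotsucc : ¬ pred (i₀ + 1) := by
    intro hp
    have : i₀ + 1 ∈ T := by
      rw [hTdef, Finset.mem_filter, Finset.mem_range]
      exact ⟨by omega, hp⟩
    have := T.le_max' _ this
    omega
  obtain ⟨X, hX, Y, hY, hXY, hparts⟩ := C.merge i₀ hi₀1 hi₀ltn
  -- the part with two S-vertices must be X ∪ Y
  obtain ⟨P, hP, hPcard⟩ := hpredi₀
  have hPXY : P = X ∪ Y := by
    rw [hparts, Finset.mem_insert] at hP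
    rcases hP with rfl | hP
    · rfl
    · exfalso
      exact hnotsucc ⟨P, Finset.mem_of_mem_erase (Finset.mem_of_mem_erase hP), hPcard⟩
  have hX1 : (X ∩ St).card ≤ 1 := by
    by_contra hc
    exact hnotsucc ⟨X, hX, by omega⟩
  have hY1 : (Y ∩ St).card ≤ 1 := by
    by_contra hc
    exact hnotsucc ⟨Y, hY, by omega⟩
  rw [hPXY, Finset.union_inter_distrib_right] at hPcard
  have hcard_union := Finset.card_union_le (X ∩ St) (Y ∩ St)
  have hXe : (X ∩ St).card = 1 := by omega
  have hYe : (Y ∩ St).card = 1 := by omega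
  obtain ⟨u, hu⟩ := Finset.card_eq_one.mp hXe
  obtain ⟨v, hv⟩ := Finset.card_eq_one.mp hYe
  have huX : u ∈ X ∧ u ∈ St := by
    have : u ∈ X ∩ St := by rw [hu]; exact mem_singleton_self _
    exact ⟨Finset.mem_of_mem_inter_left this, Finset.mem_of_mem_inter_right this⟩
  have hvY : v ∈ Y ∧ v ∈ St := by
    have : v ∈ Y ∩ St := by rw [hv]; exact mem_singleton_self _
    exact ⟨Finset.mem_of_mem_inter_left this, Finset.mem_of_mem_inter_right this⟩
  have hdisjXY : Disjoint X Y := by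
    have hpd := Finset.supIndep_iff_pairwiseDisjoint.mp (C.parts (i₀+1)).supIndep
    exact hpd hX hY hXY
  have huv : u ≠ v := by
    intro h
    rw [h] at huX
    exact (Finset.disjoint_left.mp hdisjXY huX.1) hvY.1
  refine ⟨u, (hmemSt u).mp huX.2, v, (hmemSt v).mp hvY.2, huv, ?_⟩
  -- uniqueness of splitters
  have hXYmem : X ∪ Y ∈ (C.parts i₀).parts := by
    rw [hparts]; exact mem_insert_self _ _
  have hred := hC i₀ hi₀1 (le_of_lt hi₀ltn) (X ∪ Y) hXYmem
  have hZfind : ∀ z ∈ S, z ≠ u → z ≠ v → ¬(G.Adj u z ↔ G.Adj v z) →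
      ∃ Z ∈ (C.parts i₀).parts, z ∈ Z ∧ Z ≠ X ∪ Y ∧ ¬ Homogeneous G (X ∪ Y) Z ∧
        Z ∈ (C.parts (i₀+1)).parts := by
    intro z hzS hzu hzv hsplit
    have hzuniv : z ∈ (C.parts i₀).parts.sup id := by
      rw [(C.parts i₀).sup_parts]; exact mem_univ z
    rw [Finset.mem_sup] at hzuniv
    obtain ⟨Z, hZ, hzZ⟩ := hzuniv
    rw [id_eq] at hzZ
    have hZne : Z ≠ X ∪ Y := by
      rintro rfl
      have hzin : z ∈ (X ∩ St) ∪ (Y ∩ St) := by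
        rw [← Finset.union_inter_distrib_right]
        exact Finset.mem_inter.mpr ⟨hzZ, (hmemSt z).mpr hzS⟩
      rw [hu, hv] at hzin
      rcases Finset.mem_union.mp hzin with h | h
      · exact hzu (Finset.mem_singleton.mp h)
      · exact hzv (Finset.mem_singleton.mp h)
    have hZnh : ¬ Homogeneous G (X ∪ Y) Z := by
      rintro (hall | hnone)
      · exact hsplit (iff_of_true
          (hall u (Finset.mem_union_left _ huX.1) z hzZ)
          (hall v (Finset.mem_union_right _ hvY.1) z hzZ))
      · exact hsplit (iff_of_false
          (hnone u (Finset.mem_union_left _ huX.1) z hzZ)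
          (hnone v (Finset.mem_union_right _ hvY.1) z hzZ))
    have hZsucc : Z ∈ (C.parts (i₀+1)).parts := by
      have := hZ
      rw [hparts, Finset.mem_insert] at this
      rcases this with h | h
      · exact absurd h hZne
      · exact Finset.mem_of_mem_erase (Finset.mem_of_mem_erase h)
    exact ⟨Z, hZ, hzZ, hZne, hZnh, hZsucc⟩
  intro z₁ hz₁ z₂ hz₂ h1u h1v h2u h2v hs₁ hs₂
  obtain ⟨Z₁, hZ₁, hz₁Z, hZ₁ne, hZ₁nh, hZ₁succ⟩ := hZfind z₁ hz₁ h1u h1v hs₁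
  obtain ⟨Z₂, hZ₂, hz₂Z, hZ₂ne, hZ₂nh, hZ₂succ⟩ := hZfind z₂ hz₂ h2u h2v hs₂
  have hZeq : Z₁ = Z₂ := by
    by_contra hne
    have hfin : {Y' | Y' ∈ (C.parts i₀).parts ∧ Y' ≠ X ∪ Y ∧ ¬ Homogeneous G (X ∪ Y) Y'}.Finite :=
      Set.Finite.subset (Finset.finite_toSet _) (fun _ h => h.1)
    have : 1 < {Y' | Y' ∈ (C.parts i₀).parts ∧ Y' ≠ X ∪ Y ∧
        ¬ Homogeneous G (X ∪ Y) Y'}.ncard :=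
      (Set.one_lt_ncard_iff hfin).mpr ⟨Z₁, Z₂, ⟨hZ₁, hZ₁ne, hZ₁nh⟩, ⟨hZ₂, hZ₂ne, hZ₂nh⟩, hne⟩
    omega
  subst hZeq
  -- Z₁ is a part of the finer partition, so it contains at most one vertex of S
  have hZcard : (Z₁ ∩ St).card ≤ 1 := by
    by_contra hc
    exact hnotsucc ⟨Z₁, hZ₁succ, by omega⟩
  by_contra hne
  have : 1 < (Z₁ ∩ St).card := Finset.one_lt_card.mpr
    ⟨z₁, Finset.mem_inter.mpr ⟨hz₁Z, (hmemSt z₁).mpr hz₁⟩,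
     z₂, Finset.mem_inter.mpr ⟨hz₂Z, (hmemSt z₂).mpr hz₂⟩, hne⟩
  omega

end NT

section Perfect
variable {V : Type*} [Fintype V] [DecidableEq V] (G : SimpleGraph V)

open SimpleGraph

lemma induce_adj' {S : Set V} {x y : ↥S} : (G.induce S).Adj x y ↔ G.Adj ↑x ↑y := by
  simp [SimpleGraph.induce]

/-- Lift a plain clique contained in `S` to a clique of the induced subgraph. -/
lemma clique_up {S : Set V} {m : ℕ} {t : Finset V} (hts : ↑t ⊆ S) (h : G.IsNClique m t) :
    ∃ s : Finset ↥S, (G.induce S).IsNClique m s := by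
  classical
  refine ⟨t.subtype (· ∈ S), ⟨?_, ?_⟩⟩
  · intro x hx y hy hxy
    rw [Finset.mem_coe, Finset.mem_subtype] at hx hy
    rw [induce_adj']
    exact h.1 hx hy (fun hc => hxy (Subtype.ext hc))
  · rw [Finset.card_subtype, Finset.filter_true_of_mem (fun x hx => hts hx)]
    exact h.2

/-- Push a clique of the induced subgraph down to a plain clique contained in `S`. -/
lemma clique_down {S : Set V} {m : ℕ} {s : Finset ↥S} (h : (G.induce S).IsNClique m s) :
    ∃ t : Finset V, ↑t ⊆ S ∧ G.IsNClique m t ∧ ∀ x : ↥S, x ∈ s ↔ ↑x ∈ t := by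
  classical
  refine ⟨s.map ⟨Subtype.val, Subtype.val_injective⟩, ?_, ⟨?_, ?_⟩, ?_⟩
  · intro x hx
    rw [Finset.mem_coe, Finset.mem_map] at hx
    obtain ⟨y, _, rfl⟩ := hx
    exact y.2
  · intro x hx y hy hxy
    rw [Finset.mem_coe, Finset.mem_map] at hx hy
    obtain ⟨x', hx', rfl⟩ := hx
    obtain ⟨y', hy', rfl⟩ := hy
    have := h.1 hx' hy' (fun hc => hxy (by rw [hc]))
    rwa [induce_adj'] at this
  · rw [Finset.card_map]; exact h.2
  · intro x
    constructor
    · intro hx; exact Finset.mem_map_of_mem _ hx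
    · intro hx
      rw [Finset.mem_map] at hx
      obtain ⟨y, hy, hxy⟩ := hx
      have : y = x := Subtype.ext hxy
      rwa [← this]

lemma cliqueNum_le_of_subset {S T : Set V} (h : S ⊆ T) :
    (G.induce S).cliqueNum ≤ (G.induce T).cliqueNum := by
  classical
  haveI : Fintype ↥S := S.toFinite.fintype
  haveI : Fintype ↥T := T.toFinite.fintype
  obtain ⟨s, hs⟩ := SimpleGraph.exists_isNClique_cliqueNum (G := G.induce S)
  obtain ⟨t, hts, ht, -⟩ := clique_down G hs
  obtain ⟨s', hs'⟩ := clique_up G (hts.trans h) ht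
  have := SimpleGraph.IsClique.card_le_cliqueNum (tc := hs'.1)
  rwa [hs'.2] at this

lemma cliqueNum_lift {S : Set V} {t : Finset V} (hts : ↑t ⊆ S) (h : G.IsClique ↑t) :
    t.card ≤ (G.induce S).cliqueNum := by
  classical
  haveI : Fintype ↥S := S.toFinite.fintype
  obtain ⟨s, hs⟩ := clique_up G hts ⟨h, rfl⟩
  have := SimpleGraph.IsClique.card_le_cliqueNum (tc := hs.1)
  rwa [hs.2] at this

end Perfect

section Main
variable {V : Type*} [Fintype V] [DecidableEq V] (G : SimpleGraph V)

open SimpleGraph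

lemma main_colorable {C : ContractionSeq V} (hC : IsDSeq G C 1) :
    ∀ (k : ℕ) (S : Set V), S.ncard ≤ k → (G.induce S).Colorable ((G.induce S).cliqueNum) := by
  classical
  intro k
  induction k with
  | zero =>
    intro S hcard
    have hS : S = ∅ := (Set.ncard_eq_zero S.toFinite).mp (Nat.le_zero.mp hcard)
    subst hS
    haveI : IsEmpty ↥(∅ : Set V) := by simp
    exact SimpleGraph.Colorable.of_isEmpty _
  | succ k ih =>
    intro S hcard
    rcases Nat.lt_or_ge S.ncard (k+1) with hlt | hge
    · exact ih S (by omega)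
    have hSk : S.ncard = k + 1 := le_antisymm hcard hge
    rcases Nat.lt_or_ge S.ncard 2 with hS1 | hS2
    · -- singleton case
      have h1 : S.ncard = 1 := by omega
      obtain ⟨w, hw⟩ := (Set.ncard_eq_one).mp h1
      have hwS : w ∈ S := by rw [hw]; exact Set.mem_singleton w
      have hclique : G.IsClique ↑({w} : Finset V) := by
        rw [Finset.coe_singleton]
        exact Set.pairwise_singleton w G.Adj
      have h1le : 1 ≤ (G.induce S).cliqueNum := by
        have hsub : ↑({w} : Finset V) ⊆ S := by
          rw [Finset.coe_singleton, Set.singleton_subset_iff]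
          exact hwS
        have := cliqueNum_lift G hsub hclique
        simpa using this
      apply SimpleGraph.Colorable.mono h1le
      refine ⟨SimpleGraph.Coloring.mk (fun _ => 0) ?_⟩
      intro x y hxy
      exfalso
      rw [induce_adj'] at hxy
      have hsub : S.Subsingleton := by rw [hw]; exact Set.subsingleton_singleton
      have hval : (x : V) = (y : V) := hsub x.2 y.2
      rw [hval] at hxy
      exact G.loopless.irrefl _ hxy
    · -- main case: use near twins
      obtain ⟨u, huS, v, hvS, huv, huniq⟩ := near_twins G hC S hS2
      have hdom : (∀ z ∈ S, z ≠ u → z ≠ v → G.Adj u z → G.Adj v z) ∨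
          (∀ z ∈ S, z ≠ u → z ≠ v → G.Adj v z → G.Adj u z) := by
        by_contra hcon
        push_neg at hcon
        obtain ⟨⟨z₁, hz₁S, h1u, h1v, ha1, hn1⟩, ⟨z₂, hz₂S, h2u, h2v, ha2, hn2⟩⟩ := hcon
        have heq := huniq z₁ hz₁S z₂ hz₂S h1u h1v h2u h2v
          (fun hiff => hn1 (hiff.mp ha1)) (fun hiff => hn2 (hiff.mpr ha2))
        rw [heq] at ha1
        exact hn2 ha1
      obtain ⟨a, b, haS, hbS, hab, hdom'⟩ : ∃ a b, a ∈ S ∧ b ∈ S ∧ a ≠ b ∧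
          (∀ z ∈ S, z ≠ a → z ≠ b → G.Adj a z → G.Adj b z) := by
        rcases hdom with h | h
        · exact ⟨u, v, huS, hvS, huv, h⟩
        · exact ⟨v, u, hvS, huS, huv.symm, fun z hz hzv hzu => h z hz hzu hzv⟩
      clear hdom huniq huv huS hvS
      have hbS' : b ∈ S \ {a} := by
        refine ⟨hbS, ?_⟩
        intro hb
        rw [Set.mem_singleton_iff] at hb
        exact hab hb.symm
      have hS'card : (S \ {a}).ncard ≤ k := by
        rw [Set.ncard_diff_singleton_of_mem haS]
        omega
      by_cases hadj : G.Adj a b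
      · -- adjacent dominated pair : star-cutset style argument
        obtain ⟨c₂⟩ := ih (S \ {a}) hS'card
        set ω := (G.induce S).cliqueNum with hωdef
        set ω₂ := (G.induce (S \ {a})).cliqueNum with hω₂def
        set B : Set V := {x | ∃ hx : x ∈ S \ {a}, c₂ ⟨x, hx⟩ = c₂ ⟨b, hbS'⟩} with hBdef
        have hbB : b ∈ B := ⟨hbS', rfl⟩
        have hBsub : B ⊆ S \ {a} := fun x hx => hx.1
        have hBindep : ∀ x ∈ B, ∀ y ∈ B, ¬ G.Adj x y := by
          rintro x ⟨hx, hcx⟩ y ⟨hy, hcy⟩ hxy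
          have : (G.induce (S \ {a})).Adj ⟨x, hx⟩ ⟨y, hy⟩ := (induce_adj' G).mpr hxy
          exact c₂.valid this (hcx.trans hcy.symm)
        -- Claim 1 : every maximum clique of S meets B
        have claim1 : ∀ t : Finset V, ↑t ⊆ S → G.IsNClique ω t → ∃ x ∈ t, x ∈ B := by
          intro t hts ht
          by_cases hbt : b ∈ t
          · exact ⟨b, hbt, hbB⟩
          by_cases hat : a ∈ t
          · exfalso
            have hclique : G.IsClique ↑(insert b t) := by
              rw [Finset.coe_insert]
              apply Set.Pairwise.insert ht.1
              intro x hx hxb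
              have hadjbx : G.Adj b x := by
                rcases eq_or_ne x a with rfl | hxa
                · exact hadj.symm
                · have := ht.1 hat hx (Ne.symm hxa)
                  exact hdom' x (hts hx) hxa (Ne.symm hxb) this
              exact ⟨hadjbx, hadjbx.symm⟩
            have hcard : (insert b t).card = ω + 1 := by
              rw [Finset.card_insert_of_notMem hbt, ht.2]
            have hsub : ↑(insert b t) ⊆ S := by
              rw [Finset.coe_insert]
              exact Set.insert_subset hbS hts
            have := cliqueNum_lift G hsub hclique
            rw [hcard] at this
            omega
          · -- t avoids a and b
            have hts₂ : ↑t ⊆ S \ {a} := by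
              intro x hx
              refine ⟨hts hx, ?_⟩
              intro hxa
              rw [Set.mem_singleton_iff] at hxa
              subst hxa
              exact hat (Finset.mem_coe.mp hx)
            have hω2ω : ω₂ = ω := by
              apply le_antisymm (cliqueNum_le_of_subset G Set.diff_subset)
              have := cliqueNum_lift G hts₂ ht.1
              rw [ht.2] at this
              exact this
            -- the coloring c₂ restricted to t is injective, hence surjective
            classical
            set s : Finset ↥(S \ {a}) := t.subtype (· ∈ (S \ {a})) with hsdef
            have hmem_s : ∀ x : ↥(S \ {a}), x ∈ s ↔ ↑x ∈ t := by
              intro x; rw [hsdef, Finset.mem_subtype]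
            have hscard : s.card = ω := by
              rw [hsdef, Finset.card_subtype, Finset.filter_true_of_mem (fun x hx => hts₂ hx)]
              exact ht.2
            have hinj : Set.InjOn c₂ ↑s := by
              intro x hx y hy hcxy
              by_contra hne
              have hadjxy : (G.induce (S \ {a})).Adj x y := by
                rw [induce_adj']
                exact ht.1 ((hmem_s x).mp hx) ((hmem_s y).mp hy)
                  (fun hc => hne (Subtype.ext hc))
              exact c₂.valid hadjxy hcxy
            have himgcard : (s.image c₂).card = ω := by
              rw [Finset.card_image_of_injOn hinj, hscard]
            have himguniv : s.image c₂ = Finset.univ := by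
              apply Finset.eq_univ_of_card
              rw [himgcard, Fintype.card_fin, hω2ω]
            have hbmem : c₂ ⟨b, hbS'⟩ ∈ s.image c₂ := by
              rw [himguniv]; exact Finset.mem_univ _
            rw [Finset.mem_image] at hbmem
            obtain ⟨x, hxs, hxc⟩ := hbmem
            exact ⟨↑x, (hmem_s x).mp hxs, ⟨x.2, by rwa [Subtype.coe_eta]⟩⟩
        -- Claim 2 : the clique number of S \ B is smaller
        set S₃ := S \ B with hS₃def
        set ω₃ := (G.induce S₃).cliqueNum with hω₃def
        have hS₃sub : S₃ ⊆ S := Set.diff_subset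
        have hS₃card : S₃.ncard ≤ k := by
          have hss : S₃ ⊂ S := ⟨hS₃sub, fun hsub => (hsub hbS).2 hbB⟩
          have := Set.ncard_lt_ncard hss S.toFinite
          omega
        have hω₃lt : ω₃ < ω := by
          haveI : Fintype ↥S₃ := S₃.toFinite.fintype
          obtain ⟨s₃, hs₃⟩ := SimpleGraph.exists_isNClique_cliqueNum (G := G.induce S₃)
          obtain ⟨t₃, ht₃sub, ht₃, -⟩ := clique_down G hs₃
          have hle : ω₃ ≤ ω := cliqueNum_le_of_subset G hS₃sub
          rcases Nat.lt_or_ge ω₃ ω with h | h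
          · exact h
          · exfalso
            have hωeq : ω₃ = ω := le_antisymm hle h
            have ht₃' : G.IsNClique ω t₃ := by rwa [← hω₃def, hωeq] at ht₃
            obtain ⟨x, hxt, hxB⟩ := claim1 t₃ (ht₃sub.trans hS₃sub) ht₃'
            exact (ht₃sub hxt).2 hxB
        obtain ⟨c₃⟩ := ih S₃ hS₃card
        apply SimpleGraph.Colorable.mono (by omega : ω₃ + 1 ≤ ω)
        refine ⟨SimpleGraph.Coloring.mk
          (fun x => if hx : (x : V) ∈ B then Fin.last ω₃
            else (c₃ ⟨x, ⟨x.2, hx⟩⟩).castSucc) ?_⟩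
        intro x y hxy heq
        rw [induce_adj'] at hxy
        by_cases hxB : (x : V) ∈ B <;> by_cases hyB : (y : V) ∈ B
        · exact hBindep _ hxB _ hyB hxy
        · rw [dif_pos hxB, dif_neg hyB] at heq
          exact absurd heq.symm (Fin.castSucc_lt_last _).ne
        · rw [dif_neg hxB, dif_pos hyB] at heq
          exact absurd heq (Fin.castSucc_lt_last _).ne
        · rw [dif_neg hxB, dif_neg hyB] at heq
          have : (G.induce S₃).Adj ⟨x, ⟨x.2, hxB⟩⟩ ⟨y, ⟨y.2, hyB⟩⟩ := (induce_adj' G).mpr hxy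
          exact c₃.valid this (Fin.castSucc_injective _ heq)
      · -- non-adjacent dominated pair : reuse the colour of b for a
        obtain ⟨c'⟩ := ih (S \ {a}) hS'card
        apply SimpleGraph.Colorable.mono (cliqueNum_le_of_subset G (Set.diff_subset))
        refine ⟨SimpleGraph.Coloring.mk
          (fun x => if hx : (x : V) = a then c' ⟨b, hbS'⟩
            else c' ⟨x, ⟨x.2, hx⟩⟩) ?_⟩
        intro x y hxy heq
        rw [induce_adj'] at hxy
        by_cases hxa : (x : V) = a <;> by_cases hya : (y : V) = a
        · exact G.ne_of_adj hxy (by rw [hxa, hya])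
        · -- x = a
          rw [dif_pos hxa, dif_neg hya] at heq
          have hyb : (y : V) ≠ b := by
            intro hyb
            rw [hxa, hyb] at hxy
            exact hadj hxy
          have hadjby : G.Adj b ↑y := by
            apply hdom' ↑y y.2 hya hyb
            rwa [hxa] at hxy
          have : (G.induce (S \ {a})).Adj ⟨b, hbS'⟩ ⟨y, ⟨y.2, hya⟩⟩ :=
            (induce_adj' G).mpr hadjby
          exact c'.valid this heq
        · -- y = a
          rw [dif_neg hxa, dif_pos hya] at heq
          have hxb : (x : V) ≠ b := by
            intro hxb
            rw [hya, hxb] at hxy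
            exact hadj hxy.symm
          have hadjbx : G.Adj b ↑x := by
            apply hdom' ↑x x.2 hxa hxb
            rw [hya] at hxy
            exact hxy.symm
          have : (G.induce (S \ {a})).Adj ⟨x, ⟨x.2, hxa⟩⟩ ⟨b, hbS'⟩ :=
            (induce_adj' G).mpr hadjbx.symm
          exact c'.valid this heq
        · rw [dif_neg hxa, dif_neg hya] at heq
          have : (G.induce (S \ {a})).Adj ⟨x, ⟨x.2, hxa⟩⟩ ⟨y, ⟨y.2, hya⟩⟩ :=
            (induce_adj' G).mpr hxy
          exact c'.valid this heq

end Main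

/-- Every graph of twin-width at most 1 is perfect, i.e. every induced
subgraph has chromatic number equal to its clique number. -/
theorem stmt_1 {V : Type*} [Fintype V] [DecidableEq V] (G : SimpleGraph V)
    (h : tww G ≤ 1) :
    ∀ S : Set V, (G.induce S).chromaticNumber = ((G.induce S).cliqueNum : ℕ∞) := by
  intro S
  haveI : Fintype ↥S := S.toFinite.fintype
  rcases Nat.eq_zero_or_pos (Fintype.card V) with hV | hV
  · -- the empty graph
    haveI : IsEmpty V := Fintype.card_eq_zero_iff.mp hV
    haveI : IsEmpty ↥S := ⟨fun x => IsEmpty.elim ‹IsEmpty V› x.1⟩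
    rw [SimpleGraph.chromaticNumber_eq_zero_of_isEmpty]
    have hω : (G.induce S).cliqueNum = 0 := by
      obtain ⟨s, hs⟩ := SimpleGraph.exists_isNClique_cliqueNum (G := G.induce S)
      have hse : s = ∅ := Finset.eq_empty_of_forall_notMem (fun x _ => IsEmpty.elim ‹IsEmpty ↥S› x)
      rw [← hs.2, hse, Finset.card_empty]
    rw [hω, Nat.cast_zero]
  · obtain ⟨C, hC⟩ := exists_one_seq G h hV
    have hcol := main_colorable G hC S.ncard S le_rfl
    apply le_antisymm
    · exact hcol.chromaticNumber_le
    · by_contra hlt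
      rw [not_le] at hlt
      have hfree : (G.induce S).CliqueFree ((G.induce S).cliqueNum) :=
        SimpleGraph.cliqueFree_of_chromaticNumber_lt hlt
      obtain ⟨s, hs⟩ := SimpleGraph.exists_isNClique_cliqueNum (G := G.induce S)
      exact hfree s hs
end

section
/- Let G be a graph and let G_n, …, G_1 be a 1-contraction sequence of G. Then G is a permutation graph admitting a realiser (σ, τ) such that: (i) for every i and every vertex x of G_i, the part of x is an interval of (σ, τ); and (ii) for every red edge xy of G_i, the union of the parts of x and y is an interval for one of the two orderings σ, τ, and the part of x and the part of y are each intervals for the other ordering. -/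
open Finset

set_option linter.unusedSectionVars false
set_option linter.unusedVariables false

set_option linter.unusedSectionVars false

section OrderAux
variable {V : Type*} [Fintype V] [DecidableEq V]

/-- Convexity of a finset w.r.t. a position function. -/
def Contig (f : V → ℚ) (S : Finset V) : Prop :=
  ∀ u a b : V, a ∈ S → b ∈ S → f a ≤ f u → f u ≤ f b → u ∈ S

/-- Update positions: all of `Z` moves to `v`. -/
def Upd (h : V → ℚ) (Z : Finset V) (v : ℚ) : V → ℚ := fun u => if u ∈ Z then v else h u

lemma upd_mem {h : V → ℚ} {Z : Finset V} {v : ℚ} {u : V} (hu : u ∈ Z) : Upd h Z v u = v :=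
  if_pos hu

lemma upd_not_mem {h : V → ℚ} {Z : Finset V} {v : ℚ} {u : V} (hu : u ∉ Z) : Upd h Z v u = h u :=
  if_neg hu

/-- `v` sits just above `γ`: strictly above it, but below every value of a vertex
outside `p` that is above `γ`, and fresh. -/
def AnchAbove (h : V → ℚ) (p : Finset V) (γ v : ℚ) : Prop :=
  γ < v ∧ (∀ u, u ∉ p → γ < h u → v < h u) ∧ (∀ u, u ∉ p → h u ≠ v)

def AnchBelow (h : V → ℚ) (p : Finset V) (γ v : ℚ) : Prop :=
  v < γ ∧ (∀ u, u ∉ p → h u < γ → h u < v) ∧ (∀ u, u ∉ p → h u ≠ v)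

def Anch (h : V → ℚ) (p : Finset V) (γ v : ℚ) : Prop := AnchAbove h p γ v ∨ AnchBelow h p γ v

lemma exists_anchAbove (h : V → ℚ) (p : Finset V) (γ : ℚ) : ∃ v, AnchAbove h p γ v := by
  classical
  set T : Finset ℚ := (univ.filter (fun u => u ∉ p ∧ γ < h u)).image h with hT
  have hmemT : ∀ u : V, u ∉ p → γ < h u → h u ∈ T := fun u h1 h2 => by
    rw [hT]; simp only [mem_image, mem_filter, mem_univ, true_and]
    exact ⟨u, ⟨h1, h2⟩, rfl⟩
  by_cases hne : T.Nonempty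
  · have hγm : γ < T.min' hne := by
      obtain ⟨w, hw, he⟩ := mem_image.1 (T.min'_mem hne)
      rw [mem_filter] at hw
      rw [← he]; exact hw.2.2
    refine ⟨(γ + T.min' hne) / 2, by linarith, fun u hup hu => ?_, fun u hup he => ?_⟩
    · have h1 : T.min' hne ≤ h u := T.min'_le _ (hmemT u hup hu)
      linarith
    · by_cases hc : γ < h u
      · have h1 : T.min' hne ≤ h u := T.min'_le _ (hmemT u hup hc)
        rw [he] at h1; linarith
      · push_neg at hc
        have : γ < h u := by rw [he]; linarith
        linarith
  · refine ⟨γ + 1, by linarith, fun u hup hu => absurd ⟨_, hmemT u hup hu⟩ hne,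
      fun u hup he => absurd ⟨_, hmemT u hup (by rw [he]; linarith)⟩ hne⟩

lemma exists_anchBelow (h : V → ℚ) (p : Finset V) (γ : ℚ) : ∃ v, AnchBelow h p γ v := by
  obtain ⟨v, h1, h2, h3⟩ := exists_anchAbove (fun u => -h u) p (-γ)
  refine ⟨-v, by linarith, fun u hup hu => ?_, fun u hup he => ?_⟩
  · have := h2 u hup (by simpa using neg_lt_neg hu)
    simp only at this; linarith
  · exact h3 u hup (by simp [he])

lemma anch_fresh {h : V → ℚ} {p : Finset V} {γ v : ℚ} (a : Anch h p γ v) :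
    ∀ u, u ∉ p → h u ≠ v := by rcases a with ⟨-, -, hf⟩ | ⟨-, -, hf⟩ <;> exact hf

/-- Vertices outside `p` with value ≠ γ lie on the same side of `v` as of `γ`. -/
lemma anch_side {h : V → ℚ} {p : Finset V} {γ v : ℚ} (a : Anch h p γ v) :
    ∀ w, w ∉ p → h w ≠ γ → ((v < h w ↔ γ < h w) ∧ (h w < v ↔ h w < γ)) := by
  intro w hwp hwγ
  rcases a with ⟨h1, h2, h3⟩ | ⟨h1, h2, h3⟩
  · constructor
    · exact ⟨fun hv => by linarith, fun hγ => h2 w hwp hγ⟩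
    · constructor
      · intro hv
        rcases lt_trichotomy (h w) γ with h' | h' | h'
        · exact h'
        · exact absurd h' hwγ
        · exact absurd (h2 w hwp h') (by linarith)
      · intro hγ; linarith
  · constructor
    · constructor
      · intro hv
        rcases lt_trichotomy γ (h w) with h' | h' | h'
        · exact h'
        · exact absurd h'.symm hwγ
        · exact absurd (h2 w hwp h') (by linarith)
      · intro hγ; linarith
    · exact ⟨fun hv => by linarith, fun hγ => h2 w hwp hγ⟩

/-- Preservation of convexity, case where `S` is disjoint from `p`. -/
lemma contig_upd_disj {h : V → ℚ} {Z p S : Finset V} {v γ : ℚ} {z₀ : V}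
    (hZp : Z ⊆ p) (hS : Contig h S) (hdisj : ∀ u ∈ p, u ∉ S)
    (hz₀ : z₀ ∉ S) (hz₀γ : h z₀ = γ) (hγS : ∀ s ∈ S, h s ≠ γ)
    (anch : Anch h p γ v) :
    Contig (Upd h Z v) S := by
  intro u a b ha hb h1 h2
  have haZ : a ∉ Z := fun hc => hdisj a (hZp hc) ha
  have hbZ : b ∉ Z := fun hc => hdisj b (hZp hc) hb
  rw [upd_not_mem haZ] at h1
  rw [upd_not_mem hbZ] at h2
  by_cases huZ : u ∈ Z
  · exfalso
    rw [upd_mem huZ] at h1 h2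
    have hap : a ∉ p := fun hc => hdisj a hc ha
    have hbp : b ∉ p := fun hc => hdisj b hc hb
    rcases anch with ⟨hv1, hv2, -⟩ | ⟨hv1, hv2, -⟩
    · -- v just above γ
      rcases lt_trichotomy γ (h a) with h' | h' | h'
      · exact absurd (hv2 a hap h') (by linarith)
      · exact absurd h'.symm (hγS a ha)
      · -- h a < γ < v ≤ h b, so z₀ between a and b
        exact hz₀ (hS z₀ a b ha hb (by linarith) (by linarith))
    · rcases lt_trichotomy (h b) γ with h' | h' | h'
      · exact absurd (hv2 b hbp h') (by linarith)
      · exact absurd h' (hγS b hb)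
      · exact hz₀ (hS z₀ a b ha hb (by linarith) (by linarith))
  · rw [upd_not_mem huZ] at h1 h2
    exact hS u a b ha hb h1 h2

/-- Preservation of convexity, case where `p ⊆ S` and the anchor is in `S`. -/
lemma contig_upd_sub {h : V → ℚ} {Z p S : Finset V} {v γ : ℚ} {z₀ : V}
    (hZp : Z ⊆ p) (hpS : p ⊆ S) (hS : Contig h S)
    (hz₀ : z₀ ∈ S) (hz₀γ : h z₀ = γ) (hγS : ∀ u, u ∉ S → h u ≠ γ)
    (anch : Anch h p γ v) :
    Contig (Upd h Z v) S := by
  intro u a b ha hb h1 h2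
  by_cases huS : u ∈ S
  · exact huS
  have hup : u ∉ p := fun hc => huS (hpS hc)
  have huZ : u ∉ Z := fun hc => hup (hZp hc)
  rw [upd_not_mem huZ] at h1 h2
  have hfresh := anch_fresh anch u hup
  by_cases haZ : a ∈ Z
  · rw [upd_mem haZ] at h1
    by_cases hbZ : b ∈ Z
    · rw [upd_mem hbZ] at h2
      exact absurd (le_antisymm h2 h1) hfresh
    · rw [upd_not_mem hbZ] at h2
      rcases anch with ⟨hv1, hv2, -⟩ | ⟨hv1, hv2, -⟩
      · exact hS u z₀ b hz₀ hb (by rw [hz₀γ]; linarith) h2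
      · rcases lt_trichotomy (h u) γ with h' | h' | h'
        · exact absurd (hv2 u hup h') (by linarith)
        · exact absurd h' (hγS u huS)
        · exact hS u z₀ b hz₀ hb (by rw [hz₀γ]; linarith) h2
  · rw [upd_not_mem haZ] at h1
    by_cases hbZ : b ∈ Z
    · rw [upd_mem hbZ] at h2
      rcases anch with ⟨hv1, hv2, -⟩ | ⟨hv1, hv2, -⟩
      · rcases lt_trichotomy γ (h u) with h' | h' | h'
        · exact absurd (hv2 u hup h') (by linarith)
        · exact absurd h'.symm (hγS u huS)
        · exact hS u a z₀ ha hz₀ h1 (by rw [hz₀γ]; linarith)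
      · exact hS u a z₀ ha hz₀ h1 (by rw [hz₀γ]; linarith)
    · rw [upd_not_mem hbZ] at h2
      exact hS u a b ha hb h1 h2

end OrderAux

namespace TwwPerm
variable {V : Type*} [Fintype V] [DecidableEq V]

abbrev prt (C : ContractionSeq V) (i : ℕ) : Finset (Finset V) := (C.parts i).parts

/-- A red edge of the trigraph at level `i`. -/
def Red (G : SimpleGraph V) (C : ContractionSeq V) (i : ℕ) (S T : Finset V) : Prop :=
  S ∈ prt C i ∧ T ∈ prt C i ∧ S ≠ T ∧ ¬ Homogeneous G S T

def NoRed (G : SimpleGraph V) (C : ContractionSeq V) (i : ℕ) (S : Finset V) : Prop :=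
  ∀ T ∈ prt C i, T ≠ S → Homogeneous G S T

lemma homog_symm {G : SimpleGraph V} {X Y : Finset V} (h : Homogeneous G X Y) :
    Homogeneous G Y X := by
  rcases h with h | h
  · exact Or.inl fun y hy x hx => (h x hx y hy).symm
  · exact Or.inr fun y hy x hx => fun ha => h x hx y hy ha.symm

lemma homog_mono {G : SimpleGraph V} {X Y X' Y' : Finset V} (hX : X' ⊆ X) (hY : Y' ⊆ Y)
    (h : Homogeneous G X Y) : Homogeneous G X' Y' := by
  rcases h with h | h
  · exact Or.inl fun x hx y hy => h x (hX hx) y (hY hy)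
  · exact Or.inr fun x hx y hy => h x (hX hx) y (hY hy)

lemma red_symm {G : SimpleGraph V} {C : ContractionSeq V} {i : ℕ} {S T : Finset V}
    (h : Red G C i S T) : Red G C i T S :=
  ⟨h.2.1, h.1, h.2.2.1.symm, fun hc => h.2.2.2 (homog_symm hc)⟩

lemma part_nonempty {C : ContractionSeq V} {i : ℕ} {S : Finset V} (hS : S ∈ prt C i) :
    S.Nonempty := by
  rcases S.eq_empty_or_nonempty with h | h
  · rw [h] at hS
    exact absurd hS (by simpa using (C.parts i).not_bot_mem)
  · exact h

lemma part_eq_of_mem {C : ContractionSeq V} {i : ℕ} {S T : Finset V} (hS : S ∈ prt C i)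
    (hT : T ∈ prt C i) {a : V} (ha : a ∈ S) (hb : a ∈ T) : S = T :=
  (C.parts i).eq_of_mem_parts hS hT ha hb

lemma exists_part {C : ContractionSeq V} (i : ℕ) (a : V) : ∃ S ∈ prt C i, a ∈ S :=
  (C.parts i).exists_mem (mem_univ a)

/-- Parts of level `i+1` are contained in parts of level `i`. -/
lemma anc_succ {C : ContractionSeq V} {i : ℕ} (h1 : 1 ≤ i) (h2 : i < Fintype.card V)
    {U : Finset V} (hU : U ∈ prt C (i + 1)) : ∃ S ∈ prt C i, U ⊆ S := by
  obtain ⟨X, hX, Y, hY, hXY, hm⟩ := C.merge i h1 h2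
  by_cases hUX : U = X
  · exact ⟨X ∪ Y, by show _ ∈ (C.parts i).parts; rw [hm]; exact mem_insert_self _ _,
      hUX ▸ subset_union_left⟩
  by_cases hUY : U = Y
  · exact ⟨X ∪ Y, by show _ ∈ (C.parts i).parts; rw [hm]; exact mem_insert_self _ _,
      hUY ▸ subset_union_right⟩
  · refine ⟨U, ?_, subset_rfl⟩
    show _ ∈ (C.parts i).parts
    rw [hm]
    exact mem_insert_of_mem (mem_erase.2 ⟨hUY, mem_erase.2 ⟨hUX, hU⟩⟩)

/-- Every part of a later level is inside a part of an earlier level. -/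
lemma anc {C : ContractionSeq V} : ∀ {i j : ℕ}, 1 ≤ j → j ≤ i → i ≤ Fintype.card V →
    ∀ {U : Finset V}, U ∈ prt C i → ∃ S ∈ prt C j, U ⊆ S := by
  intro i
  induction i with
  | zero => intro j hj hji _ _ _; omega
  | succ k ih =>
    intro j hj hji hin U hU
    rcases Nat.lt_or_ge j (k + 1) with h | h
    · have hk1 : 1 ≤ k := by omega
      obtain ⟨S, hS, hUS⟩ := anc_succ hk1 (by omega) hU
      obtain ⟨S', hS', hSS'⟩ := ih hj (by omega) (by omega) hS
      exact ⟨S', hS', hUS.trans hSS'⟩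
    · have : j = k + 1 := by omega
      exact ⟨U, this ▸ hU, subset_rfl⟩

lemma subset_part_unique {C : ContractionSeq V} {j : ℕ} {U S S' : Finset V}
    (hU : U.Nonempty) (hS : S ∈ prt C j) (hS' : S' ∈ prt C j) (h1 : U ⊆ S) (h2 : U ⊆ S') :
    S = S' := by
  obtain ⟨a, ha⟩ := hU
  exact part_eq_of_mem hS hS' (h1 ha) (h2 ha)

/-- Red edges lift to ancestors. -/
lemma red_lift {G : SimpleGraph V} {C : ContractionSeq V} {i j : ℕ} {A B S T : Finset V}
    (hr : Red G C i A B) (hS : S ∈ prt C j) (hT : T ∈ prt C j)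
    (hAS : A ⊆ S) (hBT : B ⊆ T) (hST : S ≠ T) : Red G C j S T :=
  ⟨hS, hT, hST, fun hc => hr.2.2.2 (homog_mono hAS hBT hc)⟩

/-- Red degree at most one: partners are unique. -/
lemma red_unique {G : SimpleGraph V} {C : ContractionSeq V} (hC : IsDSeq G C 1) {j : ℕ}
    (h1 : 1 ≤ j) (h2 : j ≤ Fintype.card V) {S T T' : Finset V}
    (hr : Red G C j S T) (hr' : Red G C j S T') : T = T' := by
  have hdeg := hC j h1 h2 S hr.1
  have hfin : {Y | Y ∈ prt C j ∧ Y ≠ S ∧ ¬ Homogeneous G S Y}.Finite :=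
    Set.Finite.subset (prt C j).finite_toSet (fun Y hY => hY.1)
  rw [Set.ncard_le_one hfin] at hdeg
  exact hdeg T ⟨hr.2.1, hr.2.2.1.symm, hr.2.2.2⟩ T' ⟨hr'.2.1, hr'.2.2.1.symm, hr'.2.2.2⟩

end TwwPerm

namespace TwwPerm2
open TwwPerm
variable {V : Type*} [Fintype V] [DecidableEq V]

/-- The invariant carried along the contraction sequence. -/
structure Inv (G : SimpleGraph V) (C : ContractionSeq V) (i : ℕ) (f g : V → ℚ) : Prop where
  const : ∀ S ∈ prt C i, ∀ u ∈ S, ∀ v ∈ S, f u = f v ∧ g u = g v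
  sep : ∀ S ∈ prt C i, ∀ T ∈ prt C i, S ≠ T → ∀ u ∈ S, ∀ v ∈ T, f u ≠ f v ∧ g u ≠ g v
  crossC : ∀ S ∈ prt C i, ∀ T ∈ prt C i, S ≠ T → (∀ x ∈ S, ∀ y ∈ T, G.Adj x y) →
    ∀ u ∈ S, ∀ v ∈ T, (f u < f v ↔ g v < g u)
  crossA : ∀ S ∈ prt C i, ∀ T ∈ prt C i, S ≠ T → (∀ x ∈ S, ∀ y ∈ T, ¬ G.Adj x y) →
    ∀ u ∈ S, ∀ v ∈ T, (f u < f v ↔ g u < g v)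
  hist : ∀ j, 1 ≤ j → j ≤ i → ∀ S ∈ prt C j, NoRed G C j S → Contig f S ∧ Contig g S
  hpair : ∀ j, 1 ≤ j → j ≤ i → ∀ S T, Red G C j S T →
    (Contig f (S ∪ T) ∧ Contig g S ∧ Contig g T) ∨
    (Contig g (S ∪ T) ∧ Contig f S ∧ Contig f T)
  cur : ∀ p q, Red G C i p q →
    ∃ c o : V → ℚ, ((c = f ∧ o = g) ∨ (c = g ∧ o = f)) ∧ Contig c (p ∪ q) ∧
      ∀ j, 1 ≤ j → j ≤ i → ∀ S T, Red G C j S T → p ⊆ S → q ⊆ T →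
        Contig c (S ∪ T) ∧ Contig o S ∧ Contig o T
  uniq : ∀ j, 1 ≤ j → j ≤ i → ∀ S T, Red G C j S T →
    ∀ p q, Red G C i p q → p ⊆ S → q ⊆ T →
    ∀ p' q', Red G C i p' q' → p' ⊆ S → q' ⊆ T → p = p' ∧ q = q'

lemma inv_swap {G : SimpleGraph V} {C : ContractionSeq V} {i : ℕ} {f g : V → ℚ}
    (h : Inv G C i f g) : Inv G C i g f where
  const S hS u hu v hv := (h.const S hS u hu v hv).symm
  sep S hS T hT hne u hu v hv := (h.sep S hS T hT hne u hu v hv).symm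
  crossC S hS T hT hne hc u hu v hv := by
    have := h.crossC T hT S hS hne.symm (fun x hx y hy => (hc y hy x hx).symm) v hv u hu
    tauto
  crossA S hS T hT hne hc u hu v hv := by
    have := h.crossA S hS T hT hne hc u hu v hv
    tauto
  hist j h1 h2 S hS hnr := (h.hist j h1 h2 S hS hnr).symm
  hpair j h1 h2 S T hr := (h.hpair j h1 h2 S T hr).symm
  cur p q hr := by
    obtain ⟨c, o, hco, h1, h2⟩ := h.cur p q hr
    exact ⟨c, o, hco.symm.imp (fun ⟨a, b⟩ => ⟨a, b⟩) (fun ⟨a, b⟩ => ⟨a, b⟩), h1, h2⟩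
  uniq := h.uniq

lemma contig_neg {f : V → ℚ} {S : Finset V} (h : Contig f S) :
    Contig (fun u => -f u) S := fun u a b ha hb h1 h2 =>
  h u b a hb ha (by simpa using h2) (by simpa using h1)

lemma inv_neg {G : SimpleGraph V} {C : ContractionSeq V} {i : ℕ} {f g : V → ℚ}
    (h : Inv G C i f g) : Inv G C i (fun u => -f u) (fun u => -g u) where
  const S hS u hu v hv := by
    have := h.const S hS u hu v hv; exact ⟨by rw [this.1], by rw [this.2]⟩
  sep S hS T hT hne u hu v hv := by
    have := h.sep S hS T hT hne u hu v hv
    exact ⟨by simpa using this.1, by simpa using this.2⟩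
  crossC S hS T hT hne hc u hu v hv := by
    have := h.crossC T hT S hS hne.symm (fun x hx y hy => (hc y hy x hx).symm) v hv u hu
    simp only [neg_lt_neg_iff]
    tauto
  crossA S hS T hT hne hc u hu v hv := by
    have := h.crossA T hT S hS hne.symm (fun x hx y hy => fun ha => hc y hy x hx ha.symm) v hv u hu
    simp only [neg_lt_neg_iff]
    tauto
  hist j h1 h2 S hS hnr :=
    ⟨contig_neg (h.hist j h1 h2 S hS hnr).1, contig_neg (h.hist j h1 h2 S hS hnr).2⟩
  hpair j h1 h2 S T hr := by
    rcases h.hpair j h1 h2 S T hr with ⟨a, b, c⟩ | ⟨a, b, c⟩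
    · exact Or.inl ⟨contig_neg a, contig_neg b, contig_neg c⟩
    · exact Or.inr ⟨contig_neg a, contig_neg b, contig_neg c⟩
  cur p q hr := by
    obtain ⟨c, o, hco, h1, h2⟩ := h.cur p q hr
    refine ⟨fun u => -c u, fun u => -o u, ?_, contig_neg h1, fun j hj1 hj2 S T hST hpS hqT => ?_⟩
    · rcases hco with ⟨hc, ho⟩ | ⟨hc, ho⟩
      · exact Or.inl ⟨by rw [hc], by rw [ho]⟩
      · exact Or.inr ⟨by rw [hc], by rw [ho]⟩
    · obtain ⟨a, b, c'⟩ := h2 j hj1 hj2 S T hST hpS hqT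
      exact ⟨contig_neg a, contig_neg b, contig_neg c'⟩
  uniq := h.uniq

end TwwPerm2

namespace TwwPerm2
open TwwPerm
variable {V : Type*} [Fintype V] [DecidableEq V] {G : SimpleGraph V} {C : ContractionSeq V}

lemma cross_flipC {F Gg : V → ℚ} {S T : Finset V}
    (hsep : ∀ u ∈ S, ∀ v ∈ T, F u ≠ F v ∧ Gg u ≠ Gg v)
    (h : ∀ u ∈ S, ∀ v ∈ T, (F u < F v ↔ Gg v < Gg u)) :
    ∀ u ∈ T, ∀ v ∈ S, (F u < F v ↔ Gg v < Gg u) := by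
  intro u hu v hv
  have h1 := h v hv u hu
  have h2 := hsep v hv u hu
  constructor
  · intro hf
    rcases lt_trichotomy (Gg v) (Gg u) with h3 | h3 | h3
    · exact h3
    · exact absurd h3 h2.2
    · exact absurd (h1.2 h3) (by linarith)
  · intro hg
    rcases lt_trichotomy (F u) (F v) with h3 | h3 | h3
    · exact h3
    · exact absurd h3 (fun hc => h2.1 hc.symm)
    · exact absurd (h1.1 h3) (by linarith)

lemma cross_flipA {F Gg : V → ℚ} {S T : Finset V}
    (hsep : ∀ u ∈ S, ∀ v ∈ T, F u ≠ F v ∧ Gg u ≠ Gg v)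
    (h : ∀ u ∈ S, ∀ v ∈ T, (F u < F v ↔ Gg u < Gg v)) :
    ∀ u ∈ T, ∀ v ∈ S, (F u < F v ↔ Gg u < Gg v) := by
  intro u hu v hv
  have h1 := h v hv u hu
  have h2 := hsep v hv u hu
  constructor
  · intro hf
    rcases lt_trichotomy (Gg u) (Gg v) with h3 | h3 | h3
    · exact h3
    · exact absurd h3.symm h2.2
    · exact absurd (h1.2 h3) (by linarith)
  · intro hg
    rcases lt_trichotomy (F u) (F v) with h3 | h3 | h3
    · exact h3
    · exact absurd h3 (fun hc => h2.1 hc.symm)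
    · exact absurd (h1.1 h3) (by linarith)

/-- If `A` and `B` are homogeneous and a nonempty subset of `A` is complete to a
nonempty `B`, then `A` is complete to `B`. -/
lemma comp_resolve {A B A' : Finset V} (h : Homogeneous G A B) (hA : A' ⊆ A)
    (hA' : A'.Nonempty) (hB : B.Nonempty) (hc : ∀ x ∈ A', ∀ y ∈ B, G.Adj x y) :
    ∀ x ∈ A, ∀ y ∈ B, G.Adj x y := by
  rcases h with h | h
  · exact h
  · obtain ⟨a, ha⟩ := hA'
    obtain ⟨b, hb⟩ := hB
    exact absurd (hc a ha b hb) (h a (hA ha) b hb)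

lemma anti_resolve {A B A' : Finset V} (h : Homogeneous G A B) (hA : A' ⊆ A)
    (hA' : A'.Nonempty) (hB : B.Nonempty) (hc : ∀ x ∈ A', ∀ y ∈ B, ¬ G.Adj x y) :
    ∀ x ∈ A, ∀ y ∈ B, ¬ G.Adj x y := by
  rcases h with h | h
  · obtain ⟨a, ha⟩ := hA'
    obtain ⟨b, hb⟩ := hB
    exact absurd (h a (hA ha) b hb) (hc a ha b hb)
  · exact h

end TwwPerm2

namespace TwwPerm2
open TwwPerm
variable {V : Type*} [Fintype V] [DecidableEq V] {G : SimpleGraph V} {C : ContractionSeq V}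

set_option maxHeartbeats 1000000 in
/-- The refinement step in the case where the split part `p = K ∪ Z` has a red
neighbour `q` on its right in the order `f`; `K` stays put and `Z` moves to
`(vf, vg)`. -/
lemma build (hC : IsDSeq G C 1) {i : ℕ} (hi1 : 1 ≤ i) (hi2 : i < Fintype.card V)
    {f g : V → ℚ} (hI : Inv G C i f g)
    {K Z q : Finset V} (hK : K ∈ prt C (i + 1)) (hZ : Z ∈ prt C (i + 1)) (hKZ : K ≠ Z)
    (hm : prt C i = insert (K ∪ Z) (((prt C (i + 1)).erase K).erase Z))
    (hq : Red G C i (K ∪ Z) q)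
    {xK xq : V} (hxK : xK ∈ K) (hxq : xq ∈ q)
    (hadj : Contig f (K ∪ Z ∪ q))
    (hall : ∀ j, 1 ≤ j → j ≤ i → ∀ S T, Red G C j S T → K ∪ Z ⊆ S → q ⊆ T →
      Contig f (S ∪ T) ∧ Contig g S ∧ Contig g T)
    (hZq : Homogeneous G Z q)
    (hαβ : f xK < f xq)
    {vf vg : ℚ}
    (hvf : AnchBelow f (K ∪ Z) (f xK) vf ∨ AnchAbove f (K ∪ Z) (f xq) vf)
    (hvg : Anch g (K ∪ Z) (g xK) vg)
    (hKqC : (∀ x ∈ K, ∀ y ∈ q, G.Adj x y) → (f xK < f xq ↔ g xq < g xK))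
    (hKqA : (∀ x ∈ K, ∀ y ∈ q, ¬ G.Adj x y) → (f xK < f xq ↔ g xK < g xq))
    (hZqC : (∀ x ∈ Z, ∀ y ∈ q, G.Adj x y) → (vf < f xq ↔ g xq < vg))
    (hZqA : (∀ x ∈ Z, ∀ y ∈ q, ¬ G.Adj x y) → (vf < f xq ↔ vg < g xq))
    (hKZC : (∀ x ∈ K, ∀ y ∈ Z, G.Adj x y) → (f xK < vf ↔ vg < g xK))
    (hKZA : (∀ x ∈ K, ∀ y ∈ Z, ¬ G.Adj x y) → (f xK < vf ↔ g xK < vg)) :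
    Inv G C (i + 1) (Upd f Z vf) (Upd g Z vg) := by
  classical
  have hii : i ≤ Fintype.card V := hi2.le
  have hii' : i + 1 ≤ Fintype.card V := hi2
  have hpmem : K ∪ Z ∈ prt C i := by
    show _ ∈ (C.parts i).parts; rw [show (C.parts i).parts = prt C i from rfl, hm]
    exact mem_insert_self _ _
  have hqmem : q ∈ prt C i := hq.2.1
  have hpq : K ∪ Z ≠ q := hq.2.2.1
  have hdKZ : Disjoint K Z := (C.parts (i + 1)).disjoint (mem_coe.2 hK) (mem_coe.2 hZ) hKZ
  have hKne : K.Nonempty := part_nonempty hK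
  have hZne : Z.Nonempty := part_nonempty hZ
  have hqne : q.Nonempty := part_nonempty hqmem
  have hxKp : xK ∈ K ∪ Z := mem_union_left _ hxK
  have hqdisj : ∀ u ∈ q, u ∉ K ∪ Z := by
    intro u hu hup
    have hd : Disjoint (K ∪ Z) q := (C.parts i).disjoint (mem_coe.2 hpmem) (mem_coe.2 hqmem) hpq
    exact disjoint_left.1 hd hup hu
  have hZp : Z ⊆ K ∪ Z := subset_union_right
  have hKp : K ⊆ K ∪ Z := subset_union_left
  have constf : ∀ u ∈ K ∪ Z, f u = f xK := fun u hu => (hI.const _ hpmem u hu xK hxKp).1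
  have constg : ∀ u ∈ K ∪ Z, g u = g xK := fun u hu => (hI.const _ hpmem u hu xK hxKp).2
  have constfq : ∀ u ∈ q, f u = f xq := fun u hu => (hI.const _ hqmem u hu xq hxq).1
  have constgq : ∀ u ∈ q, g u = g xq := fun u hu => (hI.const _ hqmem u hu xq hxq).2
  have memval_f : ∀ u, f u = f xK → u ∈ K ∪ Z := by
    intro u he
    obtain ⟨U, hU, hu⟩ := exists_part (C := C) i u
    by_cases hUp : U = K ∪ Z
    · exact hUp ▸ hu
    · exact absurd he (hI.sep U hU _ hpmem hUp u hu xK hxKp).1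
  have memval_g : ∀ u, g u = g xK → u ∈ K ∪ Z := by
    intro u he
    obtain ⟨U, hU, hu⟩ := exists_part (C := C) i u
    by_cases hUp : U = K ∪ Z
    · exact hUp ▸ hu
    · exact absurd he (hI.sep U hU _ hpmem hUp u hu xK hxKp).2
  have memval_fq : ∀ u, f u = f xq → u ∈ q := by
    intro u he
    obtain ⟨U, hU, hu⟩ := exists_part (C := C) i u
    by_cases hUp : U = q
    · exact hUp ▸ hu
    · exact absurd he (hI.sep U hU _ hqmem hUp u hu xq hxq).1
  have hfreshf : ∀ u, u ∉ K ∪ Z → f u ≠ vf := by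
    rcases hvf with hb | ha
    · exact hb.2.2
    · exact ha.2.2
  have hfreshg : ∀ u, u ∉ K ∪ Z → g u ≠ vg := anch_fresh hvg
  have hvfα : vf ≠ f xK := by
    rcases hvf with hb | ha
    · exact ne_of_lt hb.1
    · exact ne_of_gt (lt_trans hαβ ha.1)
  have hvfβ : vf ≠ f xq := by
    rcases hvf with hb | ha
    · exact ne_of_lt (lt_trans hb.1 hαβ)
    · exact ne_of_gt ha.1
  have hvgα : vg ≠ g xK := by
    rcases hvg with ha | hb
    · exact ne_of_gt ha.1
    · exact ne_of_lt hb.1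
  have hanchf : Anch f (K ∪ Z) (f xK) vf ∨ Anch f (K ∪ Z) (f xq) vf := by
    rcases hvf with hb | ha
    · exact Or.inl (Or.inr hb)
    · exact Or.inr (Or.inl ha)
  -- q is also a part at level i+1
  have hqE : q ∈ prt C (i + 1) ∧ q ≠ K ∧ q ≠ Z := by
    have h1 : q ∈ insert (K ∪ Z) (((prt C (i + 1)).erase K).erase Z) := by
      rw [← hm]; exact hqmem
    rcases mem_insert.1 h1 with h2 | h2
    · exact absurd h2.symm hpq
    · have h3 := mem_erase.1 h2
      have h4 := mem_erase.1 h3.2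
      exact ⟨h4.2, h4.1, h3.1⟩
  -- classification of the parts at level i+1
  have hnewmem : ∀ U ∈ prt C (i + 1), U = K ∨ U = Z ∨
      (U ∈ prt C i ∧ U ≠ K ∪ Z ∧ ∀ u ∈ U, u ∉ K ∪ Z) := by
    intro U hU
    by_cases h1 : U = K
    · exact Or.inl h1
    by_cases h2 : U = Z
    · exact Or.inr (Or.inl h2)
    refine Or.inr (Or.inr ?_)
    have hUold : U ∈ prt C i := by
      show _ ∈ (C.parts i).parts; rw [show (C.parts i).parts = prt C i from rfl, hm]
      exact mem_insert_of_mem (mem_erase.2 ⟨h2, mem_erase.2 ⟨h1, hU⟩⟩)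
    have hUp : U ≠ K ∪ Z := by
      intro hc
      have hKU : K = U := part_eq_of_mem hK hU hxK (by rw [hc]; exact mem_union_left _ hxK)
      obtain ⟨z, hz⟩ := hZne
      have hzK : z ∈ K := by rw [hKU, hc]; exact mem_union_right _ hz
      exact disjoint_left.1 hdKZ hzK hz
    refine ⟨hUold, hUp, fun u hu hup => ?_⟩
    have hd : Disjoint U (K ∪ Z) :=
      (C.parts i).disjoint (mem_coe.2 hUold) (mem_coe.2 hpmem) hUp
    exact disjoint_left.1 hd hu hup
  have mem_new_of_old : ∀ U ∈ prt C i, U ≠ K ∪ Z → U ∈ prt C (i + 1) ∧ U ≠ K ∧ U ≠ Z := by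
    intro U hU hne
    have h1 : U ∈ insert (K ∪ Z) (((prt C (i + 1)).erase K).erase Z) := by rw [← hm]; exact hU
    rcases mem_insert.1 h1 with h2 | h2
    · exact absurd h2 hne
    · have h3 := mem_erase.1 h2
      have h4 := mem_erase.1 h3.2
      exact ⟨h4.2, h4.1, h3.1⟩
  -- parts at level i other than p and q are homogeneous to p
  have htransH : ∀ U ∈ prt C i, U ≠ K ∪ Z → U ≠ q → Homogeneous G (K ∪ Z) U := by
    intro U hU h1 h2
    by_contra h3
    exact h2 (red_unique hC hi1 hii ⟨hpmem, hU, fun hc => h1 hc.symm, h3⟩ hq)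
  -- sides of the moved value relative to outside vertices
  have sidef : ∀ w, w ∉ K ∪ Z → w ∉ q →
      ((vf < f w ↔ f xK < f w) ∧ (f w < vf ↔ f w < f xK)) := by
    intro w hwp hwq
    rcases hvf with hb | ha
    · exact anch_side (Or.inr hb) w hwp (fun hc => hwp (memval_f w hc))
    · have hw1 : f w ≠ f xK := fun hc => hwp (memval_f w hc)
      have hw2 : f w ≠ f xq := fun hc => hwq (memval_fq w hc)
      have hout : f w < f xK ∨ f xq < f w := by
        by_contra hcon
        push_neg at hcon
        have hmem : w ∈ K ∪ Z ∪ q :=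
          hadj w xK xq (mem_union_left _ hxKp) (mem_union_right _ hxq) hcon.1 hcon.2
        rcases mem_union.1 hmem with h | h
        · exact hwp h
        · exact hwq h
      obtain ⟨h1, h2, h3⟩ := ha
      rcases hout with ho | ho
      · constructor
        · constructor <;> intro h4 <;> linarith
        · constructor <;> intro h4 <;> linarith
      · have h5 := h2 w hwp ho
        constructor
        · constructor <;> intro h4 <;> linarith
        · constructor <;> intro h4 <;> linarith
  have sideg : ∀ w, w ∉ K ∪ Z →
      ((vg < g w ↔ g xK < g w) ∧ (g w < vg ↔ g w < g xK)) := fun w hwp =>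
    anch_side hvg w hwp (fun hc => hwp (memval_g w hc))
  -- position of an earlier part relative to p and q
  have dichP : ∀ j, 1 ≤ j → j ≤ i → ∀ S ∈ prt C j, K ∪ Z ⊆ S ∨ ∀ u ∈ K ∪ Z, u ∉ S := by
    intro j hj1 hj2 S hS
    obtain ⟨S', hS', hps⟩ := anc hj1 hj2 hii hpmem
    by_cases he : S = S'
    · exact Or.inl (he ▸ hps)
    · refine Or.inr fun u hu hus => ?_
      have hd : Disjoint S S' := (C.parts j).disjoint (mem_coe.2 hS) (mem_coe.2 hS') he
      exact disjoint_left.1 hd hus (hps hu)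
  have dichQ : ∀ j, 1 ≤ j → j ≤ i → ∀ S ∈ prt C j, q ⊆ S ∨ ∀ u ∈ q, u ∉ S := by
    intro j hj1 hj2 S hS
    obtain ⟨S', hS', hps⟩ := anc hj1 hj2 hii hqmem
    by_cases he : S = S'
    · exact Or.inl (he ▸ hps)
    · refine Or.inr fun u hu hus => ?_
      have hd : Disjoint S S' := (C.parts j).disjoint (mem_coe.2 hS) (mem_coe.2 hS') he
      exact disjoint_left.1 hd hus (hps hu)
  have loc : ∀ A B : Finset V, Red G C i A B → ∀ j, 1 ≤ j → j ≤ i → ∀ S T : Finset V,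
      Red G C j S T → A ⊆ S → (B ⊆ S ∨ B ⊆ T) := by
    intro A B hAB j hj1 hj2 S T hST hAS
    obtain ⟨W, hW, hBW⟩ := anc hj1 hj2 hii hAB.2.1
    by_cases hWS : W = S
    · exact Or.inl (hWS ▸ hBW)
    by_cases hWT : W = T
    · exact Or.inr (hWT ▸ hBW)
    · exfalso
      have hSW : S ≠ W := fun hc => hWS hc.symm
      have hlift : Red G C j S W := red_lift hAB hST.1 hW hAS hBW hSW
      exact hWT (red_unique hC hj1 (le_trans hj2 hii) hST hlift).symm
  -- preservation of convexity
  have PresF : ∀ S : Finset V, Contig f S →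
      ((K ∪ Z ⊆ S ∧ q ⊆ S) ∨ ((∀ u ∈ K ∪ Z, u ∉ S) ∧ (∀ u ∈ q, u ∉ S))) →
      Contig (Upd f Z vf) S := by
    intro S hS hcase
    rcases hcase with ⟨h1, h2⟩ | ⟨h1, h2⟩
    · rcases hanchf with ha | ha
      · exact contig_upd_sub hZp h1 hS (h1 hxKp) rfl
          (fun u hu hc => hu (h1 (memval_f u hc))) ha
      · exact contig_upd_sub hZp h1 hS (h2 hxq) rfl
          (fun u hu hc => hu (h2 (memval_fq u hc))) ha
    · rcases hanchf with ha | ha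
      · exact contig_upd_disj hZp hS (fun u hu hus => h1 u hu hus) (h1 xK hxKp) rfl
          (fun s hs hc => h1 s (memval_f s hc) hs) ha
      · exact contig_upd_disj hZp hS (fun u hu hus => h1 u hu hus) (h2 xq hxq) rfl
          (fun s hs hc => h2 s (memval_fq s hc) hs) ha
  have PresG : ∀ S : Finset V, Contig g S →
      (K ∪ Z ⊆ S ∨ ∀ u ∈ K ∪ Z, u ∉ S) → Contig (Upd g Z vg) S := by
    intro S hS hcase
    rcases hcase with h1 | h1
    · exact contig_upd_sub hZp h1 hS (h1 hxKp) rfl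
        (fun u hu hc => hu (h1 (memval_g u hc))) hvg
    · exact contig_upd_disj hZp hS (fun u hu hus => h1 u hu hus) (h1 xK hxKp) rfl
        (fun s hs hc => h1 s (memval_g s hc) hs) hvg
  -- value computations for the new position functions
  have vK : ∀ u ∈ K, Upd f Z vf u = f u := fun u hu => upd_not_mem (disjoint_left.1 hdKZ hu)
  have wK : ∀ u ∈ K, Upd g Z vg u = g u := fun u hu => upd_not_mem (disjoint_left.1 hdKZ hu)
  have vKv : ∀ u ∈ K, Upd f Z vf u = f xK := fun u hu => (vK u hu).trans (constf u (hKp hu))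
  have wKv : ∀ u ∈ K, Upd g Z vg u = g xK := fun u hu => (wK u hu).trans (constg u (hKp hu))
  have vZv : ∀ u ∈ Z, Upd f Z vf u = vf := fun u hu => upd_mem hu
  have wZv : ∀ u ∈ Z, Upd g Z vg u = vg := fun u hu => upd_mem hu
  have vO : ∀ u, u ∉ K ∪ Z → Upd f Z vf u = f u :=
    fun u hu => upd_not_mem (fun hc => hu (mem_union_right _ hc))
  have wO : ∀ u, u ∉ K ∪ Z → Upd g Z vg u = g u :=
    fun u hu => upd_not_mem (fun hc => hu (mem_union_right _ hc))
  have vQv : ∀ u ∈ q, Upd f Z vf u = f xq :=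
    fun u hu => (vO u (hqdisj u hu)).trans (constfq u hu)
  have wQv : ∀ u ∈ q, Upd g Z vg u = g xq :=
    fun u hu => (wO u (hqdisj u hu)).trans (constgq u hu)
  -- the new constancy and separation
  have hconst' : ∀ S ∈ prt C (i + 1), ∀ u ∈ S, ∀ v ∈ S,
      Upd f Z vf u = Upd f Z vf v ∧ Upd g Z vg u = Upd g Z vg v := by
    intro S hS u hu v hv
    rcases hnewmem S hS with h | h | ⟨hSo, hSp, hSd⟩
    · rw [h] at hu hv
      rw [vKv u hu, vKv v hv, wKv u hu, wKv v hv]; exact ⟨rfl, rfl⟩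
    · rw [h] at hu hv
      rw [vZv u hu, vZv v hv, wZv u hu, wZv v hv]; exact ⟨rfl, rfl⟩
    · rw [vO u (hSd u hu), vO v (hSd v hv), wO u (hSd u hu), wO v (hSd v hv)]
      exact hI.const S hSo u hu v hv
  have hsep' : ∀ S ∈ prt C (i + 1), ∀ T ∈ prt C (i + 1), S ≠ T → ∀ u ∈ S, ∀ v ∈ T,
      Upd f Z vf u ≠ Upd f Z vf v ∧ Upd g Z vg u ≠ Upd g Z vg v := by
    have base : ∀ S ∈ prt C (i + 1), ∀ T ∈ prt C (i + 1), S ≠ T → ∀ u ∈ S, ∀ v ∈ T,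
        Upd f Z vf u ≠ Upd f Z vf v ∧ Upd g Z vg u ≠ Upd g Z vg v → True := fun _ _ _ _ _ _ _ _ _ _ => trivial
    intro S hS T hT hne u hu v hv
    rcases hnewmem S hS with h1 | h1 | ⟨hSo, hSp, hSd⟩ <;>
      rcases hnewmem T hT with h2 | h2 | ⟨hTo, hTp, hTd⟩
    · exact absurd (h1.trans h2.symm) hne
    · rw [h1] at hu; rw [h2] at hv
      rw [vKv u hu, vZv v hv, wKv u hu, wZv v hv]
      exact ⟨fun hc => hvfα hc.symm, fun hc => hvgα hc.symm⟩
    · rw [h1] at hu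
      rw [vKv u hu, vO v (hTd v hv), wKv u hu, wO v (hTd v hv)]
      exact hI.sep (K ∪ Z) hpmem T hTo (fun hc => hTp hc.symm) xK hxKp v hv
    · rw [h1] at hu; rw [h2] at hv
      rw [vZv u hu, vKv v hv, wZv u hu, wKv v hv]
      exact ⟨hvfα, hvgα⟩
    · exact absurd (h1.trans h2.symm) hne
    · rw [h1] at hu
      rw [vZv u hu, vO v (hTd v hv), wZv u hu, wO v (hTd v hv)]
      exact ⟨fun hc => hfreshf v (hTd v hv) hc.symm, fun hc => hfreshg v (hTd v hv) hc.symm⟩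
    · rw [h2] at hv
      rw [vO u (hSd u hu), vKv v hv, wO u (hSd u hu), wKv v hv]
      exact hI.sep S hSo (K ∪ Z) hpmem hSp u hu xK hxKp
    · rw [h2] at hv
      rw [vO u (hSd u hu), vZv v hv, wO u (hSd u hu), wZv v hv]
      exact ⟨hfreshf u (hSd u hu), hfreshg u (hSd u hu)⟩
    · rw [vO u (hSd u hu), vO v (hTd v hv), wO u (hSd u hu), wO v (hTd v hv)]
      exact hI.sep S hSo T hTo hne u hu v hv
  -- every part of level i+1 is convex for the new functions
  have partContig : ∀ (h : V → ℚ),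
      (∀ S ∈ prt C (i + 1), ∀ u ∈ S, ∀ v ∈ S, h u = h v) →
      (∀ S ∈ prt C (i + 1), ∀ T ∈ prt C (i + 1), S ≠ T → ∀ u ∈ S, ∀ v ∈ T, h u ≠ h v) →
      ∀ S ∈ prt C (i + 1), Contig h S := by
    intro h hco hse S hS u a b ha hb h1 h2
    obtain ⟨U, hU, hu⟩ := exists_part (C := C) (i + 1) u
    by_cases hUS : U = S
    · exact hUS ▸ hu
    · exfalso
      have he : h a = h b := hco S hS a ha b hb
      have : h u = h a := le_antisymm (he ▸ h2) h1
      exact hse U hU S hS hUS u hu a ha this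
  have partF : ∀ S ∈ prt C (i + 1), Contig (Upd f Z vf) S :=
    partContig _ (fun S hS u hu v hv => (hconst' S hS u hu v hv).1)
      (fun S hS T hT hne u hu v hv => (hsep' S hS T hT hne u hu v hv).1)
  have partG : ∀ S ∈ prt C (i + 1), Contig (Upd g Z vg) S :=
    partContig _ (fun S hS u hu v hv => (hconst' S hS u hu v hv).2)
      (fun S hS T hT hne u hu v hv => (hsep' S hS T hT hne u hu v hv).2)
  -- the split part remains convex in g
  have contigP_g : Contig (Upd g Z vg) (K ∪ Z) := by
    intro u a b ha hb h1 h2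
    by_cases hup : u ∈ K ∪ Z
    · exact hup
    exfalso
    rw [wO u hup] at h1 h2
    have hune : g u ≠ g xK := fun hc => hup (memval_g u hc)
    have hunv : g u ≠ vg := hfreshg u hup
    have hs := anch_side hvg u hup hune
    have hva : ∀ w ∈ K ∪ Z, Upd g Z vg w = g xK ∨ Upd g Z vg w = vg := by
      intro w hw
      rcases mem_union.1 hw with hw' | hw'
      · exact Or.inl (wKv w hw')
      · exact Or.inr (wZv w hw')
    rcases hva a ha with hva' | hva' <;> rcases hva b hb with hvb' | hvb' <;>
      rw [hva'] at h1 <;> rw [hvb'] at h2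
    · exact hune (le_antisymm h2 h1)
    · have h3 : g xK < g u := lt_of_le_of_ne h1 (fun hc => hune hc.symm)
      have h4 := hs.1.2 h3
      linarith
    · have h3 : g u < g xK := lt_of_le_of_ne h2 hune
      have h4 := hs.2.2 h3
      linarith
    · exact hunv (le_antisymm h2 h1)
  -- K together with q remains convex in f
  have contigKq_f : Contig (Upd f Z vf) (K ∪ q) := by
    intro u a b ha hb h1 h2
    by_cases huk : u ∈ K ∪ q
    · exact huk
    exfalso
    have hva : ∀ w ∈ K ∪ q, Upd f Z vf w = f xK ∨ Upd f Z vf w = f xq := by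
      intro w hw
      rcases mem_union.1 hw with hw' | hw'
      · exact Or.inl (vKv w hw')
      · exact Or.inr (vQv w hw')
    have hbnd : f xK ≤ Upd f Z vf u ∧ Upd f Z vf u ≤ f xq := by
      constructor
      · rcases hva a ha with h' | h' <;> rw [h'] at h1
        · exact h1
        · linarith
      · rcases hva b hb with h' | h' <;> rw [h'] at h2
        · linarith
        · exact h2
    by_cases huZ : u ∈ Z
    · rw [vZv u huZ] at hbnd
      rcases hvf with hb' | ha'
      · linarith [hb'.1, hbnd.1]
      · linarith [ha'.1, hbnd.2]
    · have hup : u ∉ K ∪ Z := by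
        intro hc
        rcases mem_union.1 hc with hc' | hc'
        · exact huk (mem_union_left _ hc')
        · exact huZ hc'
      rw [vO u hup] at hbnd
      have := hadj u xK xq (mem_union_left _ hxKp) (mem_union_right _ hxq) hbnd.1 hbnd.2
      rcases mem_union.1 this with h' | h'
      · exact hup h'
      · exact huk (mem_union_right _ h')
  have hdisjOP : ∀ U ∈ prt C i, U ≠ K ∪ Z → ∀ v ∈ U, v ∉ K ∪ Z := by
    intro U hU hne v hv hc
    exact disjoint_left.1 ((C.parts i).disjoint (mem_coe.2 hU) (mem_coe.2 hpmem) hne) hv hc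
  have hdisjOQ : ∀ U ∈ prt C i, U ≠ q → ∀ v ∈ U, v ∉ q := by
    intro U hU hne v hv hc
    exact disjoint_left.1 ((C.parts i).disjoint (mem_coe.2 hU) (mem_coe.2 hqmem) hne) hv hc
  -- crossing cores
  have coreKZ : (∀ x ∈ K, ∀ y ∈ Z, G.Adj x y) →
      ∀ u ∈ K, ∀ v ∈ Z, (Upd f Z vf u < Upd f Z vf v ↔ Upd g Z vg v < Upd g Z vg u) := by
    intro hc u hu v hv
    rw [vKv u hu, vZv v hv, wKv u hu, wZv v hv]
    exact hKZC hc
  have coreKZA : (∀ x ∈ K, ∀ y ∈ Z, ¬ G.Adj x y) →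
      ∀ u ∈ K, ∀ v ∈ Z, (Upd f Z vf u < Upd f Z vf v ↔ Upd g Z vg u < Upd g Z vg v) := by
    intro hc u hu v hv
    rw [vKv u hu, vZv v hv, wKv u hu, wZv v hv]
    exact hKZA hc
  have coreKq : (∀ x ∈ K, ∀ y ∈ q, G.Adj x y) →
      ∀ u ∈ K, ∀ v ∈ q, (Upd f Z vf u < Upd f Z vf v ↔ Upd g Z vg v < Upd g Z vg u) := by
    intro hc u hu v hv
    rw [vKv u hu, vQv v hv, wKv u hu, wQv v hv]
    exact hKqC hc
  have coreKqA : (∀ x ∈ K, ∀ y ∈ q, ¬ G.Adj x y) →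
      ∀ u ∈ K, ∀ v ∈ q, (Upd f Z vf u < Upd f Z vf v ↔ Upd g Z vg u < Upd g Z vg v) := by
    intro hc u hu v hv
    rw [vKv u hu, vQv v hv, wKv u hu, wQv v hv]
    exact hKqA hc
  have coreZq : (∀ x ∈ Z, ∀ y ∈ q, G.Adj x y) →
      ∀ u ∈ Z, ∀ v ∈ q, (Upd f Z vf u < Upd f Z vf v ↔ Upd g Z vg v < Upd g Z vg u) := by
    intro hc u hu v hv
    rw [vZv u hu, vQv v hv, wZv u hu, wQv v hv]
    exact hZqC hc
  have coreZqA : (∀ x ∈ Z, ∀ y ∈ q, ¬ G.Adj x y) →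
      ∀ u ∈ Z, ∀ v ∈ q, (Upd f Z vf u < Upd f Z vf v ↔ Upd g Z vg u < Upd g Z vg v) := by
    intro hc u hu v hv
    rw [vZv u hu, vQv v hv, wZv u hu, wQv v hv]
    exact hZqA hc
  have coreKO : ∀ U, U ∈ prt C i → U ≠ K ∪ Z → U ≠ q → (∀ x ∈ K, ∀ y ∈ U, G.Adj x y) →
      ∀ u ∈ K, ∀ v ∈ U, (Upd f Z vf u < Upd f Z vf v ↔ Upd g Z vg v < Upd g Z vg u) := by
    intro U hUo hUp hUq hc u hu v hv
    have hcp := comp_resolve (htransH U hUo hUp hUq) hKp hKne (part_nonempty hUo) hc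
    have hvU : v ∉ K ∪ Z := hdisjOP U hUo hUp v hv
    rw [vK u hu, vO v hvU, wK u hu, wO v hvU]
    exact hI.crossC (K ∪ Z) hpmem U hUo (fun hcq => hUp hcq.symm) hcp u (hKp hu) v hv
  have coreKOA : ∀ U, U ∈ prt C i → U ≠ K ∪ Z → U ≠ q → (∀ x ∈ K, ∀ y ∈ U, ¬ G.Adj x y) →
      ∀ u ∈ K, ∀ v ∈ U, (Upd f Z vf u < Upd f Z vf v ↔ Upd g Z vg u < Upd g Z vg v) := by
    intro U hUo hUp hUq hc u hu v hv
    have hcp := anti_resolve (htransH U hUo hUp hUq) hKp hKne (part_nonempty hUo) hc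
    have hvU : v ∉ K ∪ Z := hdisjOP U hUo hUp v hv
    rw [vK u hu, vO v hvU, wK u hu, wO v hvU]
    exact hI.crossA (K ∪ Z) hpmem U hUo (fun hcq => hUp hcq.symm) hcp u (hKp hu) v hv
  have coreZO : ∀ U, U ∈ prt C i → U ≠ K ∪ Z → U ≠ q → (∀ x ∈ Z, ∀ y ∈ U, G.Adj x y) →
      ∀ u ∈ Z, ∀ v ∈ U, (Upd f Z vf u < Upd f Z vf v ↔ Upd g Z vg v < Upd g Z vg u) := by
    intro U hUo hUp hUq hc u hu v hv
    have hcp := comp_resolve (htransH U hUo hUp hUq) hZp hZne (part_nonempty hUo) hc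
    have hvU : v ∉ K ∪ Z := hdisjOP U hUo hUp v hv
    have hvq : v ∉ q := hdisjOQ U hUo hUq v hv
    rw [vZv u hu, vO v hvU, wZv u hu, wO v hvU]
    have h1 := hI.crossC (K ∪ Z) hpmem U hUo (fun hcq => hUp hcq.symm) hcp xK hxKp v hv
    have h2 := sidef v hvU hvq
    have h3 := sideg v hvU
    exact ⟨fun h4 => h3.2.2 (h1.1 (h2.1.1 h4)), fun h4 => h2.1.2 (h1.2 (h3.2.1 h4))⟩
  have coreZOA : ∀ U, U ∈ prt C i → U ≠ K ∪ Z → U ≠ q → (∀ x ∈ Z, ∀ y ∈ U, ¬ G.Adj x y) →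
      ∀ u ∈ Z, ∀ v ∈ U, (Upd f Z vf u < Upd f Z vf v ↔ Upd g Z vg u < Upd g Z vg v) := by
    intro U hUo hUp hUq hc u hu v hv
    have hcp := anti_resolve (htransH U hUo hUp hUq) hZp hZne (part_nonempty hUo) hc
    have hvU : v ∉ K ∪ Z := hdisjOP U hUo hUp v hv
    have hvq : v ∉ q := hdisjOQ U hUo hUq v hv
    rw [vZv u hu, vO v hvU, wZv u hu, wO v hvU]
    have h1 := hI.crossA (K ∪ Z) hpmem U hUo (fun hcq => hUp hcq.symm) hcp xK hxKp v hv
    have h2 := sidef v hvU hvq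
    have h3 := sideg v hvU
    exact ⟨fun h4 => h3.1.2 (h1.1 (h2.1.1 h4)), fun h4 => h2.1.2 (h1.2 (h3.1.1 h4))⟩
  have crossC' : ∀ S ∈ prt C (i + 1), ∀ T ∈ prt C (i + 1), S ≠ T →
      (∀ x ∈ S, ∀ y ∈ T, G.Adj x y) → ∀ u ∈ S, ∀ v ∈ T,
      (Upd f Z vf u < Upd f Z vf v ↔ Upd g Z vg v < Upd g Z vg u) := by
    intro S hS T hT hne hcomp
    rcases hnewmem S hS with h1 | h1 | ⟨hSo, hSp, hSd⟩ <;>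
      rcases hnewmem T hT with h2 | h2 | ⟨hTo, hTp, hTd⟩
    · exact absurd (h1.trans h2.symm) hne
    · rw [h1, h2] at hcomp ⊢
      exact coreKZ hcomp
    · rw [h1] at hcomp ⊢
      by_cases hq' : T = q
      · rw [hq'] at hcomp ⊢
        exact coreKq hcomp
      · exact coreKO T hTo hTp hq' hcomp
    · rw [h1, h2] at hcomp ⊢
      exact cross_flipC (fun u hu v hv => hsep' K hK Z hZ hKZ u hu v hv)
        (coreKZ (fun x hx y hy => (hcomp y hy x hx).symm))
    · exact absurd (h1.trans h2.symm) hne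
    · rw [h1] at hcomp ⊢
      by_cases hq' : T = q
      · rw [hq'] at hcomp ⊢
        exact coreZq hcomp
      · exact coreZO T hTo hTp hq' hcomp
    · rw [h2] at hcomp ⊢
      by_cases hq' : S = q
      · rw [hq'] at hcomp ⊢
        exact cross_flipC (fun u hu v hv => hsep' K hK q hqE.1 (Ne.symm hqE.2.1) u hu v hv)
          (coreKq (fun x hx y hy => (hcomp y hy x hx).symm))
      · exact cross_flipC
          (fun u hu v hv => hsep' K hK S hS (fun hc => (mem_new_of_old S hSo hSp).2.1 hc.symm) u hu v hv)
          (coreKO S hSo hSp hq' (fun x hx y hy => (hcomp y hy x hx).symm))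
    · rw [h2] at hcomp ⊢
      by_cases hq' : S = q
      · rw [hq'] at hcomp ⊢
        exact cross_flipC (fun u hu v hv => hsep' Z hZ q hqE.1 (Ne.symm hqE.2.2) u hu v hv)
          (coreZq (fun x hx y hy => (hcomp y hy x hx).symm))
      · exact cross_flipC
          (fun u hu v hv => hsep' Z hZ S hS (fun hc => (mem_new_of_old S hSo hSp).2.2 hc.symm) u hu v hv)
          (coreZO S hSo hSp hq' (fun x hx y hy => (hcomp y hy x hx).symm))
    · intro u hu v hv
      rw [vO u (hSd u hu), vO v (hTd v hv), wO u (hSd u hu), wO v (hTd v hv)]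
      exact hI.crossC S hSo T hTo hne hcomp u hu v hv
  have crossA' : ∀ S ∈ prt C (i + 1), ∀ T ∈ prt C (i + 1), S ≠ T →
      (∀ x ∈ S, ∀ y ∈ T, ¬ G.Adj x y) → ∀ u ∈ S, ∀ v ∈ T,
      (Upd f Z vf u < Upd f Z vf v ↔ Upd g Z vg u < Upd g Z vg v) := by
    intro S hS T hT hne hcomp
    rcases hnewmem S hS with h1 | h1 | ⟨hSo, hSp, hSd⟩ <;>
      rcases hnewmem T hT with h2 | h2 | ⟨hTo, hTp, hTd⟩
    · exact absurd (h1.trans h2.symm) hne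
    · rw [h1, h2] at hcomp ⊢
      exact coreKZA hcomp
    · rw [h1] at hcomp ⊢
      by_cases hq' : T = q
      · rw [hq'] at hcomp ⊢
        exact coreKqA hcomp
      · exact coreKOA T hTo hTp hq' hcomp
    · rw [h1, h2] at hcomp ⊢
      exact cross_flipA (fun u hu v hv => hsep' K hK Z hZ hKZ u hu v hv)
        (coreKZA (fun x hx y hy ha => hcomp y hy x hx ha.symm))
    · exact absurd (h1.trans h2.symm) hne
    · rw [h1] at hcomp ⊢
      by_cases hq' : T = q
      · rw [hq'] at hcomp ⊢
        exact coreZqA hcomp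
      · exact coreZOA T hTo hTp hq' hcomp
    · rw [h2] at hcomp ⊢
      by_cases hq' : S = q
      · rw [hq'] at hcomp ⊢
        exact cross_flipA (fun u hu v hv => hsep' K hK q hqE.1 (Ne.symm hqE.2.1) u hu v hv)
          (coreKqA (fun x hx y hy ha => hcomp y hy x hx ha.symm))
      · exact cross_flipA
          (fun u hu v hv => hsep' K hK S hS (fun hc => (mem_new_of_old S hSo hSp).2.1 hc.symm) u hu v hv)
          (coreKOA S hSo hSp hq' (fun x hx y hy ha => hcomp y hy x hx ha.symm))
    · rw [h2] at hcomp ⊢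
      by_cases hq' : S = q
      · rw [hq'] at hcomp ⊢
        exact cross_flipA (fun u hu v hv => hsep' Z hZ q hqE.1 (Ne.symm hqE.2.2) u hu v hv)
          (coreZqA (fun x hx y hy ha => hcomp y hy x hx ha.symm))
      · exact cross_flipA
          (fun u hu v hv => hsep' Z hZ S hS (fun hc => (mem_new_of_old S hSo hSp).2.2 hc.symm) u hu v hv)
          (coreZOA S hSo hSp hq' (fun x hx y hy ha => hcomp y hy x hx ha.symm))
    · intro u hu v hv
      rw [vO u (hSd u hu), vO v (hTd v hv), wO u (hSd u hu), wO v (hTd v hv)]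
      exact hI.crossA S hSo T hTo hne hcomp u hu v hv
  -- position of q when p avoids both sides of an old red pair
  have qout : ∀ j, 1 ≤ j → j ≤ i → ∀ S T, Red G C j S T →
      (∀ u ∈ K ∪ Z, u ∉ S) → (∀ u ∈ K ∪ Z, u ∉ T) →
      (∀ u ∈ q, u ∉ S) ∧ (∀ u ∈ q, u ∉ T) := by
    intro j hj1 hj2 S T hST hpS hpT
    obtain ⟨W, hW, hpW⟩ := anc hj1 hj2 hii hpmem
    have hWS : W ≠ S := fun hc => hpS xK hxKp (hc ▸ hpW hxKp)
    have hWT : W ≠ T := fun hc => hpT xK hxKp (hc ▸ hpW hxKp)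
    obtain ⟨W', hW', hqW'⟩ := anc hj1 hj2 hii hqmem
    constructor
    · intro u hu hus
      have hWS' : W' = S := part_eq_of_mem hW' hST.1 (hqW' hu) hus
      have hrw : Red G C j S W :=
        red_lift (red_symm hq) hST.1 hW (hWS' ▸ hqW') hpW (Ne.symm hWS)
      exact hWT (red_unique hC hj1 (le_trans hj2 hii) hST hrw).symm
    · intro u hu hut
      have hWT' : W' = T := part_eq_of_mem hW' hST.2.1 (hqW' hu) hut
      have hrw : Red G C j T W :=
        red_lift (red_symm hq) hST.2.1 hW (hWT' ▸ hqW') hpW (Ne.symm hWT)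
      exact hWS (red_unique hC hj1 (le_trans hj2 hii) (red_symm hST) hrw).symm
  have hist' : ∀ j, 1 ≤ j → j ≤ i + 1 → ∀ S ∈ prt C j, NoRed G C j S →
      Contig (Upd f Z vf) S ∧ Contig (Upd g Z vg) S := by
    intro j hj1 hj2 S hS hnr
    rcases Nat.lt_or_ge j (i + 1) with hj3 | hj3
    · have hj2' : j ≤ i := by omega
      have hold := hI.hist j hj1 hj2' S hS hnr
      rcases dichP j hj1 hj2' S hS with hps | hps
      · have hqs : q ⊆ S := by
          rcases dichQ j hj1 hj2' S hS with h | h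
          · exact h
          · exfalso
            obtain ⟨W, hW, hqW⟩ := anc hj1 hj2' hii hqmem
            have hWS : S ≠ W := by
              intro hc
              obtain ⟨y, hy⟩ := hqne
              exact h y hy (hc ▸ hqW hy)
            have hrw : Red G C j S W := red_lift hq hS hW hps hqW hWS
            exact hrw.2.2.2 (hnr W hW (Ne.symm hWS))
        exact ⟨PresF S hold.1 (Or.inl ⟨hps, hqs⟩), PresG S hold.2 (Or.inl hps)⟩
      · have hqs : ∀ u ∈ q, u ∉ S := by
          intro u hu hus
          obtain ⟨W, hW, hpW⟩ := anc hj1 hj2' hii hpmem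
          obtain ⟨W', hW', hqW'⟩ := anc hj1 hj2' hii hqmem
          have hW'S : W' = S := part_eq_of_mem hW' hS (hqW' hu) hus
          have hWS : W ≠ S := fun hc => hps xK hxKp (hc ▸ hpW hxKp)
          have hrw : Red G C j W S := red_lift hq hW hS hpW (hW'S ▸ hqW') hWS
          exact hrw.2.2.2 (homog_symm (hnr W hW hWS))
        exact ⟨PresF S hold.1 (Or.inr ⟨hps, hqs⟩), PresG S hold.2 (Or.inr hps)⟩
    · have hj4 : j = i + 1 := by omega
      rw [hj4] at hS
      exact ⟨partF S hS, partG S hS⟩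
  -- preservation of the witness for old red pairs
  have hpairOld : ∀ j, 1 ≤ j → j ≤ i → ∀ S T, Red G C j S T →
      (Contig (Upd f Z vf) (S ∪ T) ∧ Contig (Upd g Z vg) S ∧ Contig (Upd g Z vg) T) ∨
      (Contig (Upd g Z vg) (S ∪ T) ∧ Contig (Upd f Z vf) S ∧ Contig (Upd f Z vf) T) := by
    intro j hj1 hj2 S T hST
    have hd : Disjoint S T :=
      (C.parts j).disjoint (mem_coe.2 hST.1) (mem_coe.2 hST.2.1) hST.2.2.1
    rcases dichP j hj1 hj2 S hST.1 with hpS | hpS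
    · rcases loc (K ∪ Z) q hq j hj1 hj2 S T hST hpS with hqS | hqT
      · rcases hI.hpair j hj1 hj2 S T hST with ⟨h1, h2, h3⟩ | ⟨h1, h2, h3⟩
        · exact Or.inl ⟨PresF _ h1 (Or.inl ⟨hpS.trans subset_union_left,
            hqS.trans subset_union_left⟩), PresG _ h2 (Or.inl hpS),
            PresG _ h3 (Or.inr fun u hu hut => disjoint_left.1 hd (hpS hu) hut)⟩
        · exact Or.inr ⟨PresG _ h1 (Or.inl (hpS.trans subset_union_left)),
            PresF _ h2 (Or.inl ⟨hpS, hqS⟩),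
            PresF _ h3 (Or.inr ⟨fun u hu hut => disjoint_left.1 hd (hpS hu) hut,
              fun u hu hut => disjoint_left.1 hd (hqS hu) hut⟩)⟩
      · obtain ⟨h1, h2, h3⟩ := hall j hj1 hj2 S T hST hpS hqT
        exact Or.inl ⟨PresF _ h1 (Or.inl ⟨hpS.trans subset_union_left,
          hqT.trans subset_union_right⟩), PresG _ h2 (Or.inl hpS),
          PresG _ h3 (Or.inr fun u hu hut => disjoint_left.1 hd (hpS hu) hut)⟩
    · rcases dichP j hj1 hj2 T hST.2.1 with hpT | hpT
      · rcases loc (K ∪ Z) q hq j hj1 hj2 T S (red_symm hST) hpT with hqT | hqS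
        · rcases hI.hpair j hj1 hj2 S T hST with ⟨h1, h2, h3⟩ | ⟨h1, h2, h3⟩
          · exact Or.inl ⟨PresF _ h1 (Or.inl ⟨hpT.trans subset_union_right,
              hqT.trans subset_union_right⟩),
              PresG _ h2 (Or.inr hpS), PresG _ h3 (Or.inl hpT)⟩
          · exact Or.inr ⟨PresG _ h1 (Or.inl (hpT.trans subset_union_right)),
              PresF _ h2 (Or.inr ⟨hpS, fun u hu hus => disjoint_right.1 hd (hqT hu) hus⟩),
              PresF _ h3 (Or.inl ⟨hpT, hqT⟩)⟩
        · obtain ⟨h1, h2, h3⟩ := hall j hj1 hj2 T S (red_symm hST) hpT hqS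
          have h1' : Contig f (S ∪ T) := by rwa [union_comm]
          exact Or.inl ⟨PresF _ h1' (Or.inl ⟨hpT.trans subset_union_right,
            hqS.trans subset_union_left⟩), PresG _ h3 (Or.inr hpS), PresG _ h2 (Or.inl hpT)⟩
      · obtain ⟨hqS, hqT⟩ := qout j hj1 hj2 S T hST hpS hpT
        have hpU : ∀ u ∈ K ∪ Z, u ∉ S ∪ T := fun u hu hc => by
          rcases mem_union.1 hc with h | h
          · exact hpS u hu h
          · exact hpT u hu h
        have hqU : ∀ u ∈ q, u ∉ S ∪ T := fun u hu hc => by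
          rcases mem_union.1 hc with h | h
          · exact hqS u hu h
          · exact hqT u hu h
        rcases hI.hpair j hj1 hj2 S T hST with ⟨h1, h2, h3⟩ | ⟨h1, h2, h3⟩
        · exact Or.inl ⟨PresF _ h1 (Or.inr ⟨hpU, hqU⟩), PresG _ h2 (Or.inr hpS),
            PresG _ h3 (Or.inr hpT)⟩
        · exact Or.inr ⟨PresG _ h1 (Or.inr hpU), PresF _ h2 (Or.inr ⟨hpS, hqS⟩),
            PresF _ h3 (Or.inr ⟨hpT, hqT⟩)⟩
  have ancP_of_K : ∀ j, 1 ≤ j → j ≤ i → ∀ S ∈ prt C j, K ⊆ S → K ∪ Z ⊆ S := by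
    intro j hj1 hj2 S hS hKS
    obtain ⟨S', hS', hps⟩ := anc hj1 hj2 hii hpmem
    have he : S = S' := subset_part_unique hKne hS hS' hKS (subset_trans hKp hps)
    exact he ▸ hps
  have ancP_of_Z : ∀ j, 1 ≤ j → j ≤ i → ∀ S ∈ prt C j, Z ⊆ S → K ∪ Z ⊆ S := by
    intro j hj1 hj2 S hS hZS
    obtain ⟨S', hS', hps⟩ := anc hj1 hj2 hii hpmem
    have he : S = S' := subset_part_unique hZne hS hS' hZS (subset_trans hZp hps)
    exact he ▸ hps
  have eq_of_sub_new : ∀ A S, A ∈ prt C (i + 1) → S ∈ prt C (i + 1) → A ⊆ S → S = A := by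
    intro A S hA hS hsub
    obtain ⟨a, ha⟩ := part_nonempty hA
    exact part_eq_of_mem hS hA (hsub ha) ha
  -- classification of red pairs at level i+1
  have newred : ∀ A B, Red G C (i + 1) A B →
      (A = K ∧ B = Z) ∨ (A = Z ∧ B = K) ∨ (A = K ∧ B = q) ∨ (A = q ∧ B = K) ∨
      (Red G C i A B ∧ A ≠ K ∪ Z ∧ B ≠ K ∪ Z ∧ A ≠ q ∧ B ≠ q ∧
        (∀ u ∈ A, u ∉ K ∪ Z) ∧ (∀ u ∈ B, u ∉ K ∪ Z)) := by
    intro A B hr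
    obtain ⟨hA, hB, hAB, hnh⟩ := hr
    rcases hnewmem A hA with hA1 | hA1 | ⟨hAo, hAp, hAd⟩ <;>
      rcases hnewmem B hB with hB1 | hB1 | ⟨hBo, hBp, hBd⟩
    · exact absurd (hA1.trans hB1.symm) hAB
    · exact Or.inl ⟨hA1, hB1⟩
    · have hrb : Red G C i (K ∪ Z) B := ⟨hpmem, hBo, fun hc => hBp hc.symm,
        fun hc => hnh (homog_mono (hA1 ▸ hKp) subset_rfl hc)⟩
      exact Or.inr (Or.inr (Or.inl ⟨hA1, red_unique hC hi1 hii hrb hq⟩))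
    · exact Or.inr (Or.inl ⟨hA1, hB1⟩)
    · exact absurd (hA1.trans hB1.symm) hAB
    · have hrb : Red G C i (K ∪ Z) B := ⟨hpmem, hBo, fun hc => hBp hc.symm,
        fun hc => hnh (homog_mono (hA1 ▸ hZp) subset_rfl hc)⟩
      have hBq : B = q := red_unique hC hi1 hii hrb hq
      exact absurd (by rw [hA1, hBq]; exact hZq) hnh
    · have hra : Red G C i A (K ∪ Z) := ⟨hAo, hpmem, hAp,
        fun hc => hnh (homog_mono subset_rfl (hB1 ▸ hKp) hc)⟩
      have hA2 : A = q := red_unique hC hi1 hii (red_symm hra) hq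
      exact Or.inr (Or.inr (Or.inr (Or.inl ⟨hA2, hB1⟩)))
    · have hra : Red G C i A (K ∪ Z) := ⟨hAo, hpmem, hAp,
        fun hc => hnh (homog_mono subset_rfl (hB1 ▸ hZp) hc)⟩
      have hA2 : A = q := red_unique hC hi1 hii (red_symm hra) hq
      exact absurd (by rw [hA2, hB1]; exact homog_symm hZq) hnh
    · have hr' : Red G C i A B := ⟨hAo, hBo, hAB, hnh⟩
      have hAq : A ≠ q := by
        intro hc
        exact hBp (red_unique hC hi1 hii (hc ▸ hr') (red_symm hq))
      have hBq : B ≠ q := by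
        intro hc
        exact hAp (red_unique hC hi1 hii (hc ▸ red_symm hr') (red_symm hq))
      exact Or.inr (Or.inr (Or.inr (Or.inr ⟨hr', hAp, hBp, hAq, hBq, hAd, hBd⟩)))
  have hpair' : ∀ j, 1 ≤ j → j ≤ i + 1 → ∀ S T, Red G C j S T →
      (Contig (Upd f Z vf) (S ∪ T) ∧ Contig (Upd g Z vg) S ∧ Contig (Upd g Z vg) T) ∨
      (Contig (Upd g Z vg) (S ∪ T) ∧ Contig (Upd f Z vf) S ∧ Contig (Upd f Z vf) T) := by
    intro j hj1 hj2 S T hST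
    rcases Nat.lt_or_ge j (i + 1) with hj3 | hj3
    · exact hpairOld j hj1 (by omega) S T hST
    · have hj4 : j = i + 1 := by omega
      rw [hj4] at hST
      rcases newred S T hST with ⟨h1, h2⟩ | ⟨h1, h2⟩ | ⟨h1, h2⟩ | ⟨h1, h2⟩ |
        ⟨hro, hSp, hTp, hSq, hTq, hSd, hTd⟩
      · refine Or.inr ⟨?_, partF S hST.1, partF T hST.2.1⟩
        rw [h1, h2]; exact contigP_g
      · refine Or.inr ⟨?_, partF S hST.1, partF T hST.2.1⟩
        rw [h1, h2, union_comm]; exact contigP_g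
      · refine Or.inl ⟨?_, partG S hST.1, partG T hST.2.1⟩
        rw [h1, h2]; exact contigKq_f
      · refine Or.inl ⟨?_, partG S hST.1, partG T hST.2.1⟩
        rw [h1, h2, union_comm]; exact contigKq_f
      · have hpU : ∀ u ∈ K ∪ Z, u ∉ S ∪ T := fun u hu hc => by
          rcases mem_union.1 hc with h | h
          · exact hSd u h hu
          · exact hTd u h hu
        have hqS : ∀ u ∈ q, u ∉ S := fun u hu hus => hdisjOQ S hro.1 hSq u hus hu
        have hqT : ∀ u ∈ q, u ∉ T := fun u hu hut => hdisjOQ T hro.2.1 hTq u hut hu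
        have hqU : ∀ u ∈ q, u ∉ S ∪ T := fun u hu hc => by
          rcases mem_union.1 hc with h | h
          · exact hqS u hu h
          · exact hqT u hu h
        rcases hI.hpair i hi1 le_rfl S T hro with ⟨h1, h2, h3⟩ | ⟨h1, h2, h3⟩
        · exact Or.inl ⟨PresF _ h1 (Or.inr ⟨hpU, hqU⟩),
            PresG _ h2 (Or.inr fun u hu hus => hSd u hus hu),
            PresG _ h3 (Or.inr fun u hu hut => hTd u hut hu)⟩
        · exact Or.inr ⟨PresG _ h1 (Or.inr hpU),
            PresF _ h2 (Or.inr ⟨fun u hu hus => hSd u hus hu, hqS⟩),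
            PresF _ h3 (Or.inr ⟨fun u hu hut => hTd u hut hu, hqT⟩)⟩
  have cur' : ∀ A B, Red G C (i + 1) A B →
      ∃ c o : V → ℚ, ((c = Upd f Z vf ∧ o = Upd g Z vg) ∨ (c = Upd g Z vg ∧ o = Upd f Z vf)) ∧
        Contig c (A ∪ B) ∧
        ∀ j, 1 ≤ j → j ≤ i + 1 → ∀ S T, Red G C j S T → A ⊆ S → B ⊆ T →
          Contig c (S ∪ T) ∧ Contig o S ∧ Contig o T := by
    intro A B hr
    rcases newred A B hr with ⟨h1, h2⟩ | ⟨h1, h2⟩ | ⟨h1, h2⟩ | ⟨h1, h2⟩ |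
      ⟨hro, hAp, hBp, hAq, hBq, hAd, hBd⟩
    · refine ⟨Upd g Z vg, Upd f Z vf, Or.inr ⟨rfl, rfl⟩, by rw [h1, h2]; exact contigP_g, ?_⟩
      intro j hj1 hj2 S T hST hAS hBT
      rcases Nat.lt_or_ge j (i + 1) with hj3 | hj3
      · exfalso
        have hj2' : j ≤ i := by omega
        have hS1 : K ∪ Z ⊆ S := ancP_of_K j hj1 hj2' S hST.1 (h1 ▸ hAS)
        have hT1 : K ∪ Z ⊆ T := ancP_of_Z j hj1 hj2' T hST.2.1 (h2 ▸ hBT)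
        exact hST.2.2.1 (subset_part_unique ⟨xK, hxKp⟩ hST.1 hST.2.1 hS1 hT1)
      · have hj4 : j = i + 1 := by omega
        rw [hj4] at hST
        have hSA : S = A := eq_of_sub_new A S (h1 ▸ hK) hST.1 hAS
        have hTB : T = B := eq_of_sub_new B T (h2 ▸ hZ) hST.2.1 hBT
        refine ⟨by rw [hSA, hTB, h1, h2]; exact contigP_g, partF S hST.1, partF T hST.2.1⟩
    · refine ⟨Upd g Z vg, Upd f Z vf, Or.inr ⟨rfl, rfl⟩,
        by rw [h1, h2, union_comm]; exact contigP_g, ?_⟩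
      intro j hj1 hj2 S T hST hAS hBT
      rcases Nat.lt_or_ge j (i + 1) with hj3 | hj3
      · exfalso
        have hj2' : j ≤ i := by omega
        have hS1 : K ∪ Z ⊆ S := ancP_of_Z j hj1 hj2' S hST.1 (h1 ▸ hAS)
        have hT1 : K ∪ Z ⊆ T := ancP_of_K j hj1 hj2' T hST.2.1 (h2 ▸ hBT)
        exact hST.2.2.1 (subset_part_unique ⟨xK, hxKp⟩ hST.1 hST.2.1 hS1 hT1)
      · have hj4 : j = i + 1 := by omega
        rw [hj4] at hST
        have hSA : S = A := eq_of_sub_new A S (h1 ▸ hZ) hST.1 hAS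
        have hTB : T = B := eq_of_sub_new B T (h2 ▸ hK) hST.2.1 hBT
        refine ⟨by rw [hSA, hTB, h1, h2, union_comm]; exact contigP_g,
          partF S hST.1, partF T hST.2.1⟩
    · refine ⟨Upd f Z vf, Upd g Z vg, Or.inl ⟨rfl, rfl⟩, by rw [h1, h2]; exact contigKq_f, ?_⟩
      intro j hj1 hj2 S T hST hAS hBT
      rcases Nat.lt_or_ge j (i + 1) with hj3 | hj3
      · have hj2' : j ≤ i := by omega
        have hd : Disjoint S T :=
          (C.parts j).disjoint (mem_coe.2 hST.1) (mem_coe.2 hST.2.1) hST.2.2.1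
        have hpS : K ∪ Z ⊆ S := ancP_of_K j hj1 hj2' S hST.1 (h1 ▸ hAS)
        have hqT : q ⊆ T := h2 ▸ hBT
        obtain ⟨c1, c2, c3⟩ := hall j hj1 hj2' S T hST hpS hqT
        exact ⟨PresF _ c1 (Or.inl ⟨hpS.trans subset_union_left, hqT.trans subset_union_right⟩),
          PresG _ c2 (Or.inl hpS),
          PresG _ c3 (Or.inr fun u hu hut => disjoint_left.1 hd (hpS hu) hut)⟩
      · have hj4 : j = i + 1 := by omega
        rw [hj4] at hST
        have hSA : S = A := eq_of_sub_new A S (h1 ▸ hK) hST.1 hAS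
        have hTB : T = B := eq_of_sub_new B T (h2 ▸ hqE.1) hST.2.1 hBT
        refine ⟨by rw [hSA, hTB, h1, h2]; exact contigKq_f, partG S hST.1, partG T hST.2.1⟩
    · refine ⟨Upd f Z vf, Upd g Z vg, Or.inl ⟨rfl, rfl⟩,
        by rw [h1, h2, union_comm]; exact contigKq_f, ?_⟩
      intro j hj1 hj2 S T hST hAS hBT
      rcases Nat.lt_or_ge j (i + 1) with hj3 | hj3
      · have hj2' : j ≤ i := by omega
        have hd : Disjoint S T :=
          (C.parts j).disjoint (mem_coe.2 hST.1) (mem_coe.2 hST.2.1) hST.2.2.1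
        have hpT : K ∪ Z ⊆ T := ancP_of_K j hj1 hj2' T hST.2.1 (h2 ▸ hBT)
        have hqS : q ⊆ S := h1 ▸ hAS
        obtain ⟨c1, c2, c3⟩ := hall j hj1 hj2' T S (red_symm hST) hpT hqS
        have c1' : Contig f (S ∪ T) := by rwa [union_comm]
        exact ⟨PresF _ c1' (Or.inl ⟨hpT.trans subset_union_right, hqS.trans subset_union_left⟩),
          PresG _ c3 (Or.inr fun u hu hus => disjoint_right.1 hd (hpT hu) hus),
          PresG _ c2 (Or.inl hpT)⟩
      · have hj4 : j = i + 1 := by omega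
        rw [hj4] at hST
        have hSA : S = A := eq_of_sub_new A S (h1 ▸ hqE.1) hST.1 hAS
        have hTB : T = B := eq_of_sub_new B T (h2 ▸ hK) hST.2.1 hBT
        refine ⟨by rw [hSA, hTB, h1, h2, union_comm]; exact contigKq_f,
          partG S hST.1, partG T hST.2.1⟩
    · -- an old red pair
      obtain ⟨c, o, hco, hadjAB, hallAB⟩ := hI.cur A B hro
      have hpAB : ∀ u ∈ K ∪ Z, u ∉ A ∪ B := fun u hu hc => by
        rcases mem_union.1 hc with h | h
        · exact hAd u h hu
        · exact hBd u h hu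
      have hqA : ∀ u ∈ q, u ∉ A := fun u hu hus => hdisjOQ A hro.1 hAq u hus hu
      have hqB : ∀ u ∈ q, u ∉ B := fun u hu hus => hdisjOQ B hro.2.1 hBq u hus hu
      have hqAB : ∀ u ∈ q, u ∉ A ∪ B := fun u hu hc => by
        rcases mem_union.1 hc with h | h
        · exact hqA u hu h
        · exact hqB u hu h
      have key : ∀ j, 1 ≤ j → j ≤ i → ∀ S T, Red G C j S T → A ⊆ S → B ⊆ T →
          ((K ∪ Z ⊆ S ∧ q ⊆ S ∧ (∀ u ∈ K ∪ Z, u ∉ T) ∧ (∀ u ∈ q, u ∉ T)) ∨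
           (K ∪ Z ⊆ T ∧ q ⊆ T ∧ (∀ u ∈ K ∪ Z, u ∉ S) ∧ (∀ u ∈ q, u ∉ S)) ∨
           ((∀ u ∈ K ∪ Z, u ∉ S) ∧ (∀ u ∈ q, u ∉ S) ∧
            (∀ u ∈ K ∪ Z, u ∉ T) ∧ (∀ u ∈ q, u ∉ T))) := by
        intro j hj1 hj2 S T hST hAS hBT
        have hd : Disjoint S T :=
          (C.parts j).disjoint (mem_coe.2 hST.1) (mem_coe.2 hST.2.1) hST.2.2.1
        rcases dichP j hj1 hj2 S hST.1 with hpS | hpS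
        · rcases loc (K ∪ Z) q hq j hj1 hj2 S T hST hpS with hqS | hqT
          · exact Or.inl ⟨hpS, hqS, fun u hu hut => disjoint_left.1 hd (hpS hu) hut,
              fun u hu hut => disjoint_left.1 hd (hqS hu) hut⟩
          · exfalso
            have := hI.uniq j hj1 hj2 S T hST (K ∪ Z) q hq hpS hqT A B hro hAS hBT
            exact hAp this.1.symm
        · rcases dichP j hj1 hj2 T hST.2.1 with hpT | hpT
          · rcases loc (K ∪ Z) q hq j hj1 hj2 T S (red_symm hST) hpT with hqT | hqS
            · exact Or.inr (Or.inl ⟨hpT, hqT, hpS,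
                fun u hu hus => disjoint_right.1 hd (hqT hu) hus⟩)
            · exfalso
              have := hI.uniq j hj1 hj2 S T hST q (K ∪ Z) (red_symm hq) hqS hpT A B hro hAS hBT
              exact hAq this.1.symm
          · obtain ⟨hqS, hqT⟩ := qout j hj1 hj2 S T hST hpS hpT
            exact Or.inr (Or.inr ⟨hpS, hqS, hpT, hqT⟩)
      rcases hco with ⟨hcf, hog⟩ | ⟨hcg, hof⟩
      · rw [hcf] at hadjAB; rw [hcf, hog] at hallAB
        refine ⟨Upd f Z vf, Upd g Z vg, Or.inl ⟨rfl, rfl⟩,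
          PresF _ hadjAB (Or.inr ⟨hpAB, hqAB⟩), ?_⟩
        intro j hj1 hj2 S T hST hAS hBT
        rcases Nat.lt_or_ge j (i + 1) with hj3 | hj3
        · have hj2' : j ≤ i := by omega
          obtain ⟨c1, c2, c3⟩ := hallAB j hj1 hj2' S T hST hAS hBT
          rcases key j hj1 hj2' S T hST hAS hBT with ⟨k1, k2, k3, k4⟩ | ⟨k1, k2, k3, k4⟩ |
            ⟨k1, k2, k3, k4⟩
          · exact ⟨PresF _ c1 (Or.inl ⟨k1.trans subset_union_left, k2.trans subset_union_left⟩),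
              PresG _ c2 (Or.inl k1), PresG _ c3 (Or.inr k3)⟩
          · exact ⟨PresF _ c1 (Or.inl ⟨k1.trans subset_union_right,
              k2.trans subset_union_right⟩), PresG _ c2 (Or.inr k3), PresG _ c3 (Or.inl k1)⟩
          · refine ⟨PresF _ c1 (Or.inr ⟨fun u hu hc => ?_, fun u hu hc => ?_⟩),
              PresG _ c2 (Or.inr k1), PresG _ c3 (Or.inr k3)⟩
            · rcases mem_union.1 hc with h | h
              · exact k1 u hu h
              · exact k3 u hu h
            · rcases mem_union.1 hc with h | h
              · exact k2 u hu h
              · exact k4 u hu h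
        · have hj4 : j = i + 1 := by omega
          rw [hj4] at hST
          have hSA : S = A := eq_of_sub_new A S ((mem_new_of_old A hro.1 hAp).1) hST.1 hAS
          have hTB : T = B := eq_of_sub_new B T ((mem_new_of_old B hro.2.1 hBp).1) hST.2.1 hBT
          refine ⟨by rw [hSA, hTB]; exact PresF _ hadjAB (Or.inr ⟨hpAB, hqAB⟩),
            partG S hST.1, partG T hST.2.1⟩
      · rw [hcg] at hadjAB; rw [hcg, hof] at hallAB
        refine ⟨Upd g Z vg, Upd f Z vf, Or.inr ⟨rfl, rfl⟩,
          PresG _ hadjAB (Or.inr hpAB), ?_⟩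
        intro j hj1 hj2 S T hST hAS hBT
        rcases Nat.lt_or_ge j (i + 1) with hj3 | hj3
        · have hj2' : j ≤ i := by omega
          obtain ⟨c1, c2, c3⟩ := hallAB j hj1 hj2' S T hST hAS hBT
          rcases key j hj1 hj2' S T hST hAS hBT with ⟨k1, k2, k3, k4⟩ | ⟨k1, k2, k3, k4⟩ |
            ⟨k1, k2, k3, k4⟩
          · exact ⟨PresG _ c1 (Or.inl (k1.trans subset_union_left)),
              PresF _ c2 (Or.inl ⟨k1, k2⟩), PresF _ c3 (Or.inr ⟨k3, k4⟩)⟩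
          · exact ⟨PresG _ c1 (Or.inl (k1.trans subset_union_right)),
              PresF _ c2 (Or.inr ⟨k3, k4⟩), PresF _ c3 (Or.inl ⟨k1, k2⟩)⟩
          · refine ⟨PresG _ c1 (Or.inr fun u hu hc => ?_),
              PresF _ c2 (Or.inr ⟨k1, k2⟩), PresF _ c3 (Or.inr ⟨k3, k4⟩)⟩
            rcases mem_union.1 hc with h | h
            · exact k1 u hu h
            · exact k3 u hu h
        · have hj4 : j = i + 1 := by omega
          rw [hj4] at hST
          have hSA : S = A := eq_of_sub_new A S ((mem_new_of_old A hro.1 hAp).1) hST.1 hAS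
          have hTB : T = B := eq_of_sub_new B T ((mem_new_of_old B hro.2.1 hBp).1) hST.2.1 hBT
          refine ⟨by rw [hSA, hTB]; exact PresG _ hadjAB (Or.inr hpAB),
            partF S hST.1, partF T hST.2.1⟩
  have uniq' : ∀ j, 1 ≤ j → j ≤ i + 1 → ∀ S T, Red G C j S T →
      ∀ A B, Red G C (i + 1) A B → A ⊆ S → B ⊆ T →
      ∀ A' B', Red G C (i + 1) A' B' → A' ⊆ S → B' ⊆ T → A = A' ∧ B = B' := by
    intro j hj1 hj2 S T hST A B hr hAS hBT A' B' hr' hAS' hBT'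
    rcases Nat.lt_or_ge j (i + 1) with hj3 | hj3
    · have hj2' : j ≤ i := by omega
      -- associate an old red pair crossing (S,T) to each new pair
      have assoc : ∀ A B, Red G C (i + 1) A B → A ⊆ S → B ⊆ T →
          ∃ A₀ B₀, Red G C i A₀ B₀ ∧ A₀ ⊆ S ∧ B₀ ⊆ T ∧
            ((A = K ∧ B = q ∧ A₀ = K ∪ Z ∧ B₀ = q) ∨
             (A = q ∧ B = K ∧ A₀ = q ∧ B₀ = K ∪ Z) ∨
             (A₀ = A ∧ B₀ = B ∧ A ≠ K ∪ Z ∧ A ≠ q)) := by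
        intro A B hr hAS hBT
        rcases newred A B hr with ⟨h1, h2⟩ | ⟨h1, h2⟩ | ⟨h1, h2⟩ | ⟨h1, h2⟩ |
          ⟨hro, hAp, hBp, hAq, hBq, hAd, hBd⟩
        · exfalso
          have hS1 : K ∪ Z ⊆ S := ancP_of_K j hj1 hj2' S hST.1 (h1 ▸ hAS)
          have hT1 : K ∪ Z ⊆ T := ancP_of_Z j hj1 hj2' T hST.2.1 (h2 ▸ hBT)
          exact hST.2.2.1 (subset_part_unique ⟨xK, hxKp⟩ hST.1 hST.2.1 hS1 hT1)
        · exfalso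
          have hS1 : K ∪ Z ⊆ S := ancP_of_Z j hj1 hj2' S hST.1 (h1 ▸ hAS)
          have hT1 : K ∪ Z ⊆ T := ancP_of_K j hj1 hj2' T hST.2.1 (h2 ▸ hBT)
          exact hST.2.2.1 (subset_part_unique ⟨xK, hxKp⟩ hST.1 hST.2.1 hS1 hT1)
        · exact ⟨K ∪ Z, q, hq, ancP_of_K j hj1 hj2' S hST.1 (h1 ▸ hAS), h2 ▸ hBT,
            Or.inl ⟨h1, h2, rfl, rfl⟩⟩
        · exact ⟨q, K ∪ Z, red_symm hq, h1 ▸ hAS,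
            ancP_of_K j hj1 hj2' T hST.2.1 (h2 ▸ hBT), Or.inr (Or.inl ⟨h1, h2, rfl, rfl⟩)⟩
        · exact ⟨A, B, hro, hAS, hBT, Or.inr (Or.inr ⟨rfl, rfl, hAp, hAq⟩)⟩
      obtain ⟨A₀, B₀, hr₀, hS₀, hT₀, hc₀⟩ := assoc A B hr hAS hBT
      obtain ⟨A₁, B₁, hr₁, hS₁, hT₁, hc₁⟩ := assoc A' B' hr' hAS' hBT'
      have huq := hI.uniq j hj1 hj2' S T hST A₀ B₀ hr₀ hS₀ hT₀ A₁ B₁ hr₁ hS₁ hT₁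
      rcases hc₀ with ⟨e1, e2, e3, e4⟩ | ⟨e1, e2, e3, e4⟩ | ⟨e1, e2, e3, e4⟩ <;>
        rcases hc₁ with ⟨d1, d2, d3, d4⟩ | ⟨d1, d2, d3, d4⟩ | ⟨d1, d2, d3, d4⟩
      · exact ⟨e1.trans d1.symm, e2.trans d2.symm⟩
      · exact absurd ((e3.symm.trans huq.1).trans d3) hpq
      · exact absurd ((d1.symm.trans huq.1.symm).trans e3) d3
      · exact absurd ((d3.symm.trans huq.1.symm).trans e3) hpq
      · exact ⟨e1.trans d1.symm, e2.trans d2.symm⟩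
      · exact absurd ((d1.symm.trans huq.1.symm).trans e3) d4
      · exact absurd ((e1.symm.trans huq.1).trans d3) e3
      · exact absurd ((e1.symm.trans huq.1).trans d3) e4
      · exact ⟨(e1.symm.trans huq.1).trans d1, (e2.symm.trans huq.2).trans d2⟩
    · have hj4 : j = i + 1 := by omega
      rw [hj4] at hST
      have h1 : S = A := eq_of_sub_new A S hr.1 hST.1 hAS
      have h2 : T = B := eq_of_sub_new B T hr.2.1 hST.2.1 hBT
      have h3 : S = A' := eq_of_sub_new A' S hr'.1 hST.1 hAS'
      have h4 : T = B' := eq_of_sub_new B' T hr'.2.1 hST.2.1 hBT'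
      exact ⟨h1.symm.trans h3, h2.symm.trans h4⟩
  exact ⟨hconst', hsep', crossC', crossA', hist', hpair', cur', uniq'⟩



end TwwPerm2

namespace TwwPerm2
open TwwPerm
variable {V : Type*} [Fintype V] [DecidableEq V] {G : SimpleGraph V} {C : ContractionSeq V}

set_option maxHeartbeats 1000000 in
/-- The refinement step in the case where the split part `p = K ∪ Z` has no red
neighbour: `K` stays put and `Z` moves right next to it. -/
lemma buildN (hC : IsDSeq G C 1) {i : ℕ} (hi1 : 1 ≤ i) (hi2 : i < Fintype.card V)
    {f g : V → ℚ} (hI : Inv G C i f g)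
    {K Z : Finset V} (hK : K ∈ prt C (i + 1)) (hZ : Z ∈ prt C (i + 1)) (hKZ : K ≠ Z)
    (hm : prt C i = insert (K ∪ Z) (((prt C (i + 1)).erase K).erase Z))
    (hnr : NoRed G C i (K ∪ Z))
    {xK : V} (hxK : xK ∈ K)
    {vf vg : ℚ}
    (hvf : Anch f (K ∪ Z) (f xK) vf)
    (hvg : Anch g (K ∪ Z) (g xK) vg)
    (hKZC : (∀ x ∈ K, ∀ y ∈ Z, G.Adj x y) → (f xK < vf ↔ vg < g xK))
    (hKZA : (∀ x ∈ K, ∀ y ∈ Z, ¬ G.Adj x y) → (f xK < vf ↔ g xK < vg)) :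
    Inv G C (i + 1) (Upd f Z vf) (Upd g Z vg) := by
  classical
  have hii : i ≤ Fintype.card V := hi2.le
  have hpmem : K ∪ Z ∈ prt C i := by
    show _ ∈ (C.parts i).parts; rw [show (C.parts i).parts = prt C i from rfl, hm]
    exact mem_insert_self _ _
  have hdKZ : Disjoint K Z := (C.parts (i + 1)).disjoint (mem_coe.2 hK) (mem_coe.2 hZ) hKZ
  have hKne : K.Nonempty := part_nonempty hK
  have hZne : Z.Nonempty := part_nonempty hZ
  have hxKp : xK ∈ K ∪ Z := mem_union_left _ hxK
  have hZp : Z ⊆ K ∪ Z := subset_union_right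
  have hKp : K ⊆ K ∪ Z := subset_union_left
  have constf : ∀ u ∈ K ∪ Z, f u = f xK := fun u hu => (hI.const _ hpmem u hu xK hxKp).1
  have constg : ∀ u ∈ K ∪ Z, g u = g xK := fun u hu => (hI.const _ hpmem u hu xK hxKp).2
  have memval_f : ∀ u, f u = f xK → u ∈ K ∪ Z := by
    intro u he
    obtain ⟨U, hU, hu⟩ := exists_part (C := C) i u
    by_cases hUp : U = K ∪ Z
    · exact hUp ▸ hu
    · exact absurd he (hI.sep U hU _ hpmem hUp u hu xK hxKp).1
  have memval_g : ∀ u, g u = g xK → u ∈ K ∪ Z := by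
    intro u he
    obtain ⟨U, hU, hu⟩ := exists_part (C := C) i u
    by_cases hUp : U = K ∪ Z
    · exact hUp ▸ hu
    · exact absurd he (hI.sep U hU _ hpmem hUp u hu xK hxKp).2
  have hfreshf : ∀ u, u ∉ K ∪ Z → f u ≠ vf := anch_fresh hvf
  have hfreshg : ∀ u, u ∉ K ∪ Z → g u ≠ vg := anch_fresh hvg
  have hvfα : vf ≠ f xK := by
    rcases hvf with ha | hb
    · exact ne_of_gt ha.1
    · exact ne_of_lt hb.1
  have hvgα : vg ≠ g xK := by
    rcases hvg with ha | hb
    · exact ne_of_gt ha.1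
    · exact ne_of_lt hb.1
  have hnewmem : ∀ U ∈ prt C (i + 1), U = K ∨ U = Z ∨
      (U ∈ prt C i ∧ U ≠ K ∪ Z ∧ ∀ u ∈ U, u ∉ K ∪ Z) := by
    intro U hU
    by_cases h1 : U = K
    · exact Or.inl h1
    by_cases h2 : U = Z
    · exact Or.inr (Or.inl h2)
    refine Or.inr (Or.inr ?_)
    have hUold : U ∈ prt C i := by
      show _ ∈ (C.parts i).parts; rw [show (C.parts i).parts = prt C i from rfl, hm]
      exact mem_insert_of_mem (mem_erase.2 ⟨h2, mem_erase.2 ⟨h1, hU⟩⟩)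
    have hUp : U ≠ K ∪ Z := by
      intro hc
      have hKU : K = U := part_eq_of_mem hK hU hxK (by rw [hc]; exact mem_union_left _ hxK)
      obtain ⟨z, hz⟩ := hZne
      have hzK : z ∈ K := by rw [hKU, hc]; exact mem_union_right _ hz
      exact disjoint_left.1 hdKZ hzK hz
    refine ⟨hUold, hUp, fun u hu hup => ?_⟩
    have hd : Disjoint U (K ∪ Z) :=
      (C.parts i).disjoint (mem_coe.2 hUold) (mem_coe.2 hpmem) hUp
    exact disjoint_left.1 hd hu hup
  have mem_new_of_old : ∀ U ∈ prt C i, U ≠ K ∪ Z → U ∈ prt C (i + 1) ∧ U ≠ K ∧ U ≠ Z := by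
    intro U hU hne
    have h1 : U ∈ insert (K ∪ Z) (((prt C (i + 1)).erase K).erase Z) := by rw [← hm]; exact hU
    rcases mem_insert.1 h1 with h2 | h2
    · exact absurd h2 hne
    · have h3 := mem_erase.1 h2
      have h4 := mem_erase.1 h3.2
      exact ⟨h4.2, h4.1, h3.1⟩
  have htransH : ∀ U ∈ prt C i, U ≠ K ∪ Z → Homogeneous G (K ∪ Z) U := by
    intro U hU h1
    exact hnr U hU h1
  have sidef : ∀ w, w ∉ K ∪ Z →
      ((vf < f w ↔ f xK < f w) ∧ (f w < vf ↔ f w < f xK)) := fun w hwp =>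
    anch_side hvf w hwp (fun hc => hwp (memval_f w hc))
  have sideg : ∀ w, w ∉ K ∪ Z →
      ((vg < g w ↔ g xK < g w) ∧ (g w < vg ↔ g w < g xK)) := fun w hwp =>
    anch_side hvg w hwp (fun hc => hwp (memval_g w hc))
  have dichP : ∀ j, 1 ≤ j → j ≤ i → ∀ S ∈ prt C j, K ∪ Z ⊆ S ∨ ∀ u ∈ K ∪ Z, u ∉ S := by
    intro j hj1 hj2 S hS
    obtain ⟨S', hS', hps⟩ := anc hj1 hj2 hii hpmem
    by_cases he : S = S'
    · exact Or.inl (he ▸ hps)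
    · refine Or.inr fun u hu hus => ?_
      have hd : Disjoint S S' := (C.parts j).disjoint (mem_coe.2 hS) (mem_coe.2 hS') he
      exact disjoint_left.1 hd hus (hps hu)
  have PresF : ∀ S : Finset V, Contig f S →
      (K ∪ Z ⊆ S ∨ ∀ u ∈ K ∪ Z, u ∉ S) → Contig (Upd f Z vf) S := by
    intro S hS hcase
    rcases hcase with h1 | h1
    · exact contig_upd_sub hZp h1 hS (h1 hxKp) rfl
        (fun u hu hc => hu (h1 (memval_f u hc))) hvf
    · exact contig_upd_disj hZp hS (fun u hu hus => h1 u hu hus) (h1 xK hxKp) rfl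
        (fun s hs hc => h1 s (memval_f s hc) hs) hvf
  have PresG : ∀ S : Finset V, Contig g S →
      (K ∪ Z ⊆ S ∨ ∀ u ∈ K ∪ Z, u ∉ S) → Contig (Upd g Z vg) S := by
    intro S hS hcase
    rcases hcase with h1 | h1
    · exact contig_upd_sub hZp h1 hS (h1 hxKp) rfl
        (fun u hu hc => hu (h1 (memval_g u hc))) hvg
    · exact contig_upd_disj hZp hS (fun u hu hus => h1 u hu hus) (h1 xK hxKp) rfl
        (fun s hs hc => h1 s (memval_g s hc) hs) hvg
  have vK : ∀ u ∈ K, Upd f Z vf u = f u := fun u hu => upd_not_mem (disjoint_left.1 hdKZ hu)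
  have wK : ∀ u ∈ K, Upd g Z vg u = g u := fun u hu => upd_not_mem (disjoint_left.1 hdKZ hu)
  have vKv : ∀ u ∈ K, Upd f Z vf u = f xK := fun u hu => (vK u hu).trans (constf u (hKp hu))
  have wKv : ∀ u ∈ K, Upd g Z vg u = g xK := fun u hu => (wK u hu).trans (constg u (hKp hu))
  have vZv : ∀ u ∈ Z, Upd f Z vf u = vf := fun u hu => upd_mem hu
  have wZv : ∀ u ∈ Z, Upd g Z vg u = vg := fun u hu => upd_mem hu
  have vO : ∀ u, u ∉ K ∪ Z → Upd f Z vf u = f u :=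
    fun u hu => upd_not_mem (fun hc => hu (mem_union_right _ hc))
  have wO : ∀ u, u ∉ K ∪ Z → Upd g Z vg u = g u :=
    fun u hu => upd_not_mem (fun hc => hu (mem_union_right _ hc))
  have hconst' : ∀ S ∈ prt C (i + 1), ∀ u ∈ S, ∀ v ∈ S,
      Upd f Z vf u = Upd f Z vf v ∧ Upd g Z vg u = Upd g Z vg v := by
    intro S hS u hu v hv
    rcases hnewmem S hS with h | h | ⟨hSo, hSp, hSd⟩
    · rw [h] at hu hv
      rw [vKv u hu, vKv v hv, wKv u hu, wKv v hv]; exact ⟨rfl, rfl⟩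
    · rw [h] at hu hv
      rw [vZv u hu, vZv v hv, wZv u hu, wZv v hv]; exact ⟨rfl, rfl⟩
    · rw [vO u (hSd u hu), vO v (hSd v hv), wO u (hSd u hu), wO v (hSd v hv)]
      exact hI.const S hSo u hu v hv
  have hsep' : ∀ S ∈ prt C (i + 1), ∀ T ∈ prt C (i + 1), S ≠ T → ∀ u ∈ S, ∀ v ∈ T,
      Upd f Z vf u ≠ Upd f Z vf v ∧ Upd g Z vg u ≠ Upd g Z vg v := by
    intro S hS T hT hne u hu v hv
    rcases hnewmem S hS with h1 | h1 | ⟨hSo, hSp, hSd⟩ <;>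
      rcases hnewmem T hT with h2 | h2 | ⟨hTo, hTp, hTd⟩
    · exact absurd (h1.trans h2.symm) hne
    · rw [h1] at hu; rw [h2] at hv
      rw [vKv u hu, vZv v hv, wKv u hu, wZv v hv]
      exact ⟨fun hc => hvfα hc.symm, fun hc => hvgα hc.symm⟩
    · rw [h1] at hu
      rw [vKv u hu, vO v (hTd v hv), wKv u hu, wO v (hTd v hv)]
      exact hI.sep (K ∪ Z) hpmem T hTo (fun hc => hTp hc.symm) xK hxKp v hv
    · rw [h1] at hu; rw [h2] at hv
      rw [vZv u hu, vKv v hv, wZv u hu, wKv v hv]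
      exact ⟨hvfα, hvgα⟩
    · exact absurd (h1.trans h2.symm) hne
    · rw [h1] at hu
      rw [vZv u hu, vO v (hTd v hv), wZv u hu, wO v (hTd v hv)]
      exact ⟨fun hc => hfreshf v (hTd v hv) hc.symm, fun hc => hfreshg v (hTd v hv) hc.symm⟩
    · rw [h2] at hv
      rw [vO u (hSd u hu), vKv v hv, wO u (hSd u hu), wKv v hv]
      exact hI.sep S hSo (K ∪ Z) hpmem hSp u hu xK hxKp
    · rw [h2] at hv
      rw [vO u (hSd u hu), vZv v hv, wO u (hSd u hu), wZv v hv]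
      exact ⟨hfreshf u (hSd u hu), hfreshg u (hSd u hu)⟩
    · rw [vO u (hSd u hu), vO v (hTd v hv), wO u (hSd u hu), wO v (hTd v hv)]
      exact hI.sep S hSo T hTo hne u hu v hv
  have partContig : ∀ (h : V → ℚ),
      (∀ S ∈ prt C (i + 1), ∀ u ∈ S, ∀ v ∈ S, h u = h v) →
      (∀ S ∈ prt C (i + 1), ∀ T ∈ prt C (i + 1), S ≠ T → ∀ u ∈ S, ∀ v ∈ T, h u ≠ h v) →
      ∀ S ∈ prt C (i + 1), Contig h S := by
    intro h hco hse S hS u a b ha hb h1 h2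
    obtain ⟨U, hU, hu⟩ := exists_part (C := C) (i + 1) u
    by_cases hUS : U = S
    · exact hUS ▸ hu
    · exfalso
      have he : h a = h b := hco S hS a ha b hb
      have : h u = h a := le_antisymm (he ▸ h2) h1
      exact hse U hU S hS hUS u hu a ha this
  have partF : ∀ S ∈ prt C (i + 1), Contig (Upd f Z vf) S :=
    partContig _ (fun S hS u hu v hv => (hconst' S hS u hu v hv).1)
      (fun S hS T hT hne u hu v hv => (hsep' S hS T hT hne u hu v hv).1)
  have partG : ∀ S ∈ prt C (i + 1), Contig (Upd g Z vg) S :=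
    partContig _ (fun S hS u hu v hv => (hconst' S hS u hu v hv).2)
      (fun S hS T hT hne u hu v hv => (hsep' S hS T hT hne u hu v hv).2)
  have contigP_g : Contig (Upd g Z vg) (K ∪ Z) := by
    intro u a b ha hb h1 h2
    by_cases hup : u ∈ K ∪ Z
    · exact hup
    exfalso
    rw [wO u hup] at h1 h2
    have hune : g u ≠ g xK := fun hc => hup (memval_g u hc)
    have hunv : g u ≠ vg := hfreshg u hup
    have hs := anch_side hvg u hup hune
    have hva : ∀ w ∈ K ∪ Z, Upd g Z vg w = g xK ∨ Upd g Z vg w = vg := by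
      intro w hw
      rcases mem_union.1 hw with hw' | hw'
      · exact Or.inl (wKv w hw')
      · exact Or.inr (wZv w hw')
    rcases hva a ha with hva' | hva' <;> rcases hva b hb with hvb' | hvb' <;>
      rw [hva'] at h1 <;> rw [hvb'] at h2
    · exact hune (le_antisymm h2 h1)
    · have h3 : g xK < g u := lt_of_le_of_ne h1 (fun hc => hune hc.symm)
      have h4 := hs.1.2 h3
      linarith
    · have h3 : g u < g xK := lt_of_le_of_ne h2 hune
      have h4 := hs.2.2 h3
      linarith
    · exact hunv (le_antisymm h2 h1)
  -- crossing cores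
  have coreKZ : (∀ x ∈ K, ∀ y ∈ Z, G.Adj x y) →
      ∀ u ∈ K, ∀ v ∈ Z, (Upd f Z vf u < Upd f Z vf v ↔ Upd g Z vg v < Upd g Z vg u) := by
    intro hc u hu v hv
    rw [vKv u hu, vZv v hv, wKv u hu, wZv v hv]
    exact hKZC hc
  have coreKZA : (∀ x ∈ K, ∀ y ∈ Z, ¬ G.Adj x y) →
      ∀ u ∈ K, ∀ v ∈ Z, (Upd f Z vf u < Upd f Z vf v ↔ Upd g Z vg u < Upd g Z vg v) := by
    intro hc u hu v hv
    rw [vKv u hu, vZv v hv, wKv u hu, wZv v hv]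
    exact hKZA hc
  have coreKO : ∀ U, U ∈ prt C i → U ≠ K ∪ Z → (∀ x ∈ K, ∀ y ∈ U, G.Adj x y) →
      ∀ u ∈ K, ∀ v ∈ U, (Upd f Z vf u < Upd f Z vf v ↔ Upd g Z vg v < Upd g Z vg u) := by
    intro U hUo hUp hc u hu v hv
    have hcp := comp_resolve (htransH U hUo hUp) hKp hKne (part_nonempty hUo) hc
    have hvU : v ∉ K ∪ Z := by
      intro hcm
      exact disjoint_left.1 ((C.parts i).disjoint (mem_coe.2 hUo) (mem_coe.2 hpmem) hUp) hv hcm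
    rw [vK u hu, vO v hvU, wK u hu, wO v hvU]
    exact hI.crossC (K ∪ Z) hpmem U hUo (fun hcq => hUp hcq.symm) hcp u (hKp hu) v hv
  have coreKOA : ∀ U, U ∈ prt C i → U ≠ K ∪ Z → (∀ x ∈ K, ∀ y ∈ U, ¬ G.Adj x y) →
      ∀ u ∈ K, ∀ v ∈ U, (Upd f Z vf u < Upd f Z vf v ↔ Upd g Z vg u < Upd g Z vg v) := by
    intro U hUo hUp hc u hu v hv
    have hcp := anti_resolve (htransH U hUo hUp) hKp hKne (part_nonempty hUo) hc
    have hvU : v ∉ K ∪ Z := by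
      intro hcm
      exact disjoint_left.1 ((C.parts i).disjoint (mem_coe.2 hUo) (mem_coe.2 hpmem) hUp) hv hcm
    rw [vK u hu, vO v hvU, wK u hu, wO v hvU]
    exact hI.crossA (K ∪ Z) hpmem U hUo (fun hcq => hUp hcq.symm) hcp u (hKp hu) v hv
  have coreZO : ∀ U, U ∈ prt C i → U ≠ K ∪ Z → (∀ x ∈ Z, ∀ y ∈ U, G.Adj x y) →
      ∀ u ∈ Z, ∀ v ∈ U, (Upd f Z vf u < Upd f Z vf v ↔ Upd g Z vg v < Upd g Z vg u) := by
    intro U hUo hUp hc u hu v hv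
    have hcp := comp_resolve (htransH U hUo hUp) hZp hZne (part_nonempty hUo) hc
    have hvU : v ∉ K ∪ Z := by
      intro hcm
      exact disjoint_left.1 ((C.parts i).disjoint (mem_coe.2 hUo) (mem_coe.2 hpmem) hUp) hv hcm
    rw [vZv u hu, vO v hvU, wZv u hu, wO v hvU]
    have h1 := hI.crossC (K ∪ Z) hpmem U hUo (fun hcq => hUp hcq.symm) hcp xK hxKp v hv
    have h2 := sidef v hvU
    have h3 := sideg v hvU
    exact ⟨fun h4 => h3.2.2 (h1.1 (h2.1.1 h4)), fun h4 => h2.1.2 (h1.2 (h3.2.1 h4))⟩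
  have coreZOA : ∀ U, U ∈ prt C i → U ≠ K ∪ Z → (∀ x ∈ Z, ∀ y ∈ U, ¬ G.Adj x y) →
      ∀ u ∈ Z, ∀ v ∈ U, (Upd f Z vf u < Upd f Z vf v ↔ Upd g Z vg u < Upd g Z vg v) := by
    intro U hUo hUp hc u hu v hv
    have hcp := anti_resolve (htransH U hUo hUp) hZp hZne (part_nonempty hUo) hc
    have hvU : v ∉ K ∪ Z := by
      intro hcm
      exact disjoint_left.1 ((C.parts i).disjoint (mem_coe.2 hUo) (mem_coe.2 hpmem) hUp) hv hcm
    rw [vZv u hu, vO v hvU, wZv u hu, wO v hvU]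
    have h1 := hI.crossA (K ∪ Z) hpmem U hUo (fun hcq => hUp hcq.symm) hcp xK hxKp v hv
    have h2 := sidef v hvU
    have h3 := sideg v hvU
    exact ⟨fun h4 => h3.1.2 (h1.1 (h2.1.1 h4)), fun h4 => h2.1.2 (h1.2 (h3.1.1 h4))⟩
  have crossC' : ∀ S ∈ prt C (i + 1), ∀ T ∈ prt C (i + 1), S ≠ T →
      (∀ x ∈ S, ∀ y ∈ T, G.Adj x y) → ∀ u ∈ S, ∀ v ∈ T,
      (Upd f Z vf u < Upd f Z vf v ↔ Upd g Z vg v < Upd g Z vg u) := by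
    intro S hS T hT hne hcomp
    rcases hnewmem S hS with h1 | h1 | ⟨hSo, hSp, hSd⟩ <;>
      rcases hnewmem T hT with h2 | h2 | ⟨hTo, hTp, hTd⟩
    · exact absurd (h1.trans h2.symm) hne
    · rw [h1, h2] at hcomp ⊢
      exact coreKZ hcomp
    · rw [h1] at hcomp ⊢
      exact coreKO T hTo hTp hcomp
    · rw [h1, h2] at hcomp ⊢
      exact cross_flipC (fun u hu v hv => hsep' K hK Z hZ hKZ u hu v hv)
        (coreKZ (fun x hx y hy => (hcomp y hy x hx).symm))
    · exact absurd (h1.trans h2.symm) hne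
    · rw [h1] at hcomp ⊢
      exact coreZO T hTo hTp hcomp
    · rw [h2] at hcomp ⊢
      exact cross_flipC
        (fun u hu v hv => hsep' K hK S hS (fun hc => (mem_erase.1 (by
          rw [show prt C i = insert (K ∪ Z) (((prt C (i+1)).erase K).erase Z) from hm] at hSo
          exact (mem_erase.1 ((mem_insert.1 hSo).resolve_left hSp)).2)).1 hc.symm) u hu v hv)
        (coreKO S hSo hSp (fun x hx y hy => (hcomp y hy x hx).symm))
    · rw [h2] at hcomp ⊢
      exact cross_flipC
        (fun u hu v hv => hsep' Z hZ S hS (fun hc => (mem_erase.1 (by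
          rw [show prt C i = insert (K ∪ Z) (((prt C (i+1)).erase K).erase Z) from hm] at hSo
          exact (mem_insert.1 hSo).resolve_left hSp)).1 hc.symm) u hu v hv)
        (coreZO S hSo hSp (fun x hx y hy => (hcomp y hy x hx).symm))
    · intro u hu v hv
      rw [vO u (hSd u hu), vO v (hTd v hv), wO u (hSd u hu), wO v (hTd v hv)]
      exact hI.crossC S hSo T hTo hne hcomp u hu v hv
  have crossA' : ∀ S ∈ prt C (i + 1), ∀ T ∈ prt C (i + 1), S ≠ T →
      (∀ x ∈ S, ∀ y ∈ T, ¬ G.Adj x y) → ∀ u ∈ S, ∀ v ∈ T,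
      (Upd f Z vf u < Upd f Z vf v ↔ Upd g Z vg u < Upd g Z vg v) := by
    intro S hS T hT hne hcomp
    rcases hnewmem S hS with h1 | h1 | ⟨hSo, hSp, hSd⟩ <;>
      rcases hnewmem T hT with h2 | h2 | ⟨hTo, hTp, hTd⟩
    · exact absurd (h1.trans h2.symm) hne
    · rw [h1, h2] at hcomp ⊢
      exact coreKZA hcomp
    · rw [h1] at hcomp ⊢
      exact coreKOA T hTo hTp hcomp
    · rw [h1, h2] at hcomp ⊢
      exact cross_flipA (fun u hu v hv => hsep' K hK Z hZ hKZ u hu v hv)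
        (coreKZA (fun x hx y hy ha => hcomp y hy x hx ha.symm))
    · exact absurd (h1.trans h2.symm) hne
    · rw [h1] at hcomp ⊢
      exact coreZOA T hTo hTp hcomp
    · rw [h2] at hcomp ⊢
      exact cross_flipA
        (fun u hu v hv => hsep' K hK S hS (fun hc => (mem_erase.1 (by
          rw [show prt C i = insert (K ∪ Z) (((prt C (i+1)).erase K).erase Z) from hm] at hSo
          exact (mem_erase.1 ((mem_insert.1 hSo).resolve_left hSp)).2)).1 hc.symm) u hu v hv)
        (coreKOA S hSo hSp (fun x hx y hy ha => hcomp y hy x hx ha.symm))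
    · rw [h2] at hcomp ⊢
      exact cross_flipA
        (fun u hu v hv => hsep' Z hZ S hS (fun hc => (mem_erase.1 (by
          rw [show prt C i = insert (K ∪ Z) (((prt C (i+1)).erase K).erase Z) from hm] at hSo
          exact (mem_insert.1 hSo).resolve_left hSp)).1 hc.symm) u hu v hv)
        (coreZOA S hSo hSp (fun x hx y hy ha => hcomp y hy x hx ha.symm))
    · intro u hu v hv
      rw [vO u (hSd u hu), vO v (hTd v hv), wO u (hSd u hu), wO v (hTd v hv)]
      exact hI.crossA S hSo T hTo hne hcomp u hu v hv
  have ancP_of_K : ∀ j, 1 ≤ j → j ≤ i → ∀ S ∈ prt C j, K ⊆ S → K ∪ Z ⊆ S := by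
    intro j hj1 hj2 S hS hKS
    obtain ⟨S', hS', hps⟩ := anc hj1 hj2 hii hpmem
    have he : S = S' := subset_part_unique hKne hS hS' hKS (subset_trans hKp hps)
    exact he ▸ hps
  have ancP_of_Z : ∀ j, 1 ≤ j → j ≤ i → ∀ S ∈ prt C j, Z ⊆ S → K ∪ Z ⊆ S := by
    intro j hj1 hj2 S hS hZS
    obtain ⟨S', hS', hps⟩ := anc hj1 hj2 hii hpmem
    have he : S = S' := subset_part_unique hZne hS hS' hZS (subset_trans hZp hps)
    exact he ▸ hps
  have eq_of_sub_new : ∀ A S, A ∈ prt C (i + 1) → S ∈ prt C (i + 1) → A ⊆ S → S = A := by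
    intro A S hA hS hsub
    obtain ⟨a, ha⟩ := part_nonempty hA
    exact part_eq_of_mem hS hA (hsub ha) ha
  have newred : ∀ A B, Red G C (i + 1) A B →
      (A = K ∧ B = Z) ∨ (A = Z ∧ B = K) ∨
      (Red G C i A B ∧ A ≠ K ∪ Z ∧ B ≠ K ∪ Z ∧
        (∀ u ∈ A, u ∉ K ∪ Z) ∧ (∀ u ∈ B, u ∉ K ∪ Z)) := by
    intro A B hr
    obtain ⟨hA, hB, hAB, hnh⟩ := hr
    rcases hnewmem A hA with hA1 | hA1 | ⟨hAo, hAp, hAd⟩ <;>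
      rcases hnewmem B hB with hB1 | hB1 | ⟨hBo, hBp, hBd⟩
    · exact absurd (hA1.trans hB1.symm) hAB
    · exact Or.inl ⟨hA1, hB1⟩
    · exact absurd (homog_mono (hA1 ▸ hKp) subset_rfl
        (htransH B hBo (fun hc => hBp hc))) hnh
    · exact Or.inr (Or.inl ⟨hA1, hB1⟩)
    · exact absurd (hA1.trans hB1.symm) hAB
    · exact absurd (homog_mono (hA1 ▸ hZp) subset_rfl
        (htransH B hBo (fun hc => hBp hc))) hnh
    · exact absurd (homog_mono subset_rfl (hB1 ▸ hKp)
        (homog_symm (htransH A hAo (fun hc => hAp hc)))) hnh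
    · exact absurd (homog_mono subset_rfl (hB1 ▸ hZp)
        (homog_symm (htransH A hAo (fun hc => hAp hc)))) hnh
    · exact Or.inr (Or.inr ⟨⟨hAo, hBo, hAB, hnh⟩, hAp, hBp, hAd, hBd⟩)
  have hist' : ∀ j, 1 ≤ j → j ≤ i + 1 → ∀ S ∈ prt C j, NoRed G C j S →
      Contig (Upd f Z vf) S ∧ Contig (Upd g Z vg) S := by
    intro j hj1 hj2 S hS hnr'
    rcases Nat.lt_or_ge j (i + 1) with hj3 | hj3
    · have hj2' : j ≤ i := by omega
      have hold := hI.hist j hj1 hj2' S hS hnr'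
      have hdi := dichP j hj1 hj2' S hS
      exact ⟨PresF S hold.1 hdi, PresG S hold.2 hdi⟩
    · have hj4 : j = i + 1 := by omega
      rw [hj4] at hS
      exact ⟨partF S hS, partG S hS⟩
  have presDich : ∀ j, 1 ≤ j → j ≤ i → ∀ S T, Red G C j S T →
      (K ∪ Z ⊆ S ∪ T ∨ ∀ u ∈ K ∪ Z, u ∉ S ∪ T) := by
    intro j hj1 hj2 S T hST
    rcases dichP j hj1 hj2 S hST.1 with h | h
    · exact Or.inl (h.trans subset_union_left)
    · rcases dichP j hj1 hj2 T hST.2.1 with h' | h'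
      · exact Or.inl (h'.trans subset_union_right)
      · refine Or.inr fun u hu hc => ?_
        rcases mem_union.1 hc with hm' | hm'
        · exact h u hu hm'
        · exact h' u hu hm'
  have hpair' : ∀ j, 1 ≤ j → j ≤ i + 1 → ∀ S T, Red G C j S T →
      (Contig (Upd f Z vf) (S ∪ T) ∧ Contig (Upd g Z vg) S ∧ Contig (Upd g Z vg) T) ∨
      (Contig (Upd g Z vg) (S ∪ T) ∧ Contig (Upd f Z vf) S ∧ Contig (Upd f Z vf) T) := by
    intro j hj1 hj2 S T hST
    rcases Nat.lt_or_ge j (i + 1) with hj3 | hj3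
    · have hj2' : j ≤ i := by omega
      rcases hI.hpair j hj1 hj2' S T hST with ⟨h1, h2, h3⟩ | ⟨h1, h2, h3⟩
      · exact Or.inl ⟨PresF _ h1 (presDich j hj1 hj2' S T hST),
          PresG _ h2 (dichP j hj1 hj2' S hST.1), PresG _ h3 (dichP j hj1 hj2' T hST.2.1)⟩
      · exact Or.inr ⟨PresG _ h1 (presDich j hj1 hj2' S T hST),
          PresF _ h2 (dichP j hj1 hj2' S hST.1), PresF _ h3 (dichP j hj1 hj2' T hST.2.1)⟩
    · have hj4 : j = i + 1 := by omega
      rw [hj4] at hST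
      rcases newred S T hST with ⟨h1, h2⟩ | ⟨h1, h2⟩ | ⟨hro, hSp, hTp, hSd, hTd⟩
      · refine Or.inr ⟨?_, partF S hST.1, partF T hST.2.1⟩
        rw [h1, h2]; exact contigP_g
      · refine Or.inr ⟨?_, partF S hST.1, partF T hST.2.1⟩
        rw [h1, h2, union_comm]; exact contigP_g
      · have hpU : ∀ u ∈ K ∪ Z, u ∉ S ∪ T := fun u hu hc => by
          rcases mem_union.1 hc with h | h
          · exact hSd u h hu
          · exact hTd u h hu
        rcases hI.hpair i hi1 le_rfl S T hro with ⟨h1, h2, h3⟩ | ⟨h1, h2, h3⟩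
        · exact Or.inl ⟨PresF _ h1 (Or.inr hpU),
            PresG _ h2 (Or.inr fun u hu hus => hSd u hus hu),
            PresG _ h3 (Or.inr fun u hu hut => hTd u hut hu)⟩
        · exact Or.inr ⟨PresG _ h1 (Or.inr hpU),
            PresF _ h2 (Or.inr fun u hu hus => hSd u hus hu),
            PresF _ h3 (Or.inr fun u hu hut => hTd u hut hu)⟩
  have cur' : ∀ A B, Red G C (i + 1) A B →
      ∃ c o : V → ℚ, ((c = Upd f Z vf ∧ o = Upd g Z vg) ∨ (c = Upd g Z vg ∧ o = Upd f Z vf)) ∧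
        Contig c (A ∪ B) ∧
        ∀ j, 1 ≤ j → j ≤ i + 1 → ∀ S T, Red G C j S T → A ⊆ S → B ⊆ T →
          Contig c (S ∪ T) ∧ Contig o S ∧ Contig o T := by
    intro A B hr
    rcases newred A B hr with ⟨h1, h2⟩ | ⟨h1, h2⟩ | ⟨hro, hAp, hBp, hAd, hBd⟩
    · refine ⟨Upd g Z vg, Upd f Z vf, Or.inr ⟨rfl, rfl⟩, by rw [h1, h2]; exact contigP_g, ?_⟩
      intro j hj1 hj2 S T hST hAS hBT
      rcases Nat.lt_or_ge j (i + 1) with hj3 | hj3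
      · exfalso
        have hj2' : j ≤ i := by omega
        have hS1 : K ∪ Z ⊆ S := ancP_of_K j hj1 hj2' S hST.1 (h1 ▸ hAS)
        have hT1 : K ∪ Z ⊆ T := ancP_of_Z j hj1 hj2' T hST.2.1 (h2 ▸ hBT)
        exact hST.2.2.1 (subset_part_unique ⟨xK, hxKp⟩ hST.1 hST.2.1 hS1 hT1)
      · have hj4 : j = i + 1 := by omega
        rw [hj4] at hST
        have hSA : S = A := eq_of_sub_new A S (h1 ▸ hK) hST.1 hAS
        have hTB : T = B := eq_of_sub_new B T (h2 ▸ hZ) hST.2.1 hBT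
        refine ⟨by rw [hSA, hTB, h1, h2]; exact contigP_g, partF S hST.1, partF T hST.2.1⟩
    · refine ⟨Upd g Z vg, Upd f Z vf, Or.inr ⟨rfl, rfl⟩,
        by rw [h1, h2, union_comm]; exact contigP_g, ?_⟩
      intro j hj1 hj2 S T hST hAS hBT
      rcases Nat.lt_or_ge j (i + 1) with hj3 | hj3
      · exfalso
        have hj2' : j ≤ i := by omega
        have hS1 : K ∪ Z ⊆ S := ancP_of_Z j hj1 hj2' S hST.1 (h1 ▸ hAS)
        have hT1 : K ∪ Z ⊆ T := ancP_of_K j hj1 hj2' T hST.2.1 (h2 ▸ hBT)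
        exact hST.2.2.1 (subset_part_unique ⟨xK, hxKp⟩ hST.1 hST.2.1 hS1 hT1)
      · have hj4 : j = i + 1 := by omega
        rw [hj4] at hST
        have hSA : S = A := eq_of_sub_new A S (h1 ▸ hZ) hST.1 hAS
        have hTB : T = B := eq_of_sub_new B T (h2 ▸ hK) hST.2.1 hBT
        refine ⟨by rw [hSA, hTB, h1, h2, union_comm]; exact contigP_g,
          partF S hST.1, partF T hST.2.1⟩
    · obtain ⟨c, o, hco, hadjAB, hallAB⟩ := hI.cur A B hro
      have hpAB : ∀ u ∈ K ∪ Z, u ∉ A ∪ B := fun u hu hc => by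
        rcases mem_union.1 hc with h | h
        · exact hAd u h hu
        · exact hBd u h hu
      rcases hco with ⟨hcf, hog⟩ | ⟨hcg, hof⟩
      · rw [hcf] at hadjAB; rw [hcf, hog] at hallAB
        refine ⟨Upd f Z vf, Upd g Z vg, Or.inl ⟨rfl, rfl⟩,
          PresF _ hadjAB (Or.inr hpAB), ?_⟩
        intro j hj1 hj2 S T hST hAS hBT
        rcases Nat.lt_or_ge j (i + 1) with hj3 | hj3
        · have hj2' : j ≤ i := by omega
          obtain ⟨c1, c2, c3⟩ := hallAB j hj1 hj2' S T hST hAS hBT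
          exact ⟨PresF _ c1 (presDich j hj1 hj2' S T hST),
            PresG _ c2 (dichP j hj1 hj2' S hST.1), PresG _ c3 (dichP j hj1 hj2' T hST.2.1)⟩
        · have hj4 : j = i + 1 := by omega
          rw [hj4] at hST
          have hSA : S = A := eq_of_sub_new A S (mem_new_of_old A hro.1 hAp).1 hST.1 hAS
          have hTB : T = B := eq_of_sub_new B T (mem_new_of_old B hro.2.1 hBp).1 hST.2.1 hBT
          refine ⟨by rw [hSA, hTB]; exact PresF _ hadjAB (Or.inr hpAB),
            partG S hST.1, partG T hST.2.1⟩
      · rw [hcg] at hadjAB; rw [hcg, hof] at hallAB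
        refine ⟨Upd g Z vg, Upd f Z vf, Or.inr ⟨rfl, rfl⟩,
          PresG _ hadjAB (Or.inr hpAB), ?_⟩
        intro j hj1 hj2 S T hST hAS hBT
        rcases Nat.lt_or_ge j (i + 1) with hj3 | hj3
        · have hj2' : j ≤ i := by omega
          obtain ⟨c1, c2, c3⟩ := hallAB j hj1 hj2' S T hST hAS hBT
          exact ⟨PresG _ c1 (presDich j hj1 hj2' S T hST),
            PresF _ c2 (dichP j hj1 hj2' S hST.1), PresF _ c3 (dichP j hj1 hj2' T hST.2.1)⟩
        · have hj4 : j = i + 1 := by omega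
          rw [hj4] at hST
          have hSA : S = A := eq_of_sub_new A S (mem_new_of_old A hro.1 hAp).1 hST.1 hAS
          have hTB : T = B := eq_of_sub_new B T (mem_new_of_old B hro.2.1 hBp).1 hST.2.1 hBT
          refine ⟨by rw [hSA, hTB]; exact PresG _ hadjAB (Or.inr hpAB),
            partF S hST.1, partF T hST.2.1⟩
  have uniq' : ∀ j, 1 ≤ j → j ≤ i + 1 → ∀ S T, Red G C j S T →
      ∀ A B, Red G C (i + 1) A B → A ⊆ S → B ⊆ T →
      ∀ A' B', Red G C (i + 1) A' B' → A' ⊆ S → B' ⊆ T → A = A' ∧ B = B' := by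
    intro j hj1 hj2 S T hST A B hr hAS hBT A' B' hr' hAS' hBT'
    rcases Nat.lt_or_ge j (i + 1) with hj3 | hj3
    · have hj2' : j ≤ i := by omega
      have assoc : ∀ A B, Red G C (i + 1) A B → A ⊆ S → B ⊆ T → Red G C i A B := by
        intro A B hr hAS hBT
        rcases newred A B hr with ⟨h1, h2⟩ | ⟨h1, h2⟩ | ⟨hro, -, -, -, -⟩
        · exfalso
          have hS1 : K ∪ Z ⊆ S := ancP_of_K j hj1 hj2' S hST.1 (h1 ▸ hAS)
          have hT1 : K ∪ Z ⊆ T := ancP_of_Z j hj1 hj2' T hST.2.1 (h2 ▸ hBT)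
          exact hST.2.2.1 (subset_part_unique ⟨xK, hxKp⟩ hST.1 hST.2.1 hS1 hT1)
        · exfalso
          have hS1 : K ∪ Z ⊆ S := ancP_of_Z j hj1 hj2' S hST.1 (h1 ▸ hAS)
          have hT1 : K ∪ Z ⊆ T := ancP_of_K j hj1 hj2' T hST.2.1 (h2 ▸ hBT)
          exact hST.2.2.1 (subset_part_unique ⟨xK, hxKp⟩ hST.1 hST.2.1 hS1 hT1)
        · exact hro
      exact hI.uniq j hj1 hj2' S T hST A B (assoc A B hr hAS hBT) hAS hBT
        A' B' (assoc A' B' hr' hAS' hBT') hAS' hBT'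
    · have hj4 : j = i + 1 := by omega
      rw [hj4] at hST
      have h1 : S = A := eq_of_sub_new A S hr.1 hST.1 hAS
      have h2 : T = B := eq_of_sub_new B T hr.2.1 hST.2.1 hBT
      have h3 : S = A' := eq_of_sub_new A' S hr'.1 hST.1 hAS'
      have h4 : T = B' := eq_of_sub_new B' T hr'.2.1 hST.2.1 hBT'
      exact ⟨h1.symm.trans h3, h2.symm.trans h4⟩
  exact ⟨hconst', hsep', crossC', crossA', hist', hpair', cur', uniq'⟩

end TwwPerm2

namespace TwwPerm2
open TwwPerm
variable {V : Type*} [Fintype V] [DecidableEq V] {G : SimpleGraph V} {C : ContractionSeq V}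

set_option maxHeartbeats 1000000 in
/-- Choose the placement of the moving child `Z` and apply `build`. -/
lemma stepRcore (hC : IsDSeq G C 1) {i : ℕ} (hi1 : 1 ≤ i) (hi2 : i < Fintype.card V)
    {f g : V → ℚ} (hI : Inv G C i f g)
    {K Z q : Finset V} (hK : K ∈ prt C (i + 1)) (hZ : Z ∈ prt C (i + 1)) (hKZ : K ≠ Z)
    (hm : prt C i = insert (K ∪ Z) (((prt C (i + 1)).erase K).erase Z))
    (hq : Red G C i (K ∪ Z) q)
    {xK xq : V} (hxK : xK ∈ K) (hxq : xq ∈ q)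
    (hadj : Contig f (K ∪ Z ∪ q))
    (hall : ∀ j, 1 ≤ j → j ≤ i → ∀ S T, Red G C j S T → K ∪ Z ⊆ S → q ⊆ T →
      Contig f (S ∪ T) ∧ Contig g S ∧ Contig g T)
    (hZq : Homogeneous G Z q)
    (hαβ : f xK < f xq)
    (hKqC' : (∀ x ∈ K, ∀ y ∈ q, G.Adj x y) → g xq < g xK)
    (hKqA' : (∀ x ∈ K, ∀ y ∈ q, ¬ G.Adj x y) → g xK < g xq) :
    ∃ f' g' : V → ℚ, Inv G C (i + 1) f' g' := by
  classical
  have hpmem : K ∪ Z ∈ prt C i := by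
    show _ ∈ (C.parts i).parts; rw [show (C.parts i).parts = prt C i from rfl, hm]
    exact mem_insert_self _ _
  have hxKp : xK ∈ K ∪ Z := mem_union_left _ hxK
  have hqdisj : xq ∉ K ∪ Z := by
    intro hc
    have hd : Disjoint (K ∪ Z) q :=
      (C.parts i).disjoint (mem_coe.2 hpmem) (mem_coe.2 hq.2.1) hq.2.2.1
    exact disjoint_left.1 hd hc hxq
  have hgne : g xq ≠ g xK :=
    (hI.sep q hq.2.1 (K ∪ Z) hpmem (fun hc => hq.2.2.1 hc.symm) xq hxq xK hxKp).2
  have hZne : Z.Nonempty := part_nonempty hZ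
  have hqne : q.Nonempty := part_nonempty (hq.2.1)
  have hKne : K.Nonempty := part_nonempty hK
  -- choose vf according to the type of (Z, q)
  have hvfx : ∃ vf, (AnchBelow f (K ∪ Z) (f xK) vf ∨ AnchAbove f (K ∪ Z) (f xq) vf) ∧
      (∀ vg, ((vg < g xq ↔ g xK < g xq) ∧ (g xq < vg ↔ g xq < g xK)) →
        ((∀ x ∈ Z, ∀ y ∈ q, G.Adj x y) → (vf < f xq ↔ g xq < vg)) ∧
        ((∀ x ∈ Z, ∀ y ∈ q, ¬ G.Adj x y) → (vf < f xq ↔ vg < g xq))) := by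
    rcases hZq with hZc | hZa
    · by_cases hP : g xq < g xK
      · obtain ⟨vf, hvf⟩ := exists_anchBelow f (K ∪ Z) (f xK)
        refine ⟨vf, Or.inl hvf, fun vg hside => ⟨fun _ => ?_, fun hcc => ?_⟩⟩
        · exact iff_of_true (by linarith [hvf.1]) (hside.2.2 hP)
        · obtain ⟨z, hz⟩ := hZne
          obtain ⟨y, hy⟩ := hqne
          exact absurd (hZc z hz y hy) (hcc z hz y hy)
      · obtain ⟨vf, hvf⟩ := exists_anchAbove f (K ∪ Z) (f xq)
        refine ⟨vf, Or.inr hvf, fun vg hside => ⟨fun _ => ?_, fun hcc => ?_⟩⟩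
        · exact iff_of_false (by linarith [hvf.1]) (fun hc => hP (hside.2.1 hc))
        · obtain ⟨z, hz⟩ := hZne
          obtain ⟨y, hy⟩ := hqne
          exact absurd (hZc z hz y hy) (hcc z hz y hy)
    · by_cases hP : g xq < g xK
      · obtain ⟨vf, hvf⟩ := exists_anchAbove f (K ∪ Z) (f xq)
        refine ⟨vf, Or.inr hvf, fun vg hside => ⟨fun hcc => ?_, fun _ => ?_⟩⟩
        · obtain ⟨z, hz⟩ := hZne
          obtain ⟨y, hy⟩ := hqne
          exact absurd (hcc z hz y hy) (hZa z hz y hy)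
        · refine iff_of_false (by linarith [hvf.1]) (fun hc => ?_)
          have := hside.1.1 hc
          exact absurd hP (by linarith)
      · obtain ⟨vf, hvf⟩ := exists_anchBelow f (K ∪ Z) (f xK)
        refine ⟨vf, Or.inl hvf, fun vg hside => ⟨fun hcc => ?_, fun _ => ?_⟩⟩
        · obtain ⟨z, hz⟩ := hZne
          obtain ⟨y, hy⟩ := hqne
          exact absurd (hcc z hz y hy) (hZa z hz y hy)
        · refine iff_of_true (by linarith [hvf.1]) (hside.1.2 ?_)
          rcases lt_trichotomy (g xK) (g xq) with h | h | h
          · exact h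
          · exact absurd h.symm hgne
          · exact absurd h hP
  obtain ⟨vf, hvf, hvfZq⟩ := hvfx
  -- choose vg according to the type of (K, Z) and the side of vf
  have hLHS : (f xK < vf) ∨ ¬ (f xK < vf) := em _
  have hvgx : ∃ vg, Anch g (K ∪ Z) (g xK) vg ∧
      ((∀ x ∈ K, ∀ y ∈ Z, G.Adj x y) → (f xK < vf ↔ vg < g xK)) ∧
      ((∀ x ∈ K, ∀ y ∈ Z, ¬ G.Adj x y) → (f xK < vf ↔ g xK < vg)) := by
    by_cases hKZc : ∀ x ∈ K, ∀ y ∈ Z, G.Adj x y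
    · have hKZa : ¬ ∀ x ∈ K, ∀ y ∈ Z, ¬ G.Adj x y := by
        intro hcc
        obtain ⟨z, hz⟩ := hZne
        obtain ⟨y, hy⟩ := hKne
        exact hcc y hy z hz (hKZc y hy z hz)
      by_cases hL : f xK < vf
      · obtain ⟨vg, hvg⟩ := exists_anchBelow g (K ∪ Z) (g xK)
        exact ⟨vg, Or.inr hvg, fun _ => iff_of_true hL hvg.1, fun hcc => absurd hcc hKZa⟩
      · obtain ⟨vg, hvg⟩ := exists_anchAbove g (K ∪ Z) (g xK)
        exact ⟨vg, Or.inl hvg, fun _ => iff_of_false hL (by linarith [hvg.1]),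
          fun hcc => absurd hcc hKZa⟩
    · by_cases hKZa : ∀ x ∈ K, ∀ y ∈ Z, ¬ G.Adj x y
      · by_cases hL : f xK < vf
        · obtain ⟨vg, hvg⟩ := exists_anchAbove g (K ∪ Z) (g xK)
          exact ⟨vg, Or.inl hvg, fun hcc => absurd hcc hKZc, fun _ => iff_of_true hL hvg.1⟩
        · obtain ⟨vg, hvg⟩ := exists_anchBelow g (K ∪ Z) (g xK)
          exact ⟨vg, Or.inr hvg, fun hcc => absurd hcc hKZc,
            fun _ => iff_of_false hL (by linarith [hvg.1])⟩
      · obtain ⟨vg, hvg⟩ := exists_anchAbove g (K ∪ Z) (g xK)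
        exact ⟨vg, Or.inl hvg, fun hcc => absurd hcc hKZc, fun hcc => absurd hcc hKZa⟩
  obtain ⟨vg, hvg, hKZC, hKZA⟩ := hvgx
  have hside := anch_side hvg xq hqdisj hgne
  obtain ⟨hZqC, hZqA⟩ := hvfZq vg hside
  exact ⟨Upd f Z vf, Upd g Z vg,
    build hC hi1 hi2 hI hK hZ hKZ hm hq hxK hxq hadj hall hZq hαβ hvf hvg
      (fun hcc => iff_of_true hαβ (hKqC' hcc))
      (fun hcc => iff_of_true hαβ (hKqA' hcc)) hZqC hZqA hKZC hKZA⟩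

end TwwPerm2

namespace TwwPerm2
open TwwPerm
variable {V : Type*} [Fintype V] [DecidableEq V] {G : SimpleGraph V} {C : ContractionSeq V}

set_option maxHeartbeats 1000000 in
/-- Choose which child of the split red part stays put, and conclude. -/
lemma stepR (hC : IsDSeq G C 1) {i : ℕ} (hi1 : 1 ≤ i) (hi2 : i < Fintype.card V)
    {f g : V → ℚ} (hI : Inv G C i f g)
    {X Y q : Finset V} (hX : X ∈ prt C (i + 1)) (hY : Y ∈ prt C (i + 1)) (hXY : X ≠ Y)
    (hm : prt C i = insert (X ∪ Y) (((prt C (i + 1)).erase X).erase Y))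
    (hq : Red G C i (X ∪ Y) q)
    {xX xY xq : V} (hxX : xX ∈ X) (hxY : xY ∈ Y) (hxq : xq ∈ q)
    (hadj : Contig f (X ∪ Y ∪ q))
    (hall : ∀ j, 1 ≤ j → j ≤ i → ∀ S T, Red G C j S T → X ∪ Y ⊆ S → q ⊆ T →
      Contig f (S ∪ T) ∧ Contig g S ∧ Contig g T)
    (hαβ : f xX < f xq) :
    ∃ f' g' : V → ℚ, Inv G C (i + 1) f' g' := by
  classical
  have hii' : i + 1 ≤ Fintype.card V := hi2
  have hpmem : X ∪ Y ∈ prt C i := by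
    show _ ∈ (C.parts i).parts; rw [show (C.parts i).parts = prt C i from rfl, hm]
    exact mem_insert_self _ _
  have hqE : q ∈ prt C (i + 1) ∧ q ≠ X ∧ q ≠ Y := by
    have h1 : q ∈ insert (X ∪ Y) (((prt C (i + 1)).erase X).erase Y) := by
      rw [← hm]; exact hq.2.1
    rcases mem_insert.1 h1 with h2 | h2
    · exact absurd h2.symm hq.2.2.1
    · have h3 := mem_erase.1 h2
      have h4 := mem_erase.1 h3.2
      exact ⟨h4.2, h4.1, h3.1⟩
  -- facts about constancy of f, g on the parts
  have constfp : ∀ u ∈ X ∪ Y, f u = f xX ∧ g u = g xX :=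
    fun u hu => hI.const _ hpmem u hu xX (mem_union_left _ hxX)
  -- the mirrored versions of the hypotheses, for using (Y, X) in place of (X, Y)
  have hm' : prt C i = insert (Y ∪ X) (((prt C (i + 1)).erase Y).erase X) := by
    rw [hm, union_comm, Finset.erase_right_comm]
  have hq' : Red G C i (Y ∪ X) q := by rwa [union_comm]
  have hadj' : Contig f (Y ∪ X ∪ q) := by rwa [union_comm Y X]
  have hall' : ∀ j, 1 ≤ j → j ≤ i → ∀ S T, Red G C j S T → Y ∪ X ⊆ S → q ⊆ T →
      Contig f (S ∪ T) ∧ Contig g S ∧ Contig g T := by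
    intro j hj1 hj2 S T hST hps hqt
    exact hall j hj1 hj2 S T hST (by rwa [union_comm Y X] at hps) hqt
  have hαβ' : f xY < f xq := by
    rw [(constfp xY (mem_union_right _ hxY)).1]; exact hαβ
  have hgY : g xY = g xX := (constfp xY (mem_union_right _ hxY)).2
  -- a red child pair with q forces homogeneity of the other child
  have huniqX : ¬ Homogeneous G X q → Homogeneous G Y q := by
    intro h1
    by_contra h2
    have r1 : Red G C (i + 1) q X :=
      red_symm ⟨hX, hqE.1, fun hc => hqE.2.1 hc.symm, h1⟩
    have r2 : Red G C (i + 1) q Y :=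
      red_symm ⟨hY, hqE.1, fun hc => hqE.2.2 hc.symm, h2⟩
    exact hXY (red_unique hC (by omega) hii' r1 r2)
  have huniqY : ¬ Homogeneous G Y q → Homogeneous G X q := by
    intro h1
    by_contra h2
    have r1 : Red G C (i + 1) q X :=
      red_symm ⟨hX, hqE.1, fun hc => hqE.2.1 hc.symm, h2⟩
    have r2 : Red G C (i + 1) q Y :=
      red_symm ⟨hY, hqE.1, fun hc => hqE.2.2 hc.symm, h1⟩
    exact hXY (red_unique hC (by omega) hii' r1 r2)
  by_cases hXq : Homogeneous G X q
  · by_cases hYq : Homogeneous G Y q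
    · -- both children homogeneous to q; their types differ
      by_cases hXc : ∀ x ∈ X, ∀ y ∈ q, G.Adj x y
      · have hYa : ∀ x ∈ Y, ∀ y ∈ q, ¬ G.Adj x y := by
          rcases hYq with h | h
          · exfalso
            apply hq.2.2.2
            left
            intro x hx y hy
            rcases mem_union.1 hx with h' | h'
            · exact hXc x h' y hy
            · exact h x h' y hy
          · exact h
        by_cases hP : g xq < g xX
        · -- K := X
          exact stepRcore hC hi1 hi2 hI hX hY hXY hm hq hxX hxq hadj hall hYq hαβ
            (fun _ => hP) (fun hcc => by
              obtain ⟨x, hx⟩ := part_nonempty hX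
              obtain ⟨y, hy⟩ := part_nonempty hq.2.1
              exact absurd (hXc x hx y hy) (hcc x hx y hy))
        · -- K := Y
          refine stepRcore hC hi1 hi2 hI hY hX hXY.symm hm' hq' hxY hxq hadj' hall' hXq hαβ'
            (fun hcc => by
              obtain ⟨x, hx⟩ := part_nonempty hY
              obtain ⟨y, hy⟩ := part_nonempty hq.2.1
              exact absurd (hcc x hx y hy) (hYa x hx y hy))
            (fun _ => by
              rw [hgY]
              rcases lt_trichotomy (g xX) (g xq) with h | h | h
              · exact h
              · exact absurd h.symm (by
                  have := (hI.sep q hq.2.1 (X ∪ Y) hpmem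
                    (fun hc => hq.2.2.1 hc.symm) xq hxq xX (mem_union_left _ hxX)).2
                  exact this)
              · exact absurd h hP)
      · have hXa : ∀ x ∈ X, ∀ y ∈ q, ¬ G.Adj x y := by
          rcases hXq with h | h
          · exact absurd h hXc
          · exact h
        have hYc : ∀ x ∈ Y, ∀ y ∈ q, G.Adj x y := by
          rcases hYq with h | h
          · exact h
          · exfalso
            apply hq.2.2.2
            right
            intro x hx y hy
            rcases mem_union.1 hx with h' | h'
            · exact hXa x h' y hy
            · exact h x h' y hy
        by_cases hP : g xq < g xX
        · -- K := Y (complete to q, matches crossing)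
          refine stepRcore hC hi1 hi2 hI hY hX hXY.symm hm' hq' hxY hxq hadj' hall' hXq hαβ'
            (fun _ => by rw [hgY]; exact hP)
            (fun hcc => by
              obtain ⟨x, hx⟩ := part_nonempty hY
              obtain ⟨y, hy⟩ := part_nonempty hq.2.1
              exact absurd (hYc x hx y hy) (hcc x hx y hy))
        · -- K := X (anticomplete, aligned)
          refine stepRcore hC hi1 hi2 hI hX hY hXY hm hq hxX hxq hadj hall hYq hαβ
            (fun hcc => by
              obtain ⟨x, hx⟩ := part_nonempty hX
              obtain ⟨y, hy⟩ := part_nonempty hq.2.1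
              exact absurd (hcc x hx y hy) (hXa x hx y hy))
            (fun _ => by
              rcases lt_trichotomy (g xX) (g xq) with h | h | h
              · exact h
              · exact absurd h.symm (hI.sep q hq.2.1 (X ∪ Y) hpmem
                  (fun hc => hq.2.2.1 hc.symm) xq hxq xX (mem_union_left _ hxX)).2
              · exact absurd h hP)
    · -- Y red to q: K := Y, Z := X
      have hXq' : Homogeneous G X q := huniqY hYq
      exact stepRcore hC hi1 hi2 hI hY hX hXY.symm hm' hq' hxY hxq hadj' hall' hXq' hαβ'
        (fun hcc => absurd (Or.inl hcc) hYq) (fun hcc => absurd (Or.inr hcc) hYq)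
  · -- X red to q: K := X, Z := Y
    have hYq' : Homogeneous G Y q := huniqX hXq
    exact stepRcore hC hi1 hi2 hI hX hY hXY hm hq hxX hxq hadj hall hYq' hαβ
      (fun hcc => absurd (Or.inl hcc) hXq) (fun hcc => absurd (Or.inr hcc) hXq)

end TwwPerm2

namespace TwwPerm2
open TwwPerm
variable {V : Type*} [Fintype V] [DecidableEq V] {G : SimpleGraph V} {C : ContractionSeq V}

/-- One full refinement step. -/
lemma step (hC : IsDSeq G C 1) {i : ℕ} (hi1 : 1 ≤ i) (hi2 : i < Fintype.card V)
    {f g : V → ℚ} (hI : Inv G C i f g) : ∃ f' g' : V → ℚ, Inv G C (i + 1) f' g' := by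
  classical
  obtain ⟨X, hX, Y, hY, hXY, hm0⟩ := C.merge i hi1 hi2
  have hm : prt C i = insert (X ∪ Y) (((prt C (i + 1)).erase X).erase Y) := hm0
  have hpmem : X ∪ Y ∈ prt C i := by
    show _ ∈ (C.parts i).parts; rw [show (C.parts i).parts = prt C i from rfl, hm]
    exact mem_insert_self _ _
  obtain ⟨xX, hxX⟩ := part_nonempty (C := C) (i := i + 1) hX
  obtain ⟨xY, hxY⟩ := part_nonempty (C := C) (i := i + 1) hY
  by_cases hnr : NoRed G C i (X ∪ Y)
  · by_cases hc : ∀ x ∈ X, ∀ y ∈ Y, G.Adj x y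
    · obtain ⟨vf, hvf⟩ := exists_anchAbove f (X ∪ Y) (f xX)
      obtain ⟨vg, hvg⟩ := exists_anchBelow g (X ∪ Y) (g xX)
      exact ⟨_, _, buildN hC hi1 hi2 hI hX hY hXY hm hnr hxX (Or.inl hvf) (Or.inr hvg)
        (fun _ => iff_of_true hvf.1 hvg.1) (fun hcc => absurd (hc xX hxX xY hxY)
          (hcc xX hxX xY hxY))⟩
    · obtain ⟨vf, hvf⟩ := exists_anchAbove f (X ∪ Y) (f xX)
      obtain ⟨vg, hvg⟩ := exists_anchAbove g (X ∪ Y) (g xX)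
      exact ⟨_, _, buildN hC hi1 hi2 hI hX hY hXY hm hnr hxX (Or.inl hvf) (Or.inl hvg)
        (fun hcc => absurd hcc hc) (fun _ => iff_of_true hvf.1 hvg.1)⟩
  · unfold NoRed at hnr
    push_neg at hnr
    obtain ⟨q, hqm, hqne, hnh⟩ := hnr
    have hq : Red G C i (X ∪ Y) q := ⟨hpmem, hqm, fun hc => hqne hc.symm, hnh⟩
    obtain ⟨xq, hxq⟩ := part_nonempty (C := C) (i := i) hqm
    obtain ⟨c, o, hco, hadjpq, hall⟩ := hI.cur (X ∪ Y) q hq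
    rcases hco with ⟨hcf, hog⟩ | ⟨hcg, hof⟩
    · rw [hcf] at hadjpq
      rw [hcf, hog] at hall
      rcases lt_trichotomy (f xX) (f xq) with h | h | h
      · exact stepR hC hi1 hi2 hI hX hY hXY hm hq hxX hxY hxq hadjpq hall h
      · exact absurd h (hI.sep (X ∪ Y) hpmem q hq.2.1 hq.2.2.1 xX
          (mem_union_left _ hxX) xq hxq).1
      · refine stepR hC hi1 hi2 (inv_neg hI) hX hY hXY hm hq hxX hxY hxq
          (contig_neg hadjpq) ?_ (neg_lt_neg h)
        intro j hj1 hj2 S T hST hps hqt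
        obtain ⟨a, b, c'⟩ := hall j hj1 hj2 S T hST hps hqt
        exact ⟨contig_neg a, contig_neg b, contig_neg c'⟩
    · rw [hcg] at hadjpq
      rw [hcg, hof] at hall
      rcases lt_trichotomy (g xX) (g xq) with h | h | h
      · exact stepR hC hi1 hi2 (inv_swap hI) hX hY hXY hm hq hxX hxY hxq hadjpq hall h
      · exact absurd h (hI.sep (X ∪ Y) hpmem q hq.2.1 hq.2.2.1 xX
          (mem_union_left _ hxX) xq hxq).2
      · refine stepR hC hi1 hi2 (inv_neg (inv_swap hI)) hX hY hXY hm hq hxX hxY hxq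
          (contig_neg hadjpq) ?_ (neg_lt_neg h)
        intro j hj1 hj2 S T hST hps hqt
        obtain ⟨a, b, c'⟩ := hall j hj1 hj2 S T hST hps hqt
        exact ⟨contig_neg a, contig_neg b, contig_neg c'⟩

end TwwPerm2

namespace TwwPerm2
open TwwPerm
variable {V : Type*} [Fintype V] [DecidableEq V]

lemma base (G : SimpleGraph V) (C : ContractionSeq V) (hn : 1 ≤ Fintype.card V) :
    ∃ f g : V → ℚ, Inv G C 1 f g := by
  classical
  refine ⟨fun _ => 0, fun _ => 0, ?_⟩
  have hcard := C.parts_card 1 le_rfl hn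
  obtain ⟨S₀, hS₀⟩ := Finset.card_eq_one.1 hcard
  have hmem : ∀ S ∈ prt C 1, S = S₀ := fun S hS => by
    rw [show (C.parts 1).parts = prt C 1 from rfl] at hS₀
    rw [hS₀] at hS
    exact Finset.mem_singleton.1 hS
  have hall : ∀ v : V, ∀ S ∈ prt C 1, v ∈ S := by
    intro v S hS
    obtain ⟨T, hT, hv⟩ := exists_part (C := C) 1 v
    rw [hmem S hS, ← hmem T hT]
    exact hv
  exact
    { const := fun S hS u _ v _ => ⟨rfl, rfl⟩
      sep := fun S hS T hT hne => absurd ((hmem S hS).trans (hmem T hT).symm) hne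
      crossC := fun S hS T hT hne => absurd ((hmem S hS).trans (hmem T hT).symm) hne
      crossA := fun S hS T hT hne => absurd ((hmem S hS).trans (hmem T hT).symm) hne
      hist := by
        intro j hj1 hj2 S hS hnr
        have hj : j = 1 := by omega
        rw [hj] at hS
        exact ⟨fun u a b _ _ _ _ => hall u S hS, fun u a b _ _ _ _ => hall u S hS⟩
      hpair := by
        intro j hj1 hj2 S T hr
        have hj : j = 1 := by omega
        rw [hj] at hr
        exact absurd ((hmem S hr.1).trans (hmem T hr.2.1).symm) hr.2.2.1
      cur := by
        intro p q hr
        exact absurd ((hmem p hr.1).trans (hmem q hr.2.1).symm) hr.2.2.1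
      uniq := by
        intro j hj1 hj2 S T hr
        have hj : j = 1 := by omega
        rw [hj] at hr
        exact absurd ((hmem S hr.1).trans (hmem T hr.2.1).symm) hr.2.2.1 }

lemma main (G : SimpleGraph V) (C : ContractionSeq V) (hC : IsDSeq G C 1) :
    ∀ i, 1 ≤ i → i ≤ Fintype.card V → ∃ f g : V → ℚ, Inv G C i f g := by
  intro i
  induction i with
  | zero => intro h1 _; omega
  | succ k ih =>
    intro h1 h2
    by_cases hk : 1 ≤ k
    · obtain ⟨f, g, hI⟩ := ih hk (by omega)
      exact step hC hk (by omega) hI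
    · have hk0 : k = 0 := by omega
      subst hk0
      exact base G C h2

end TwwPerm2


open TwwPerm TwwPerm2

/-- Given a 1-contraction sequence of `G`, `G` is a permutation graph with a
realiser `(σ, τ)` such that every part of every trigraph in the sequence is an interval of
`(σ, τ)`, and for every red edge `xy` of a trigraph, the union of the parts of `x` and `y`
is an interval for one of the orderings while each of the parts is an interval for the
other ordering. -/
theorem stmt_3 {V : Type*} [Fintype V] [DecidableEq V] (G : SimpleGraph V)
    (C : ContractionSeq V) (hC : IsDSeq G C 1) :
    ∃ σ τ : V ≃ Fin (Fintype.card V), IsRealiser G σ τ ∧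
      (∀ i, 1 ≤ i → i ≤ Fintype.card V → ∀ X ∈ (C.parts i).parts,
        IsIntervalFor σ (↑X : Set V) ∨ IsIntervalFor τ (↑X : Set V)) ∧
      (∀ i, 1 ≤ i → i ≤ Fintype.card V →
        ∀ X ∈ (C.parts i).parts, ∀ Y ∈ (C.parts i).parts, X ≠ Y →
          ¬ Homogeneous G X Y →
          ((IsIntervalFor σ (↑(X ∪ Y) : Set V) ∧
              IsIntervalFor τ (↑X : Set V) ∧ IsIntervalFor τ (↑Y : Set V)) ∨
           (IsIntervalFor τ (↑(X ∪ Y) : Set V) ∧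
              IsIntervalFor σ (↑X : Set V) ∧ IsIntervalFor σ (↑Y : Set V)))) := by
  classical
  rcases Nat.eq_zero_or_pos (Fintype.card V) with hn | hn
  · have hempty : IsEmpty V := Fintype.card_eq_zero_iff.1 hn
    have hempty' : IsEmpty (Fin (Fintype.card V)) := by rw [hn]; infer_instance
    let σ : V ≃ Fin (Fintype.card V) := Equiv.equivOfIsEmpty _ _
    refine ⟨σ, σ, fun u v => (hempty.elim u), fun i h1 h2 => by omega, fun i h1 h2 => by omega⟩
  · obtain ⟨f, g, hI⟩ := TwwPerm2.main G C hC (Fintype.card V) hn le_rfl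
    have hpart1 : ∀ v : V, ({v} : Finset V) ∈ prt C (Fintype.card V) := by
      intro v
      obtain ⟨S, hS, hv⟩ := exists_part (C := C) (Fintype.card V) v
      obtain ⟨a, ha⟩ := Finset.card_eq_one.1 (C.parts_top S hS)
      have hav : a = v := by
        rw [ha] at hv
        exact (Finset.mem_singleton.1 hv).symm
      rw [← hav, ← ha]
      exact hS
    have hinjf : Function.Injective f := by
      intro u v huv
      by_contra hne
      have hne' : ({u} : Finset V) ≠ ({v} : Finset V) := by simpa using hne
      exact (hI.sep {u} (hpart1 u) {v} (hpart1 v) hne' u (Finset.mem_singleton_self u) v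
        (Finset.mem_singleton_self v)).1 huv
    have hinjg : Function.Injective g := by
      intro u v huv
      by_contra hne
      have hne' : ({u} : Finset V) ≠ ({v} : Finset V) := by simpa using hne
      exact (hI.sep {u} (hpart1 u) {v} (hpart1 v) hne' u (Finset.mem_singleton_self u) v
        (Finset.mem_singleton_self v)).2 huv
    -- build the two orderings
    have mk : ∀ h : V → ℚ, Function.Injective h →
        ∃ σ : V ≃ Fin (Fintype.card V), ∀ u v : V, (σ u < σ v ↔ h u < h v) ∧
          (σ u ≤ σ v ↔ h u ≤ h v) := by
      intro h hinj
      have hsf : (Finset.univ.image h).card = Fintype.card V := by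
        rw [Finset.card_image_of_injective _ hinj, Finset.card_univ]
      let e := (Finset.univ.image h).orderIsoOfFin hsf
      have hmemf : ∀ v : V, h v ∈ Finset.univ.image h :=
        fun v => Finset.mem_image_of_mem h (Finset.mem_univ v)
      let F : V → Fin (Fintype.card V) := fun v => e.symm ⟨h v, hmemf v⟩
      have hFinj : Function.Injective F := by
        intro u v huv
        have := e.symm.injective huv
        exact hinj (Subtype.mk_eq_mk.1 this)
      have hFbij : Function.Bijective F :=
        (Fintype.bijective_iff_injective_and_card F).2 ⟨hFinj, by simp⟩
      refine ⟨Equiv.ofBijective F hFbij, fun u v => ⟨?_, ?_⟩⟩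
      · show F u < F v ↔ _
        rw [show F u = e.symm ⟨h u, hmemf u⟩ from rfl, show F v = e.symm ⟨h v, hmemf v⟩ from rfl,
          e.symm.lt_iff_lt]
        exact Subtype.mk_lt_mk
      · show F u ≤ F v ↔ _
        rw [show F u = e.symm ⟨h u, hmemf u⟩ from rfl, show F v = e.symm ⟨h v, hmemf v⟩ from rfl,
          e.symm.le_iff_le]
        exact Subtype.mk_le_mk
    obtain ⟨σ, hσ⟩ := mk f hinjf
    obtain ⟨τ, hτ⟩ := mk g hinjg
    have toIntF : ∀ S : Finset V, Contig f S → IsIntervalFor σ (↑S : Set V) := by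
      intro S hS u v w hu hw hl1 hl2
      exact hS v u w hu hw ((hσ u v).2.1 hl1) ((hσ v w).2.1 hl2)
    have toIntG : ∀ S : Finset V, Contig g S → IsIntervalFor τ (↑S : Set V) := by
      intro S hS u v w hu hw hl1 hl2
      exact hS v u w hu hw ((hτ u v).2.1 hl1) ((hτ v w).2.1 hl2)
    refine ⟨σ, τ, ?_, ?_, ?_⟩
    · -- realiser
      intro u v
      by_cases huv : u = v
      · subst huv
        simp [SimpleGraph.irrefl]
      · have hne' : ({u} : Finset V) ≠ ({v} : Finset V) := by simpa using huv
        constructor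
        · intro hadj
          have hcomp : ∀ x ∈ ({u} : Finset V), ∀ y ∈ ({v} : Finset V), G.Adj x y := by
            intro x hx y hy
            rw [Finset.mem_singleton.1 hx, Finset.mem_singleton.1 hy]
            exact hadj
          have hcr := hI.crossC {u} (hpart1 u) {v} (hpart1 v) hne' hcomp u
            (Finset.mem_singleton_self u) v (Finset.mem_singleton_self v)
          rcases lt_trichotomy (f u) (f v) with h | h | h
          · exact Or.inl ⟨(hσ u v).1.2 h, (hτ v u).1.2 (hcr.1 h)⟩
          · exact absurd (hinjf h) huv
          · have hcomp' : ∀ x ∈ ({v} : Finset V), ∀ y ∈ ({u} : Finset V), G.Adj x y := by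
              intro x hx y hy
              rw [Finset.mem_singleton.1 hx, Finset.mem_singleton.1 hy]
              exact hadj.symm
            have hcr' := hI.crossC {v} (hpart1 v) {u} (hpart1 u) hne'.symm hcomp' v
              (Finset.mem_singleton_self v) u (Finset.mem_singleton_self u)
            exact Or.inr ⟨(hσ v u).1.2 h, (hτ u v).1.2 (hcr'.1 h)⟩
        · intro hor
          by_contra hadj
          have hcomp : ∀ x ∈ ({u} : Finset V), ∀ y ∈ ({v} : Finset V), ¬ G.Adj x y := by
            intro x hx y hy
            rw [Finset.mem_singleton.1 hx, Finset.mem_singleton.1 hy]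
            exact hadj
          have hcr := hI.crossA {u} (hpart1 u) {v} (hpart1 v) hne' hcomp u
            (Finset.mem_singleton_self u) v (Finset.mem_singleton_self v)
          rcases hor with ⟨h1, h2⟩ | ⟨h1, h2⟩
          · have hf : f u < f v := (hσ u v).1.1 h1
            have hg : g v < g u := (hτ v u).1.1 h2
            have := hcr.1 hf
            linarith
          · have hf : f v < f u := (hσ v u).1.1 h1
            have hg : g u < g v := (hτ u v).1.1 h2
            have hcomp' : ∀ x ∈ ({v} : Finset V), ∀ y ∈ ({u} : Finset V), ¬ G.Adj x y := by
              intro x hx y hy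
              rw [Finset.mem_singleton.1 hx, Finset.mem_singleton.1 hy]
              exact fun ha => hadj ha.symm
            have hcr' := hI.crossA {v} (hpart1 v) {u} (hpart1 u) hne'.symm hcomp' v
              (Finset.mem_singleton_self v) u (Finset.mem_singleton_self u)
            have := hcr'.1 hf
            linarith
    · -- condition (i)
      intro i h1 h2 Xp hXp
      by_cases hred : NoRed G C i Xp
      · exact Or.inl (toIntF Xp (hI.hist i h1 h2 Xp hXp hred).1)
      · unfold NoRed at hred
        push_neg at hred
        obtain ⟨T, hT, hTne, hnh⟩ := hred
        have hr : Red G C i Xp T := ⟨hXp, hT, fun hcc => hTne hcc.symm, hnh⟩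
        rcases hI.hpair i h1 h2 Xp T hr with ⟨-, h2', -⟩ | ⟨-, h2', -⟩
        · exact Or.inr (toIntG Xp h2')
        · exact Or.inl (toIntF Xp h2')
    · -- condition (ii)
      intro i h1 h2 Xp hXp Yp hYp hne hnh
      have hr : Red G C i Xp Yp := ⟨hXp, hYp, hne, hnh⟩
      rcases hI.hpair i h1 h2 Xp Yp hr with ⟨h1', h2', h3'⟩ | ⟨h1', h2', h3'⟩
      · exact Or.inl ⟨toIntF _ h1', toIntG _ h2', toIntG _ h3'⟩
      · exact Or.inr ⟨toIntG _ h1', toIntF _ h2', toIntF _ h3'⟩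
end
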